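/- arXiv:1304.4218 — 15 statements merged into one kernel-verified Lean document; each statement's English description precedes it below -/
import Mathlib

section
/- For any summable sequence x : ℕ → ℝ with infinitely many nonzero terms, the achievement set E(x) is a perfect set (it has no isolated points). -/
open Set

/-- The achievement set of a sequence: all subsums. -/
noncomputable def achievementSet (x : ℕ → ℝ) : Set ℝ :=
  {y | ∃ A : Set ℕ, y = ∑' n, A.indicator x n}

lemma tsum_indicator_insert (x : ℕ → ℝ) (hx : Summable x) {A : Set ℕ} {n : ℕ}
    (hn : n ∉ A) :
    ∑' m, (insert n A).indicator x m = x n + ∑' m, A.indicator x m := by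
  have hd : Disjoint ({n} : Set ℕ) A := Set.disjoint_singleton_left.mpr hn
  rw [Set.insert_eq, Set.indicator_union_of_disjoint hd]
  simp only [Pi.add_apply]
  rw [Summable.tsum_add (hx.indicator {n}) (hx.indicator A)]
  congr 1
  have h2 : ∀ m, ({n} : Set ℕ).indicator x m = if m = n then x n else 0 := by
    intro m; by_cases h : m = n <;> simp [Set.indicator, h]
  simp_rw [h2]
  exact tsum_ite_eq n (fun _ => x n)

lemma achievementSet_eq_range (x : ℕ → ℝ) :
    achievementSet x = Set.range (fun B : ℕ → Bool => ∑' n, if B n then x n else 0) := by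
  classical
  ext y
  constructor
  · rintro ⟨A, rfl⟩
    refine ⟨fun n => if n ∈ A then true else false, ?_⟩
    apply tsum_congr
    intro n
    by_cases h : n ∈ A <;> simp [Set.indicator, h]
  · rintro ⟨B, rfl⟩
    refine ⟨{n | B n = true}, ?_⟩
    apply tsum_congr
    intro n
    by_cases h : B n <;> simp [Set.indicator, h]

theorem stmt3 (x : ℕ → ℝ) (hx : Summable x) (hinf : {n | x n ≠ 0}.Infinite) :
    Perfect (achievementSet x) := by
  classical
  constructor
  · -- closed
    rw [achievementSet_eq_range]
    have hc : Continuous (fun B : ℕ → Bool => ∑' n, if B n then x n else 0) := by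
      apply continuous_tsum (u := fun n => |x n|)
      · intro n
        exact (continuous_of_discreteTopology (f := fun b : Bool => if b then x n else 0)).comp
          (continuous_apply n)
      · exact hx.abs
      · intro n B
        by_cases h : B n <;> simp [h]
    exact (isCompact_range hc).isClosed
  · -- no isolated points
    intro y hy
    obtain ⟨A, rfl⟩ := hy
    rw [accPt_iff_nhds]
    intro U hU
    obtain ⟨ε, hε, hball⟩ := Metric.mem_nhds_iff.mp hU
    have htend := hx.tendsto_atTop_zero
    rw [Metric.tendsto_atTop] at htend
    obtain ⟨N, hN⟩ := htend ε hε
    obtain ⟨n, hn, hNn⟩ := hinf.exists_gt N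
    have hxε : |x n| < ε := by
      have := hN n (le_of_lt hNn)
      simpa [Real.dist_eq] using this
    have hxn : x n ≠ 0 := hn
    by_cases hmem : n ∈ A
    · -- remove n
      set A' := A \ {n} with hA'
      have hn' : n ∉ A' := by simp [hA']
      have hins : insert n A' = A := by
        simp [hA', Set.insert_diff_singleton, Set.insert_eq_of_mem hmem]
      have key : ∑' m, A.indicator x m = x n + ∑' m, A'.indicator x m := by
        rw [← hins]; exact tsum_indicator_insert x hx hn'
      refine ⟨∑' m, A'.indicator x m, ⟨?_, ⟨A', rfl⟩⟩, ?_⟩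
      · apply hball
        rw [Metric.mem_ball, Real.dist_eq, key]
        simpa using hxε
      · intro h
        rw [key] at h
        exact hxn (by linarith)
    · -- add n
      have key : ∑' m, (insert n A).indicator x m = x n + ∑' m, A.indicator x m :=
        tsum_indicator_insert x hx hmem
      refine ⟨∑' m, (insert n A).indicator x m, ⟨?_, ⟨insert n A, rfl⟩⟩, ?_⟩
      · apply hball
        rw [Metric.mem_ball, Real.dist_eq, key]
        simpa using hxε
      · intro h
        rw [key] at h
        exact hxn (by linarith)
end

section
/- Let x : ℕ → ℝ be a summable sequence of positive terms such that x(n) > Σ_{i>n} x(i) for all n. Then the achievement set E(x) is totally disconnected. -/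
open Set

theorem stmt4 (x : ℕ → ℝ) (hpos : ∀ n, 0 < x n) (hx : Summable x)
    (hfast : ∀ n, (∑' i, x (n + 1 + i)) < x n) :
    IsTotallyDisconnected (achievementSet x) := by
  classical
  set Φ : (ℕ → Bool) → ℝ := fun σ => ∑' n, if σ n then x n else 0 with hΦ
  have hbound : ∀ (σ : ℕ → Bool) (n : ℕ), ‖if σ n then x n else 0‖ ≤ x n := by
    intro σ n
    by_cases h : σ n <;> simp [h, abs_of_pos (hpos n), (hpos n).le]
  have hsummable : ∀ σ : ℕ → Bool, Summable fun n => if σ n then x n else 0 := by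
    intro σ
    exact hx.of_norm_bounded (hbound σ)
  have hcont : Continuous Φ := by
    apply continuous_tsum (fun n => ?_) hx (fun n σ => hbound σ n)
    exact Continuous.comp (continuous_of_discreteTopology
      (f := fun b : Bool => if b then x n else 0)) (continuous_apply n)
  -- tail sums
  have htail : ∀ n, (∑' i, x (i + (n + 1))) < x n := by
    intro n
    have : (∑' i, x (i + (n + 1))) = ∑' i, x (n + 1 + i) := by
      apply tsum_congr; intro i; rw [Nat.add_comm]
    rw [this]; exact hfast n
  -- key gap estimate: if σ and τ agree below n, σ n = true, τ n = false, then Φ τ < Φ σ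
  have hgap : ∀ (σ τ : ℕ → Bool) (n : ℕ), (∀ m < n, σ m = τ m) → σ n = true → τ n = false →
      Φ τ < Φ σ := by
    intro σ τ n hagree hσn hτn
    have hsplit : ∀ ρ : ℕ → Bool,
        Φ ρ = (∑ i ∈ Finset.range n, if ρ i then x i else 0) + (if ρ n then x n else 0)
          + ∑' i, if ρ (i + (n + 1)) then x (i + (n + 1)) else 0 := by
      intro ρ
      have := Summable.sum_add_tsum_nat_add (f := fun i => if ρ i then x i else 0) (n + 1) (hsummable ρ)
      rw [hΦ]
      simp only
      rw [← this, Finset.sum_range_succ]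
    have hP : (∑ i ∈ Finset.range n, if σ i then x i else 0)
        = ∑ i ∈ Finset.range n, if τ i then x i else 0 := by
      apply Finset.sum_congr rfl
      intro i hi
      rw [hagree i (Finset.mem_range.mp hi)]
    have hTσ : 0 ≤ ∑' i, if σ (i + (n + 1)) then x (i + (n + 1)) else 0 := by
      apply tsum_nonneg
      intro i
      by_cases h : σ (i + (n + 1)) <;> simp [h, (hpos _).le]
    have hxsum : Summable fun i => x (i + (n + 1)) := (summable_nat_add_iff (n + 1)).2 hx
    have hTτ : (∑' i, if τ (i + (n + 1)) then x (i + (n + 1)) else 0) ≤ ∑' i, x (i + (n + 1)) := by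
      apply Summable.tsum_le_tsum _ _ hxsum
      · intro i
        by_cases h : τ (i + (n + 1)) <;> simp [h, (hpos _).le]
      · exact hxsum.of_norm_bounded fun i => hbound τ _
    have eσ := hsplit σ
    have eτ := hsplit τ
    rw [hσn] at eσ
    rw [hτn] at eτ
    simp only [if_true, Bool.false_eq_true, if_false] at eσ eτ
    have := htail n
    linarith
  have hinj : Function.Injective Φ := by
    intro σ τ h
    by_contra hne
    have hex : ∃ n, σ n ≠ τ n := Function.ne_iff.mp hne
    set n := Nat.find hex with hn
    have hdiff : σ n ≠ τ n := Nat.find_spec hex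
    have hagree : ∀ m < n, σ m = τ m := fun m hm => by
      by_contra hc; exact Nat.find_min hex hm hc
    cases hσ : σ n <;> cases hτ : τ n
    · exact hdiff (hσ.trans hτ.symm)
    · exact absurd h (hgap τ σ n (fun m hm => (hagree m hm).symm) hτ hσ).ne
    · exact absurd h (hgap σ τ n hagree hσ hτ).ne'
    · exact hdiff (hσ.trans hτ.symm)
  have hrange : achievementSet x = Set.range Φ := by
    ext y
    constructor
    · rintro ⟨A, rfl⟩
      refine ⟨fun n => decide (n ∈ A), ?_⟩
      rw [hΦ]
      apply tsum_congr
      intro n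
      by_cases h : n ∈ A <;> simp [h, Set.indicator_apply]
    · rintro ⟨σ, rfl⟩
      refine ⟨{n | σ n = true}, ?_⟩
      rw [hΦ]
      apply tsum_congr
      intro n
      by_cases h : σ n <;> simp [h, Set.indicator_apply]
  rw [hrange]
  have hemb : Topology.IsEmbedding Φ := (hcont.isClosedEmbedding hinj).isEmbedding
  exact hemb.isTotallyDisconnected_range.mpr inferInstance
end

section
/- Let x : ℕ → ℝ be a summable sequence of positive terms such that x(n) ≤ Σ_{i>n} x(i) for all n. Then the achievement set E(x) equals the closed interval [0, Σ_n x(n)]. -/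
open Set

/-- Greedy partial sums aiming for target `y`. -/
noncomputable def greedy (x : ℕ → ℝ) (y : ℝ) : ℕ → ℝ
  | 0 => 0
  | n + 1 => greedy x y n + (if x n ≤ y - greedy x y n then x n else 0)

theorem stmt5 (x : ℕ → ℝ) (hpos : ∀ n, 0 < x n) (hx : Summable x)
    (hslow : ∀ n, x n ≤ ∑' i, x (n + 1 + i)) :
    achievementSet x = Set.Icc 0 (∑' n, x n) := by
  classical
  have hxn : ∀ n, 0 ≤ x n := fun n => (hpos n).le
  have hsum_tail : ∀ n, Summable (fun i => x (n + i)) := by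
    intro n
    have := (summable_nat_add_iff n).mpr hx
    simpa [add_comm] using this
  set T : ℕ → ℝ := fun n => ∑' i, x (n + i) with hT
  have hT_succ : ∀ n, T n = x n + T (n + 1) := by
    intro n
    show (∑' i, x (n + i)) = x n + ∑' i, x (n + 1 + i)
    rw [Summable.tsum_eq_zero_add (hsum_tail n), add_zero]
    congr 1
    apply tsum_congr; intro i; congr 1; omega
  have hT_slow : ∀ n, x n ≤ T (n + 1) := by
    intro n
    have := hslow n
    have he : (∑' i, x (n + 1 + i)) = T (n + 1) := rfl
    linarith [this, he ▸ this]
  have hT0 : Filter.Tendsto T Filter.atTop (nhds 0) := by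
    have := tendsto_sum_nat_add x
    simpa [hT, add_comm] using this
  ext y
  constructor
  · rintro ⟨A, rfl⟩
    constructor
    · exact tsum_nonneg (fun n => Set.indicator_nonneg (fun i _ => hxn i) n)
    · exact Summable.tsum_le_tsum (fun n => Set.indicator_le_self' (fun i _ => hxn i) n)
        (hx.indicator A) hx
  · rintro ⟨hy0, hy1⟩
    set s : ℕ → ℝ := greedy x y with hs
    have hsucc : ∀ n, s (n + 1) = s n + (if x n ≤ y - s n then x n else 0) := fun n => rfl
    have hinv : ∀ n, 0 ≤ y - s n ∧ y - s n ≤ T n := by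
      intro n
      induction n with
      | zero =>
        constructor
        · simpa [hs, greedy] using hy0
        · have : T 0 = ∑' i, x i := by simp [hT]
          simpa [hs, greedy, this] using hy1
      | succ n ih =>
        obtain ⟨ih0, ih1⟩ := ih
        rw [hsucc n]
        by_cases h : x n ≤ y - s n
        · rw [if_pos h]
          constructor
          · linarith
          · have := hT_succ n
            linarith
        · rw [if_neg h]
          push_neg at h
          constructor
          · linarith
          · have := hT_slow n
            linarith
    set A : Set ℕ := {n | x n ≤ y - s n} with hA
    refine ⟨A, ?_⟩
    have hpart : ∀ n, ∑ i ∈ Finset.range n, A.indicator x i = s n := by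
      intro n
      induction n with
      | zero => simp [hs, greedy]
      | succ n ih =>
        rw [Finset.sum_range_succ, ih, hsucc n]
        congr 1
    have hlim1 : Filter.Tendsto (fun n => ∑ i ∈ Finset.range n, A.indicator x i)
        Filter.atTop (nhds (∑' n, A.indicator x n)) :=
      (hx.indicator A).hasSum.tendsto_sum_nat
    have hlim2 : Filter.Tendsto s Filter.atTop (nhds y) := by
      have hle1 : ∀ n, y - T n ≤ s n := fun n => by linarith [(hinv n).2]
      have hle2 : ∀ n, s n ≤ y := fun n => by linarith [(hinv n).1]
      have h1 : Filter.Tendsto (fun n => y - T n) Filter.atTop (nhds y) := by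
        simpa using (tendsto_const_nhds (x := y)).sub hT0
      exact tendsto_of_tendsto_of_tendsto_of_le_of_le h1 tendsto_const_nhds hle1 hle2
    have heq : (fun n => ∑ i ∈ Finset.range n, A.indicator x i) = s := funext hpart
    rw [heq] at hlim1
    exact (tendsto_nhds_unique hlim1 hlim2).symm
end

section
/- Let x : ℕ → ℝ be a summable, eventually non-increasing sequence of positive terms such that x(n) > Σ_{i>n} x(i) for infinitely many n. Then the achievement set E(x) is not a finite union of closed intervals. -/
open Set

lemma single_mem (x : ℕ → ℝ) (m : ℕ) : x m ∈ achievementSet x := by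
  refine ⟨{m}, ?_⟩
  rw [tsum_eq_single m]
  · simp
  · intro b hb
    exact Set.indicator_of_notMem (by simpa using hb) _

lemma tail_mem (x : ℕ → ℝ) (hx : Summable x) (n : ℕ) :
    (∑' i, x (n + 1 + i)) ∈ achievementSet x := by
  refine ⟨{k | n + 1 ≤ k}, ?_⟩
  have hs : Summable (({k | n+1 ≤ k} : Set ℕ).indicator x) := hx.indicator _
  rw [← Summable.sum_add_tsum_nat_add (n+1) hs]
  have h1 : ∑ i ∈ Finset.range (n+1), ({k | n+1 ≤ k} : Set ℕ).indicator x i = 0 := by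
    apply Finset.sum_eq_zero
    intro i hi
    simp only [Finset.mem_range] at hi
    exact Set.indicator_of_notMem (by simp; omega) _
  rw [h1, zero_add]
  refine tsum_congr fun i => ?_
  rw [Set.indicator_of_mem (by simp; omega), add_comm]

lemma sub_tail_le (x : ℕ → ℝ) (hpos : ∀ n, 0 < x n) (hx : Summable x) (A : Set ℕ) (n : ℕ)
    (hA : ∀ m ∈ A, n + 1 ≤ m) :
    ∑' k, A.indicator x k ≤ ∑' i, x (n + 1 + i) := by
  have hs : Summable (A.indicator x) := hx.indicator _
  rw [← Summable.sum_add_tsum_nat_add (n+1) hs]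
  have h1 : ∑ i ∈ Finset.range (n+1), A.indicator x i = 0 := by
    apply Finset.sum_eq_zero
    intro i hi
    simp only [Finset.mem_range] at hi
    refine Set.indicator_of_notMem (fun hiA => ?_) _
    exact absurd (hA i hiA) (by omega)
  rw [h1, zero_add]
  have h2 : ∑' i, x (n+1+i) = ∑' i, x (i + (n+1)) := tsum_congr fun i => by rw [add_comm]
  rw [h2]
  have hle : ∀ i, A.indicator x (i + (n+1)) ≤ x (i + (n+1)) := fun i => by
    by_cases h : (i + (n+1)) ∈ A
    · rw [Set.indicator_of_mem h]
    · rw [Set.indicator_of_notMem h]; exact (hpos _).le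
  exact Summable.tsum_le_tsum hle ((summable_nat_add_iff (f := A.indicator x) (n+1)).2 hs)
    ((summable_nat_add_iff (f := x) (n+1)).2 hx)

/-- A set is a finite union of closed intervals. -/
def IsFinUnionClosedIntervals (S : Set ℝ) : Prop :=
  ∃ (n : ℕ) (a b : Fin n → ℝ), S = ⋃ i, Set.Icc (a i) (b i)

theorem stmt6 (x : ℕ → ℝ) (hpos : ∀ n, 0 < x n) (hx : Summable x)
    (hmono : ∃ N, ∀ n, N ≤ n → x (n + 1) ≤ x n)
    (hfast : ∀ N, ∃ n, N ≤ n ∧ (∑' i, x (n + 1 + i)) < x n) :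
    ¬ IsFinUnionClosedIntervals (achievementSet x) := by
  obtain ⟨N, hN⟩ := hmono
  set T : ℕ → ℝ := fun n => ∑' i, x (n + 1 + i) with hTdef
  -- antitone beyond N
  have hanti : ∀ a b, N ≤ a → a ≤ b → x b ≤ x a := by
    intro a b hNa hab
    induction b, hab using Nat.le_induction with
    | base => exact le_refl _
    | succ n hn ih => exact le_trans (hN n (le_trans hNa hn)) ih
  -- tail tends to 0
  have htend : Filter.Tendsto T Filter.atTop (nhds 0) := by
    have h1 : T = fun n => (∑' k, x k) - ∑ i ∈ Finset.range (n+1), x i := by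
      funext n
      have h2 := Summable.sum_add_tsum_nat_add (f := x) (n+1) hx
      have h3 : T n = ∑' i, x (i + (n+1)) := tsum_congr fun i => by rw [add_comm]
      rw [h3]; linarith
    rw [h1]
    have hS := hx.hasSum.tendsto_sum_nat
    have hS' : Filter.Tendsto (fun n => ∑ i ∈ Finset.range (n+1), x i) Filter.atTop
        (nhds (∑' k, x k)) := hS.comp (Filter.tendsto_add_atTop_nat 1)
    have := Filter.Tendsto.sub (tendsto_const_nhds (x := ∑' k, x k) (f := Filter.atTop)) hS'
    simpa using this
  -- selection of good indices
  have hsel : ∀ B : ℕ, ∃ n, B ≤ n ∧ N ≤ n ∧ T n < x n ∧ ∀ m, m < N → T n < x m := by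
    intro B
    have hev : ∀ᶠ n in Filter.atTop, ∀ m ∈ Finset.range N, T n < x m := by
      rw [Filter.eventually_all_finset]
      exact fun m _ => htend.eventually_lt_const (hpos m)
    obtain ⟨M, hM⟩ := Filter.eventually_atTop.1 hev
    obtain ⟨n, hn1, hn2⟩ := hfast (max (max B N) M)
    refine ⟨n, le_trans (le_trans (le_max_left _ _) (le_max_left _ _)) hn1,
      le_trans (le_trans (le_max_right _ _) (le_max_left _ _)) hn1, hn2, fun m hm => ?_⟩
    exact hM n (le_trans (le_max_right _ _) hn1) m (Finset.mem_range.2 hm)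
  choose g hg1 hg2 hg3 hg4 using hsel
  -- strictly increasing sequence of good indices
  let f : ℕ → ℕ := fun k => Nat.rec (g 0) (fun _ p => g (p + 1)) k
  have hfN : ∀ k, N ≤ f k := by intro k; cases k with
    | zero => exact hg2 0
    | succ k => exact hg2 _
  have hfT : ∀ k, T (f k) < x (f k) := by intro k; cases k with
    | zero => exact hg3 0
    | succ k => exact hg3 _
  have hfsmall : ∀ k, ∀ m, m < N → T (f k) < x m := by intro k; cases k with
    | zero => exact hg4 0
    | succ k => exact hg4 _
  have hfmono : ∀ k, f k < f (k + 1) := fun k =>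
    lt_of_lt_of_le (Nat.lt_succ_self _) (hg1 (f k + 1))
  have hfsm : StrictMono f := strictMono_nat_of_lt_succ hfmono
  -- gaps
  have hgap : ∀ k, ∃ c, c ∈ achievementSet x ∧ T (f k) < c ∧ c ≤ x (f k) ∧
      ∀ y ∈ achievementSet x, y ≤ T (f k) ∨ c ≤ y := by
    intro k
    set n := f k with hn
    obtain ⟨m₀, hm₀, hmin⟩ := Finset.exists_min_image (Finset.range (n+1)) x
      ⟨n, Finset.self_mem_range_succ n⟩
    refine ⟨x m₀, single_mem x m₀, ?_, hmin n (Finset.self_mem_range_succ n), ?_⟩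
    · rcases lt_or_ge m₀ N with h | h
      · exact hfsmall k m₀ h
      · exact lt_of_lt_of_le (hfT k) (hanti m₀ n h (by
          have := Finset.mem_range.1 hm₀; omega))
    · rintro y ⟨A, rfl⟩
      by_cases hA : ∀ m ∈ A, n + 1 ≤ m
      · exact Or.inl (sub_tail_le x hpos hx A n hA)
      · push_neg at hA
        obtain ⟨m, hmA, hm⟩ := hA
        refine Or.inr (le_trans (hmin m (Finset.mem_range.2 hm)) ?_)
        have h1 : A.indicator x m = x m := Set.indicator_of_mem hmA _
        have h2 : A.indicator x m ≤ ∑' j, A.indicator x j :=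
          Summable.le_tsum (hx.indicator A) m (fun j _ => Set.indicator_apply_nonneg (fun _ => (hpos j).le))
        linarith
  choose c hc1 hc2 hc3 hc4 using hgap
  -- gaps are ordered
  have hcross : ∀ k k', k < k' → c k' ≤ T (f k) := by
    intro k k' hkk
    have hlt : f k + 1 ≤ f k' := hfsm hkk
    have hs : Summable (fun i => x (f k + 1 + i)) :=
      ((summable_nat_add_iff (f := x) (f k + 1)).2 hx).congr (fun i => by rw [add_comm])
    have h1 : x (f k + 1 + (f k' - (f k + 1))) ≤ T (f k) :=
      Summable.le_tsum hs _ (fun j _ => (hpos _).le)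
    have h2 : f k + 1 + (f k' - (f k + 1)) = f k' := by omega
    rw [h2] at h1
    exact le_trans (hc3 k') h1
  -- contradiction with finite union of intervals
  rintro ⟨m, a, b, hE⟩
  have hmem : ∀ k, ∃ i : Fin m, c k ∈ Set.Icc (a i) (b i) := fun k =>
    Set.mem_iUnion.1 (hE ▸ hc1 k)
  choose φ hφ using hmem
  have hinj : Function.Injective (fun k : Fin (m + 1) => φ k.val) := by
    intro k k' hkk
    by_contra hne
    have hne' : (k : ℕ) ≠ (k' : ℕ) := fun h => hne (Fin.ext h)
    -- wlog: general claim for j < j'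
    have key : ∀ j j' : ℕ, j < j' → φ j ≠ φ j' := by
      intro j j' hjj heq
      set i := φ j with hi
      have hj := hφ j
      have hj' := hφ j'
      rw [← heq] at hj'
      set y := (T (f j) + c j) / 2 with hy
      have hy1 : T (f j) < y := by have := hc2 j; rw [hy]; linarith
      have hy2 : y < c j := by have := hc2 j; rw [hy]; linarith
      have hyI : y ∈ Set.Icc (a i) (b i) := by
        constructor
        · exact le_trans hj'.1 (le_trans (hcross j j' hjj) hy1.le)
        · exact le_trans hy2.le hj.2
      have hyE : y ∈ achievementSet x := by
        rw [hE]; exact Set.mem_iUnion.2 ⟨i, hyI⟩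
      rcases hc4 j y hyE with h | h
      · linarith
      · linarith
    rcases Nat.lt_or_ge (k : ℕ) (k' : ℕ) with h | h
    · exact key _ _ h hkk
    · exact key _ _ (lt_of_le_of_ne h (Ne.symm hne')) hkk.symm
  have := Fintype.card_le_of_injective _ hinj
  simp at this
end

section
/- Let k₁ ≥ … ≥ k_m be positive integers with K = Σ k_i and 0 < q < k_m/(K + k_m). Then the achievement set E(k₁,…,k_m; q) of the multigeometric sequence is not a finite union of closed intervals. -/
open Set

/-- The multigeometric sequence (k 0, …, k m ; q): term (j*(m+1)+r) is k r * q^j. -/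
noncomputable def mgSeq (m : ℕ) (k : Fin (m + 1) → ℝ) (q : ℝ) (n : ℕ) : ℝ :=
  k ⟨n % (m + 1), Nat.mod_lt _ (Nat.succ_pos m)⟩ * q ^ (n / (m + 1))


theorem stmt8 (m : ℕ) (k : Fin (m + 1) → ℕ) (hpos : ∀ i, 0 < k i)
    (hdec : ∀ i j : Fin (m + 1), i ≤ j → k j ≤ k i) (q : ℝ) (hq0 : 0 < q)
    (hq : q < (k (Fin.last m) : ℝ) / ((∑ i, k i : ℕ) + (k (Fin.last m) : ℕ))) :
    ¬ IsFinUnionClosedIntervals (achievementSet (mgSeq m (fun i => (k i : ℝ)) q)) := by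
  rintro ⟨n, a, b, hE⟩
  set km : ℝ := (k (Fin.last m) : ℝ) with hkmdef
  have hkm0 : (0:ℝ) < km := by
    simp only [hkmdef]; exact_mod_cast hpos _
  set K : ℝ := ((∑ i, k i : ℕ) : ℝ) with hKdef
  have hKpos : 0 < K := by
    have : 0 < ∑ i, k i :=
      Finset.sum_pos (fun i _ => hpos i) ⟨Fin.last m, Finset.mem_univ _⟩
    simp only [hKdef]; exact_mod_cast this
  have hkmK : km ≤ K := by
    have : k (Fin.last m) ≤ ∑ i, k i :=
      Finset.single_le_sum (f := k) (fun i _ => Nat.zero_le _) (Finset.mem_univ _)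
    simp only [hkmdef, hKdef]; exact_mod_cast this
  have hq' : q * (K + km) < km := by
    have hden : (0:ℝ) < K + km := by linarith
    rw [lt_div_iff₀ hden] at hq
    linarith
  have hq1 : q < 1 := by nlinarith
  have h1q : (0:ℝ) < 1 - q := by linarith
  have hqK : K * q < km * (1 - q) := by nlinarith
  set x : ℕ → ℝ := mgSeq m (fun i => (k i : ℝ)) q with hxdef
  have hxnn : ∀ p, 0 ≤ x p := by
    intro p
    simp only [hxdef, mgSeq]
    exact mul_nonneg (Nat.cast_nonneg _) (pow_nonneg hq0.le _)
  -- the product picture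
  set f : ℕ × Fin (m+1) → ℝ := fun p => (k p.2 : ℝ) * q ^ p.1 with hfdef
  set e : ℕ ≃ ℕ × Fin (m+1) := Nat.divModEquiv (m+1) with hedef
  have hfin' : ∀ p : ℕ, (Fin.ofNat (m+1) p) = ⟨p % (m+1), Nat.mod_lt _ (Nat.succ_pos m)⟩ :=
    fun p => Fin.ext (by simp [Fin.val_natCast])
  have he1 : ∀ p : ℕ, (e p).1 = p / (m+1) := fun p => rfl
  have he2 : ∀ p : ℕ, (e p).2 = ⟨p % (m+1), Nat.mod_lt _ (Nat.succ_pos m)⟩ := fun p => hfin' p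
  have hxe : ∀ p : ℕ, x p = f (e p) := by
    intro p
    simp only [hxdef, mgSeq, hfdef]
    rw [he1, he2]
  have hfnn : ∀ p, 0 ≤ f p := by
    intro p
    exact mul_nonneg (Nat.cast_nonneg _) (pow_nonneg hq0.le _)
  have hgeo : Summable (fun j : ℕ => q ^ j) := summable_geometric_of_lt_one hq0.le hq1
  have hinner : ∀ j : ℕ, (∑' r : Fin (m+1), f (j, r)) = K * q ^ j := by
    intro j
    rw [tsum_fintype]
    simp only [hfdef]
    rw [← Finset.sum_mul, hKdef, Nat.cast_sum]
  have hfsum : Summable f := by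
    rw [summable_prod_of_nonneg hfnn]
    refine ⟨fun _ => Summable.of_finite, ?_⟩
    exact (hgeo.mul_left K).congr fun j => (hinner j).symm
  have hxsum : Summable x := by
    have : Summable (f ∘ e) := (Equiv.summable_iff e).mpr hfsum
    exact this.congr fun p => (hxe p).symm
  set d : ℕ → ℝ := fun j => km * q ^ j with hddef
  set c : ℕ → ℝ := fun j => K * q ^ (j+1) * (1-q)⁻¹ with hcdef
  -- d j is in the achievement set
  have hdmem : ∀ j : ℕ, d j ∈ achievementSet x := by
    intro j
    refine ⟨{(m+1)*j + m}, ?_⟩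
    have h1 : ((m+1)*j + m) % (m+1) = m := by
      rw [Nat.mul_add_mod]
      exact Nat.mod_eq_of_lt (Nat.lt_succ_self m)
    have h2 : ((m+1)*j + m) / (m+1) = j := by
      rw [Nat.mul_add_div (Nat.succ_pos m), Nat.div_eq_of_lt (Nat.lt_succ_self m), Nat.add_zero]
    have hfin : (⟨((m+1)*j + m) % (m+1), Nat.mod_lt _ (Nat.succ_pos m)⟩ : Fin (m+1))
        = Fin.last m := by
      apply Fin.ext
      simpa [Fin.val_last] using h1
    have hidx : x ((m+1)*j + m) = d j := by
      simp only [hxdef, mgSeq, hddef, hkmdef]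
      rw [hfin, h2]
    rw [tsum_eq_single ((m+1)*j + m)
      (fun b' hb' => Set.indicator_of_notMem (by simpa using hb') x),
      Set.indicator_of_mem (Set.mem_singleton _), hidx]
  -- the gap lemma
  have hgap : ∀ j : ℕ, ∀ y ∈ achievementSet x, y ∉ Set.Ioo (c j) (d j) := by
    rintro j y ⟨A, rfl⟩ ⟨hy1, hy2⟩
    have hsA : Summable (A.indicator x) := hxsum.indicator A
    by_cases h : ∃ p ∈ A, p < (m+1) * (j+1)
    · obtain ⟨p, hpA, hplt⟩ := h
      have hple : p / (m+1) ≤ j := by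
        have hlt : p / (m+1) < j + 1 := by
          rw [Nat.div_lt_iff_lt_mul (Nat.succ_pos m)]
          rw [Nat.mul_comm] at hplt
          exact hplt
        omega
      have hxp : d j ≤ x p := by
        simp only [hxdef, mgSeq, hddef, hkmdef]
        have hk1 : ((k (Fin.last m) : ℕ) : ℝ)
            ≤ ((k ⟨p % (m+1), Nat.mod_lt _ (Nat.succ_pos m)⟩ : ℕ) : ℝ) := by
          exact_mod_cast hdec _ (Fin.last m) (Fin.le_last _)
        have hk2 : q ^ j ≤ q ^ (p / (m+1)) :=
          pow_le_pow_of_le_one hq0.le hq1.le hple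
        exact mul_le_mul hk1 hk2 (pow_nonneg hq0.le _) (Nat.cast_nonneg _)
      have hle : x p ≤ ∑' i, A.indicator x i := by
        have hh := Summable.le_tsum hsA p (fun q' _ => Set.indicator_apply_nonneg (fun _ => hxnn _))
        rwa [Set.indicator_of_mem hpA] at hh
      exact absurd hy2 (not_lt.mpr (le_trans hxp hle))
    · push_neg at h
      have hAT : ∀ p, A.indicator x p ≤ ({p : ℕ | (m+1)*(j+1) ≤ p}).indicator x p := by
        intro p
        by_cases hp : p ∈ A
        · rw [Set.indicator_of_mem hp,
            Set.indicator_of_mem (show p ∈ {p : ℕ | (m+1)*(j+1) ≤ p} from h p hp)]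
        · rw [Set.indicator_of_notMem hp]
          exact Set.indicator_apply_nonneg (fun _ => hxnn _)
      have hge : ∀ p : ℕ, ({p : ℕ | (m+1)*(j+1) ≤ p}).indicator x p
          = ({pr : ℕ × Fin (m+1) | j+1 ≤ pr.1}).indicator f (e p) := by
        intro p
        have hiff : p ∈ {p : ℕ | (m+1)*(j+1) ≤ p} ↔
            e p ∈ {pr : ℕ × Fin (m+1) | j+1 ≤ pr.1} := by
          show (m+1)*(j+1) ≤ p ↔ j+1 ≤ (e p).1
          rw [he1, Nat.le_div_iff_mul_le (Nat.succ_pos m), Nat.mul_comm]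
        by_cases hp : p ∈ {p : ℕ | (m+1)*(j+1) ≤ p}
        · rw [Set.indicator_of_mem hp, Set.indicator_of_mem (hiff.mp hp)]
          exact hxe p
        · rw [Set.indicator_of_notMem hp,
            Set.indicator_of_notMem (fun hh => hp (hiff.mpr hh))]
      have hSsum : Summable (({pr : ℕ × Fin (m+1) | j+1 ≤ pr.1}).indicator f) :=
        hfsum.indicator _
      have hT : Summable (({p : ℕ | (m+1)*(j+1) ≤ p}).indicator x) := by
        have hh : Summable (({pr : ℕ × Fin (m+1) | j+1 ≤ pr.1}).indicator f ∘ e) :=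
          (Equiv.summable_iff e).mpr hSsum
        exact hh.congr fun p => (hge p).symm
      have hyle : (∑' i, A.indicator x i)
          ≤ ∑' i, ({p : ℕ | (m+1)*(j+1) ≤ p}).indicator x i :=
        Summable.tsum_le_tsum hAT hsA hT
      have htail : (∑' i, ({p : ℕ | (m+1)*(j+1) ≤ p}).indicator x i) = c j := by
        have e1 : (∑' i, ({p : ℕ | (m+1)*(j+1) ≤ p}).indicator x i)
            = ∑' pr, ({pr : ℕ × Fin (m+1) | j+1 ≤ pr.1}).indicator f pr := by
          rw [tsum_congr hge]
          exact e.tsum_eq (({pr : ℕ × Fin (m+1) | j+1 ≤ pr.1}).indicator f)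
        have e2 : (∑' pr, ({pr : ℕ × Fin (m+1) | j+1 ≤ pr.1}).indicator f pr)
            = ∑' (b') (r : Fin (m+1)), ({pr : ℕ × Fin (m+1) | j+1 ≤ pr.1}).indicator f (b', r) :=
          Summable.tsum_prod' hSsum fun _ => Summable.of_finite
        have e3 : ∀ b' : ℕ, (∑' r : Fin (m+1),
              ({pr : ℕ × Fin (m+1) | j+1 ≤ pr.1}).indicator f (b', r))
            = Set.indicator {b'' : ℕ | j+1 ≤ b''} (fun b'' => K * q ^ b'') b' := by
          intro b'
          by_cases hb : j + 1 ≤ b'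
          · rw [Set.indicator_of_mem (show b' ∈ {b'' : ℕ | j+1 ≤ b''} from hb)]
            rw [← hinner b']
            apply tsum_congr
            intro r
            exact Set.indicator_of_mem
              (show (b', r) ∈ {pr : ℕ × Fin (m+1) | j+1 ≤ pr.1} from hb) f
          · rw [Set.indicator_of_notMem (show b' ∉ {b'' : ℕ | j+1 ≤ b''} from hb)]
            have : ∀ r : Fin (m+1),
                ({pr : ℕ × Fin (m+1) | j+1 ≤ pr.1}).indicator f (b', r) = 0 := fun r =>
              Set.indicator_of_notMem
                (show (b', r) ∉ {pr : ℕ × Fin (m+1) | j+1 ≤ pr.1} from hb) f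
            rw [tsum_congr this, tsum_zero]
        have e4 : (∑' b' : ℕ, Set.indicator {b'' : ℕ | j+1 ≤ b''} (fun b'' => K * q ^ b'') b')
            = K * q ^ (j+1) * (1-q)⁻¹ := by
          have hinj2 : Function.Injective (fun i : ℕ => i + (j+1)) :=
            fun a b hab => by simpa using hab
          have hsupp : ∀ b', b' ∉ Set.range (fun i : ℕ => i + (j+1)) →
              Set.indicator {b'' : ℕ | j+1 ≤ b''} (fun b'' => K * q ^ b'') b' = 0 := by
            intro b' hb'
            apply Set.indicator_of_notMem
            intro hmem2
            have hmem3 : j + 1 ≤ b' := hmem2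
            exact hb' ⟨b' - (j+1), show b' - (j+1) + (j+1) = b' by omega⟩
          rw [← hinj2.tsum_eq (Function.support_subset_iff'.mpr hsupp)]
          have hterm : ∀ i : ℕ,
              Set.indicator {b'' : ℕ | j+1 ≤ b''} (fun b'' => K * q ^ b'') (i + (j+1))
              = (K * q ^ (j+1)) * q ^ i := by
            intro i
            rw [Set.indicator_of_mem
              (show i + (j+1) ∈ {b'' : ℕ | j+1 ≤ b''} from by simp; omega)]
            rw [pow_add]; ring
          rw [tsum_congr hterm, tsum_mul_left, tsum_geometric_of_lt_one hq0.le hq1]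
        rw [e1, e2, tsum_congr e3, e4]
      rw [htail] at hyle
      linarith
  -- c j < d j and d (j+1) ≤ c j
  have hratio : K * q * (1-q)⁻¹ < km := by
    rw [← div_eq_mul_inv, div_lt_iff₀ h1q]
    linarith [hqK]
  have hcd : ∀ j : ℕ, c j < d j := by
    intro j
    have h := mul_lt_mul_of_pos_right hratio (pow_pos hq0 j)
    have e1 : c j = K * q * (1-q)⁻¹ * q ^ j := by simp only [hcdef]; ring
    have e2 : d j = km * q ^ j := by simp only [hddef]
    rw [e1, e2]; exact h
  have hdc : ∀ j : ℕ, d (j+1) ≤ c j := by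
    intro j
    have h1 : (1:ℝ) ≤ (1-q)⁻¹ := (one_le_inv₀ h1q).mpr (by linarith)
    have h2 : km * q ^ (j+1) ≤ K * q ^ (j+1) :=
      mul_le_mul_of_nonneg_right hkmK (pow_nonneg hq0.le _)
    have h3 : K * q ^ (j+1) ≤ K * q ^ (j+1) * (1-q)⁻¹ :=
      le_mul_of_one_le_right (by positivity) h1
    simp only [hddef, hcdef]
    linarith
  have hdmono : ∀ j j' : ℕ, j ≤ j' → d j' ≤ d j := by
    intro j j' hj
    simp only [hddef]
    exact mul_le_mul_of_nonneg_left (pow_le_pow_of_le_one hq0.le hq1.le hj) hkm0.le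
  -- choose intervals
  have hmem : ∀ j : ℕ, ∃ i : Fin n, d j ∈ Set.Icc (a i) (b i) := by
    intro j
    have hh := hdmem j
    rw [hE] at hh
    exact Set.mem_iUnion.mp hh
  choose φ hφ using hmem
  have hlow : ∀ j : ℕ, c j < a (φ j) := by
    intro j
    by_contra hc
    push_neg at hc
    have hcdj := hcd j
    have hmid : (c j + d j)/2 ∈ Set.Icc (a (φ j)) (b (φ j)) := by
      constructor
      · linarith
      · have := (hφ j).2; linarith
    have hmE : (c j + d j)/2 ∈ achievementSet x := by
      rw [hE]; exact Set.mem_iUnion.mpr ⟨φ j, hmid⟩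
    exact hgap j _ hmE ⟨by linarith, by linarith⟩
  have hinj' : ∀ j j' : ℕ, j < j' → φ j ≠ φ j' := by
    intro j j' hjj' heq
    have h1 : c j < a (φ j) := hlow j
    have h2 : a (φ j') ≤ d j' := (hφ j').1
    have h3 : d j' ≤ d (j+1) := hdmono _ _ hjj'
    have h4 : d (j+1) ≤ c j := hdc j
    rw [heq] at h1
    linarith
  have hinj : Function.Injective (fun j : Fin (n+1) => φ j.val) := by
    intro j j' heq
    by_contra hne
    have hv : j.val ≠ j'.val := fun hh => hne (Fin.ext hh)
    rcases Nat.lt_or_ge j.val j'.val with hlt | hge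
    · exact hinj' _ _ hlt heq
    · exact hinj' _ _ (lt_of_le_of_ne hge fun hh => hv hh.symm) heq.symm
  have hcard := Fintype.card_le_of_injective _ hinj
  simp at hcard
end

section
/- Let k₁,…,k_m be positive integers, and suppose there exist positive integers n₀ and n such that each of n₀, n₀+1, …, n₀+n is expressible as Σ_{i=1}^m ε_i k_i with ε_i ∈ {0,1}. If 1/(n+1) ≤ q < 1/2, then the achievement set E(k₁,…,k_m; q) of the multigeometric sequence has nonempty interior. -/
open Set

lemma digits_rep (n : ℕ) (q x : ℝ) (hq0 : 0 < q) (hq1 : 1 ≤ (n + 1) * q) (hqlt : q < 1)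
    (hx0 : 0 ≤ x) (hxM : x ≤ n / (1 - q)) :
    ∃ d : ℕ → ℕ, (∀ j, d j ≤ n) ∧ HasSum (fun j => (d j : ℝ) * q ^ j) x := by
  have h1q : (0:ℝ) < 1 - q := by linarith
  set M : ℝ := n / (1 - q) with hM
  have hMn : M - (n:ℝ) = q * M := by
    field_simp [hM]; rw [hM]; linear_combination (div_mul_cancel₀ (n:ℝ) h1q.ne')
  have hqM : 1 ≤ q * M := by
    have h : q * M = q * n / (1 - q) := by rw [hM]; ring
    rw [h, le_div_iff₀ h1q]; nlinarith
  set D : ℝ → ℕ := fun s => min n ⌊s⌋₊ with hD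
  have hstep : ∀ s : ℝ, 0 ≤ s → s ≤ M → (D s : ℝ) ≤ s ∧ s - (D s : ℝ) ≤ q * M := by
    intro s hs0 hsM
    have hfl : (⌊s⌋₊ : ℝ) ≤ s := Nat.floor_le hs0
    have h1 : ((D s : ℕ) : ℝ) ≤ s := by
      refine le_trans ?_ hfl
      exact_mod_cast min_le_right n ⌊s⌋₊
    refine ⟨h1, ?_⟩
    by_cases h : n ≤ ⌊s⌋₊
    · rw [hD]; simp only [min_eq_left h]
      linarith
    · push_neg at h
      rw [hD]; simp only [min_eq_right h.le]
      have h2 := Nat.lt_floor_add_one s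
      linarith
  set r : ℕ → ℝ := fun j => Nat.rec x (fun _ s => (s - (D s : ℝ)) / q) j with hr
  have hr0 : r 0 = x := rfl
  have hrs : ∀ j, r (j + 1) = (r j - (D (r j) : ℝ)) / q := fun j => rfl
  have hinv : ∀ j, 0 ≤ r j ∧ r j ≤ M := by
    intro j
    induction j with
    | zero => exact ⟨hx0, hxM⟩
    | succ j ih =>
      obtain ⟨h0, hM'⟩ := ih
      obtain ⟨hle, hub⟩ := hstep (r j) h0 hM'
      rw [hrs]
      constructor
      · exact div_nonneg (by linarith) hq0.le
      · rw [div_le_iff₀ hq0]; linarith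
  have htel : ∀ J, x = (∑ j ∈ Finset.range J, (D (r j) : ℝ) * q ^ j) + q ^ J * r J := by
    intro J
    induction J with
    | zero => simp [hr0]
    | succ J ih =>
      rw [Finset.sum_range_succ]
      have he : q ^ (J + 1) * r (J + 1) = q ^ J * r J - (D (r J) : ℝ) * q ^ J := by
        rw [hrs, pow_succ]
        field_simp
      rw [he] at *
      linarith [ih]
  refine ⟨fun j => D (r j), fun j => min_le_left _ _, ?_⟩
  rw [hasSum_iff_tendsto_nat_of_nonneg (fun i => by positivity)]
  have hteq : (fun J => ∑ j ∈ Finset.range J, (D (r j) : ℝ) * q ^ j)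
      = fun J => x - q ^ J * r J := by
    funext J; linarith [htel J]
  rw [hteq]
  have h0 : Filter.Tendsto (fun J : ℕ => q ^ J * r J) Filter.atTop (nhds 0) := by
    refine squeeze_zero (fun J => mul_nonneg (pow_nonneg hq0.le J) (hinv J).1)
      (fun J => mul_le_mul_of_nonneg_left (hinv J).2 (pow_nonneg hq0.le J)) ?_
    simpa using (tendsto_pow_atTop_nhds_zero_of_lt_one hq0.le hqlt).mul_const M
  simpa using Filter.Tendsto.const_sub x h0

set_option maxHeartbeats 1000000 in
theorem stmt9 (m : ℕ) (k : Fin (m + 1) → ℕ) (hpos : ∀ i, 0 < k i)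
    (n₀ n : ℕ) (hn₀ : 0 < n₀) (hn : 0 < n)
    (hsum : ∀ j ≤ n, ∃ ε : Fin (m + 1) → Bool,
      n₀ + j = ∑ i, if ε i then k i else 0)
    (q : ℝ) (hq1 : 1 / (n + 1 : ℝ) ≤ q) (hq2 : q < 1 / 2) :
    (interior (achievementSet (mgSeq m (fun i => (k i : ℝ)) q))).Nonempty := by
  have hq0 : 0 < q := lt_of_lt_of_le (by positivity) hq1
  have hqlt : q < 1 := hq2.trans (by norm_num)
  have h1q : (0:ℝ) < 1 - q := by linarith
  have hq1' : 1 ≤ ((n:ℝ) + 1) * q := by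
    rw [div_le_iff₀ (by positivity)] at hq1
    nlinarith
  set f : ℕ → ℝ := mgSeq m (fun i => (k i : ℝ)) q with hf
  set c : ℝ := (n₀ : ℝ) * (1 - q)⁻¹ with hc
  set M : ℝ := (n : ℝ) / (1 - q) with hMdef
  -- key: every point of [c, c+M] is in the achievement set
  have key : ∀ x : ℝ, 0 ≤ x → x ≤ M → c + x ∈ achievementSet f := by
    intro x hx0 hxM
    obtain ⟨d, hd, hdx⟩ := digits_rep n q x hq0 hq1' hqlt hx0 hxM
    choose ε hε using fun j => hsum (d j) (hd j)
    set A : Set ℕ := {t | ε (t / (m + 1)) (Fin.ofNat (m + 1) t) = true} with hA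
    refine ⟨A, ?_⟩
    set g : ℕ × Fin (m + 1) → ℝ :=
      fun p => (if ε p.1 p.2 then (k p.2 : ℝ) else 0) * q ^ p.1 with hg
    have hfg : ∀ t, A.indicator f t = g (Nat.divModEquiv (m + 1) t) := by
      intro t
      have hfin : (⟨t % (m + 1), Nat.mod_lt _ (Nat.succ_pos m)⟩ : Fin (m + 1))
          = (Fin.ofNat (m + 1) t) := by
        ext
        simp [Fin.val_natCast]
      simp only [Set.indicator_apply, hg, Nat.divModEquiv_apply, hf, mgSeq, hfin, hA,
        mem_setOf_eq, ite_mul, zero_mul]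
    have hgsum : Summable g := by
      have hbig : Summable (fun p : ℕ × Fin (m + 1) => q ^ p.1 * (k p.2 : ℝ)) :=
        Summable.mul_of_nonneg (summable_geometric_of_lt_one hq0.le hqlt)
          Summable.of_finite (fun j => pow_nonneg hq0.le j) (fun i => Nat.cast_nonneg _)
      refine Summable.of_nonneg_of_le (fun p => ?_) (fun p => ?_) hbig
      · simp only [hg]
        split <;> positivity
      · simp only [hg]
        split
        · exact le_of_eq (mul_comm _ _)
        · rw [zero_mul]
          positivity
    have h1 : ∑' t, A.indicator f t = ∑' p, g p := by
      rw [← Equiv.tsum_eq (Nat.divModEquiv (m + 1)) g]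
      exact tsum_congr hfg
    have h2 : ∑' p, g p = ∑' j : ℕ, ((n₀ : ℝ) + (d j : ℝ)) * q ^ j := by
      rw [Summable.tsum_prod' hgsum (fun b => Summable.of_finite)]
      congr 1
      funext j
      rw [tsum_fintype]
      have hcast : (∑ i, if ε j i then (k i : ℝ) else 0) = (n₀ : ℝ) + (d j : ℝ) := by
        have h := hε j
        have h2 := congrArg (fun t : ℕ => (t : ℝ)) h
        push_cast at h2
        linarith [h2]
      simp only [hg]
      rw [← Finset.sum_mul, hcast]
    have hhs : HasSum (fun j : ℕ => ((n₀ : ℝ) + (d j : ℝ)) * q ^ j) (c + x) := by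
      have hgeo : HasSum (fun j : ℕ => (n₀ : ℝ) * q ^ j) c :=
        (hasSum_geometric_of_lt_one hq0.le hqlt).mul_left _
      simpa [add_mul] using hgeo.add hdx
    rw [h1, h2, hhs.tsum_eq]
  have hIcc : Icc c (c + M) ⊆ achievementSet f := by
    intro y hy
    have := key (y - c) (by linarith [hy.1]) (by linarith [hy.2])
    simpa using this
  have hsub := interior_mono hIcc
  rw [interior_Icc] at hsub
  have hMpos : 0 < M := div_pos (Nat.cast_pos.mpr hn) h1q
  exact ⟨c + M / 2, hsub ⟨by linarith, by linarith⟩⟩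
end

section
/- Let y be the sequence in which each term q^j (j ≥ 0) is repeated n times (n a positive integer) and suppose 1/(n+1) ≤ q < 1. Then the achievement set E(y) equals the interval [0, n/(1-q)]. -/
open Set

/-- Greedy partial sums. -/
noncomputable def greedySum (x : ℕ → ℝ) (t : ℝ) : ℕ → ℝ
  | 0 => 0
  | i + 1 => if greedySum x t i + x i ≤ t then greedySum x t i + x i else greedySum x t i

lemma achievement_eq (x : ℕ → ℝ) (hpos : ∀ i, 0 ≤ x i) (hsum : Summable x)
    (htail : ∀ i, x i ≤ ∑' j, x (i + 1 + j)) :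
    achievementSet x = Set.Icc 0 (∑' i, x i) := by
  ext t
  constructor
  · rintro ⟨A, rfl⟩
    have hA : Summable (A.indicator x) := hsum.indicator A
    refine ⟨tsum_nonneg fun i => Set.indicator_nonneg (fun j _ => hpos j) i, ?_⟩
    exact Summable.tsum_le_tsum (fun i => Set.indicator_le_self' (fun j _ => hpos j) i) hA hsum
  · rintro ⟨ht0, ht1⟩
    set s := greedySum x t with hs
    set A : Set ℕ := {i | s i + x i ≤ t} with hA
    have hsummj : ∀ i : ℕ, Summable fun j => x (i + j) := by
      intro i
      have : Summable fun j => x (j + i) := (summable_nat_add_iff i).2 hsum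
      simpa [add_comm] using this
    have hsplit : ∀ i : ℕ, ∑' j, x (i + j) = x i + ∑' j, x (i + 1 + j) := by
      intro i
      rw [Summable.tsum_eq_zero_add (hsummj i), add_zero]
      congr 1
      exact tsum_congr fun j => by rw [show i + (j + 1) = i + 1 + j by omega]
    have hzero : s 0 = 0 := rfl
    have hsucc : ∀ i, s (i + 1) = if s i + x i ≤ t then s i + x i else s i := fun i => rfl
    have hstep : ∀ i, s (i + 1) = s i + A.indicator x i := by
      intro i
      by_cases h : s i + x i ≤ t
      · have hi : i ∈ A := h
        rw [hsucc, if_pos h, Set.indicator_of_mem hi]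
      · have hi : i ∉ A := h
        rw [hsucc, if_neg h, Set.indicator_of_notMem hi, add_zero]
    have hpartial : ∀ i, ∑ j ∈ Finset.range i, A.indicator x j = s i := by
      intro i
      induction i with
      | zero => simp [hzero]
      | succ i ih => rw [Finset.sum_range_succ, ih, hstep i]
    have hinv : ∀ i, s i ≤ t ∧ t - s i ≤ ∑' j, x (i + j) := by
      intro i
      induction i with
      | zero =>
        refine ⟨by simpa [hzero] using ht0, ?_⟩
        simpa [hzero] using ht1
      | succ i ih =>
        by_cases h : s i + x i ≤ t
        · have hsi : s (i + 1) = s i + x i := by rw [hsucc, if_pos h]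
          refine ⟨by rw [hsi]; exact h, ?_⟩
          have := ih.2
          rw [hsplit i] at this
          rw [hsi]; linarith
        · have hsi : s (i + 1) = s i := by rw [hsucc, if_neg h]
          push_neg at h
          have := htail i
          refine ⟨by rw [hsi]; exact ih.1, ?_⟩
          rw [hsi]; linarith
    have htends : Filter.Tendsto (fun i => ∑' j, x (i + j)) Filter.atTop (nhds 0) := by
      have := tendsto_sum_nat_add x
      simpa [add_comm] using this
    have hslim : Filter.Tendsto s Filter.atTop (nhds t) := by
      have hlow : Filter.Tendsto (fun i => t - ∑' j, x (i + j)) Filter.atTop (nhds t) := by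
        simpa using (tendsto_const_nhds (x := t)).sub htends
      refine tendsto_of_tendsto_of_tendsto_of_le_of_le hlow tendsto_const_nhds
        (fun i => by linarith [(hinv i).2]) (fun i => (hinv i).1)
    have hHasSum : HasSum (A.indicator x) t := by
      rw [hasSum_iff_tendsto_nat_of_nonneg
        (fun i => Set.indicator_nonneg (fun j _ => hpos j) i)]
      have : (fun i => ∑ j ∈ Finset.range i, A.indicator x j) = s := funext hpartial
      rw [this]; exact hslim
    exact ⟨A, hHasSum.tsum_eq.symm⟩

theorem stmt10 (n : ℕ) (hn : 0 < n) (q : ℝ) (hq1 : 1 / (n + 1 : ℝ) ≤ q) (hq2 : q < 1) :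
    achievementSet (fun i => q ^ (i / n)) = Set.Icc 0 ((n : ℝ) / (1 - q)) := by
  haveI : NeZero n := ⟨hn.ne'⟩
  have hnp : (0 : ℝ) < (n : ℝ) + 1 := by positivity
  have hq0 : 0 < q := lt_of_lt_of_le (by positivity) hq1
  have h1q : 0 < 1 - q := by linarith
  set x : ℕ → ℝ := fun i => q ^ (i / n) with hx
  have hpos : ∀ i, 0 ≤ x i := fun i => pow_nonneg hq0.le _
  -- summability and total sum via ℕ ≃ ℕ × Fin n
  have hgeo : Summable fun a : ℕ => q ^ a :=
    summable_geometric_of_lt_one hq0.le hq2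
  set e := Nat.divModEquiv n with he
  have hcomp : ∀ p : ℕ × Fin n, x (e.symm p) = q ^ p.1 := by
    rintro ⟨a, b⟩
    have hb : (b : ℕ) < n := b.isLt
    have hdd : (a * n + (b : ℕ)) / n = a := by
      rw [add_comm, Nat.add_mul_div_right _ _ hn, Nat.div_eq_of_lt hb, zero_add]
    simp [hx, he, Nat.divModEquiv, hdd]
  have hsum2 : Summable fun p : ℕ × Fin n => x (e.symm p) := by
    rw [summable_prod_of_nonneg (fun p => hpos _)]
    constructor
    · intro a; exact Summable.of_finite
    · apply Summable.congr ((hgeo.mul_left (n : ℝ)))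
      intro a
      simp [hcomp, tsum_fintype, mul_comm]
  have hsumx : Summable x := (e.symm.summable_iff (f := x)).1 hsum2
  have htsum : ∑' i, x i = (n : ℝ) / (1 - q) := by
    rw [← e.symm.tsum_eq x, Summable.tsum_prod hsum2]
    have : ∀ a : ℕ, ∑' b : Fin n, x (e.symm (a, b)) = (n : ℝ) * q ^ a := by
      intro a
      simp [hcomp, tsum_fintype]
    rw [tsum_congr this, tsum_mul_left, tsum_geometric_of_lt_one hq0.le hq2,
      div_eq_mul_inv]
  -- tail condition
  have hdiv : ∀ i j : ℕ, (i + 1 + j) / n ≤ i / n + 1 + j / n := by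
    intro i j
    rw [Nat.lt_succ_iff.symm, Nat.div_lt_iff_lt_mul hn]
    have e1 := Nat.div_add_mod i n
    have e2 := Nat.div_add_mod j n
    have m1 := Nat.mod_lt i hn
    have m2 := Nat.mod_lt j hn
    nlinarith [e1, e2, m1, m2]
  have htail : ∀ i, x i ≤ ∑' j, x (i + 1 + j) := by
    intro i
    have hterm : ∀ j, q ^ (i / n + 1) * q ^ (j / n) ≤ x (i + 1 + j) := by
      intro j
      rw [← pow_add]
      exact pow_le_pow_of_le_one hq0.le hq2.le (by have := hdiv i j; omega)
    have hsummL : Summable fun j => x (i + 1 + j) := by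
      have : Summable fun j => x (j + (i + 1)) := (summable_nat_add_iff (i + 1)).2 hsumx
      simpa [add_comm] using this
    have hsummR : Summable fun j => q ^ (i / n + 1) * q ^ (j / n) := by
      have : Summable fun j => q ^ (i / n + 1) * x j := hsumx.mul_left _
      simpa [hx] using this
    have hge : q ^ (i / n + 1) * ((n : ℝ) / (1 - q)) ≤ ∑' j, x (i + 1 + j) := by
      have : ∑' j, q ^ (i / n + 1) * q ^ (j / n) ≤ ∑' j, x (i + 1 + j) :=
        Summable.tsum_le_tsum hterm hsummR hsummL
      rwa [tsum_mul_left, show (∑' j : ℕ, q ^ (j / n)) = (n : ℝ) / (1 - q) from htsum] at this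
    refine le_trans ?_ hge
    have hx_i : x i = q ^ (i / n) := rfl
    rw [hx_i, pow_succ]
    have hqpow : 0 < q ^ (i / n) := pow_pos hq0 _
    rw [mul_assoc]
    have h' : 1 - q ≤ q * (n : ℝ) := by
      have h1 : (1 : ℝ) ≤ q * ((n : ℝ) + 1) := by
        rw [div_le_iff₀ hnp] at hq1; linarith
      nlinarith
    have hkey : (1 : ℝ) ≤ q * ((n : ℝ) / (1 - q)) :=
      calc (1 : ℝ) = (1 - q) / (1 - q) := (div_self h1q.ne').symm
        _ ≤ (q * (n : ℝ)) / (1 - q) := by gcongr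
        _ = q * ((n : ℝ) / (1 - q)) := by ring
    nlinarith [hqpow, hkey]
  rw [achievement_eq x hpos hsumx htail, htsum]
end

section
/- Let k₁,…,k_m be positive integers and q ∈ (0,1). Suppose n₀, n are positive integers such that each of n₀, n₀+1, …, n₀+n is a subset-sum of {k₁,…,k_m}. Then n₀/(1-q) + E(y) ⊆ E(k₁,…,k_m; q), where y is the sequence with each power q^j repeated n times. -/
open Set

section helpers

lemma tsum_block (N : ℕ) [NeZero N] (f : ℕ → ℝ) (hf : Summable f) :
    ∑' i, f i = ∑' j, ∑ r : Fin N, f (j * N + r) := by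
  rw [← (Nat.divModEquiv N).symm.tsum_eq f]
  have hs : Summable fun c : ℕ × Fin N => f ((Nat.divModEquiv N).symm c) :=
    (Nat.divModEquiv N).symm.summable_iff.mpr hf
  rw [Summable.tsum_prod hs]
  congr 1
  funext j
  rw [tsum_fintype]
  rfl

lemma summable_aux (q : ℝ) (hq0 : 0 ≤ q) (hq1 : q < 1) (N : ℕ) [NeZero N] (C : ℝ)
    (hC : 0 ≤ C) (f : ℕ → ℝ) (h0 : ∀ i, 0 ≤ f i) (hle : ∀ i, f i ≤ C * q ^ (i / N)) :
    Summable f := by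
  have hg : Summable (fun i => C * q ^ (i / N)) := by
    rw [← (Nat.divModEquiv N).symm.summable_iff]
    have : ((fun i => C * q ^ (i / N)) ∘ (Nat.divModEquiv N).symm) =
        fun p : ℕ × Fin N => C * q ^ p.1 := by
      funext p
      simp only [Function.comp_apply, Nat.divModEquiv_symm_apply]
      congr 2
      rw [Nat.add_comm, Nat.add_mul_div_right _ _ N.pos_of_neZero,
        Nat.div_eq_of_lt p.2.is_lt, Nat.zero_add]
    rw [this]
    apply (summable_prod_of_nonneg ?_).mpr
    · refine ⟨fun a => summable_of_finite_support (Set.toFinite _), ?_⟩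
      simp only [tsum_fintype, Finset.sum_const, Finset.card_univ, Fintype.card_fin,
        nsmul_eq_mul]
      exact ((summable_geometric_of_lt_one hq0 hq1).mul_left C).mul_left (N:ℝ)
    · intro p
      exact mul_nonneg hC (pow_nonneg hq0 _)
  exact Summable.of_nonneg_of_le h0 hle hg

end helpers

theorem stmt11 (m : ℕ) (k : Fin (m + 1) → ℕ) (hpos : ∀ i, 0 < k i)
    (q : ℝ) (hq0 : 0 < q) (hq1 : q < 1)
    (n₀ n : ℕ) (hn₀ : 0 < n₀) (hn : 0 < n)
    (hsum : ∀ j ≤ n, ∃ ε : Fin (m + 1) → Bool,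
      n₀ + j = ∑ i, if ε i then k i else 0) :
    (fun t => (n₀ : ℝ) / (1 - q) + t) '' achievementSet (fun i => q ^ (i / n)) ⊆
      achievementSet (mgSeq m (fun i => (k i : ℝ)) q) := by
  classical
  haveI : NeZero n := ⟨hn.ne'⟩
  have hq0' : (0:ℝ) ≤ q := hq0.le
  rintro x ⟨t, ⟨A, rfl⟩, rfl⟩
  set a : ℕ → ℕ := fun j => (Finset.univ.filter (fun r : Fin n => j * n + (r:ℕ) ∈ A)).card
    with ha
  have ha_le : ∀ j, a j ≤ n := by
    intro j
    calc a j ≤ Finset.univ.card := Finset.card_filter_le _ _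
    _ = n := by simp
  choose ε hε using fun j => hsum (a j) (ha_le j)
  refine ⟨{i | ε (i / (m+1)) ⟨i % (m+1), Nat.mod_lt _ (Nat.succ_pos m)⟩ = true}, ?_⟩
  -- summability of the indicator of the base sequence
  have hsumA : Summable (A.indicator fun i => q ^ (i / n)) := by
    apply summable_aux q hq0' hq1 n 1 zero_le_one
    · intro i
      exact Set.indicator_nonneg (fun i _ => pow_nonneg hq0' _) i
    · intro i
      rw [one_mul]
      exact Set.indicator_le_self' (fun i _ => pow_nonneg hq0' _) i
  -- compute t
  have ht : ∑' i, A.indicator (fun i => q ^ (i / n)) i = ∑' j, (a j : ℝ) * q ^ j := by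
    rw [tsum_block n _ hsumA]
    congr 1
    funext j
    have : ∀ r : Fin n, A.indicator (fun i => q ^ (i / n)) (j * n + r) =
        if j * n + (r:ℕ) ∈ A then q ^ j else 0 := by
      intro r
      have hd : (j * n + (r:ℕ)) / n = j := by
        rw [Nat.add_comm, Nat.add_mul_div_right _ _ n.pos_of_neZero,
          Nat.div_eq_of_lt r.is_lt, Nat.zero_add]
      by_cases h : j * n + (r:ℕ) ∈ A
      · rw [Set.indicator_of_mem h, hd, if_pos h]
      · rw [Set.indicator_of_notMem h, if_neg h]
    simp_rw [this]
    rw [← Finset.sum_filter, Finset.sum_const, nsmul_eq_mul]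
  -- compute the mg indicator blocks
  set B : Set ℕ := {i | ε (i / (m+1)) ⟨i % (m+1), Nat.mod_lt _ (Nat.succ_pos m)⟩ = true}
  have hblock : ∀ j (r : Fin (m+1)),
      B.indicator (mgSeq m (fun i => (k i : ℝ)) q) (j * (m+1) + r) =
        (if ε j r then (k r : ℝ) else 0) * q ^ j := by
    intro j r
    have hd : (j * (m+1) + (r:ℕ)) / (m+1) = j := by
      rw [Nat.add_comm, Nat.add_mul_div_right _ _ (Nat.succ_pos m),
        Nat.div_eq_of_lt r.is_lt, Nat.zero_add]
    have hm : (j * (m+1) + (r:ℕ)) % (m+1) = r := by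
      rw [Nat.add_comm, Nat.add_mul_mod_self_right, Nat.mod_eq_of_lt r.is_lt]
    have hr : (⟨(j * (m+1) + (r:ℕ)) % (m+1), Nat.mod_lt _ (Nat.succ_pos m)⟩ : Fin (m+1)) = r :=
      Fin.ext hm
    have hmem : (j * (m+1) + (r:ℕ)) ∈ B ↔ ε j r = true := by
      simp only [B, Set.mem_setOf_eq, hd, hr]
    have hval : mgSeq m (fun i => (k i : ℝ)) q (j * (m+1) + r) = (k r : ℝ) * q ^ j := by
      unfold mgSeq
      rw [hd, hr]
    by_cases h : ε j r = true
    · rw [Set.indicator_of_mem (hmem.mpr h), hval, if_pos h]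
    · rw [Set.indicator_of_notMem (fun hc => h (hmem.mp hc)), if_neg h, zero_mul]
  have hsumB : Summable (B.indicator (mgSeq m (fun i => (k i : ℝ)) q)) := by
    apply summable_aux q hq0' hq1 (m+1) (∑ i, (k i : ℝ))
      (Finset.sum_nonneg fun i _ => Nat.cast_nonneg _)
    · intro i
      apply Set.indicator_nonneg
      intro i _
      exact mul_nonneg (Nat.cast_nonneg _) (pow_nonneg hq0' _)
    · intro i
      refine le_trans (Set.indicator_le_self' (fun i _ =>
        mul_nonneg (Nat.cast_nonneg _) (pow_nonneg hq0' _)) i) ?_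
      apply mul_le_mul_of_nonneg_right _ (pow_nonneg hq0' _)
      exact Finset.single_le_sum (f := fun i => (k i : ℝ))
        (fun i _ => Nat.cast_nonneg _) (Finset.mem_univ _)
  have hB : ∑' i, B.indicator (mgSeq m (fun i => (k i : ℝ)) q) i =
      ∑' j, ((n₀ + a j : ℕ) : ℝ) * q ^ j := by
    rw [tsum_block (m+1) _ hsumB]
    congr 1
    funext j
    simp_rw [hblock j]
    rw [← Finset.sum_mul]
    congr 1
    rw [hε j]
    push_cast
    rfl
  rw [hB, ht]
  have hs1 : Summable (fun j => (n₀ : ℝ) * q ^ j) :=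
    (summable_geometric_of_lt_one hq0' hq1).mul_left _
  have hs2 : Summable (fun j => (a j : ℝ) * q ^ j) := by
    apply Summable.of_nonneg_of_le (fun j => mul_nonneg (Nat.cast_nonneg _) (pow_nonneg hq0' _))
      (fun j => ?_) ((summable_geometric_of_lt_one hq0' hq1).mul_left (n:ℝ))
    exact mul_le_mul_of_nonneg_right (Nat.cast_le.mpr (ha_le j)) (pow_nonneg hq0' _)
  have : ∀ j, ((n₀ + a j : ℕ) : ℝ) * q ^ j = (n₀ : ℝ) * q ^ j + (a j : ℝ) * q ^ j := by
    intro j; push_cast; ring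
  simp_rw [this]
  rw [Summable.tsum_add hs1 hs2, tsum_mul_left, tsum_geometric_of_lt_one hq0' hq1, div_eq_mul_inv]
end

section
/- Let x = (k₁,…,k_m; q) be a multigeometric sequence and let Σ = { Σ_{i=1}^m ε_i k_i : ε_i ∈ {0,1} } be the set of subset-sums of {k₁,…,k_m}. If 0 < q < 1/card(Σ), then the achievement set E(x) has empty interior (equivalently, Lebesgue measure zero). -/
open Set

open Pointwise MeasureTheory
open scoped ENNReal

lemma mgSeq_shift (m : ℕ) (k : Fin (m + 1) → ℝ) (q : ℝ) (n : ℕ) :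
    mgSeq m k q (n + (m + 1)) = q * mgSeq m k q n := by
  have h1 : (n + (m + 1)) % (m + 1) = n % (m + 1) := Nat.add_mod_right _ _
  have h2 : (n + (m + 1)) / (m + 1) = n / (m + 1) + 1 :=
    Nat.add_div_right _ (Nat.succ_pos m)
  simp only [mgSeq, h1, h2, pow_succ]
  ring

lemma mgSeq_head (m : ℕ) (k : Fin (m + 1) → ℝ) (q : ℝ) (i : Fin (m + 1)) :
    mgSeq m k q i = k i := by
  have h1 : (i : ℕ) % (m + 1) = i := Nat.mod_eq_of_lt i.isLt
  have h2 : (i : ℕ) / (m + 1) = 0 := Nat.div_eq_of_lt i.isLt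
  simp only [mgSeq, h1, h2, pow_zero, mul_one, Fin.eta]

lemma mgSeq_summable (m : ℕ) (k : Fin (m + 1) → ℝ) (hk : ∀ i, 0 ≤ k i) (q : ℝ)
    (hq0 : 0 ≤ q) (hq1 : q < 1) : Summable (mgSeq m k q) := by
  rw [← (Nat.divModEquiv (m + 1)).symm.summable_iff]
  have : (mgSeq m k q) ∘ (Nat.divModEquiv (m + 1)).symm
      = fun p : ℕ × Fin (m + 1) => k p.2 * q ^ p.1 := by
    funext p
    have he : (Nat.divModEquiv (m + 1)).symm p = p.1 * (m + 1) + (p.2 : ℕ) := rfl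
    have h1 : (p.1 * (m + 1) + (p.2 : ℕ)) % (m + 1) = (p.2 : ℕ) :=
      Nat.mul_add_mod_of_lt p.2.isLt
    have h2 : (p.1 * (m + 1) + (p.2 : ℕ)) / (m + 1) = p.1 := by
      rw [Nat.mul_comm, Nat.mul_add_div (Nat.succ_pos m), Nat.div_eq_of_lt p.2.isLt,
        Nat.add_zero]
    simp only [Function.comp_apply, he, mgSeq, h1, h2, Fin.eta]
  rw [this]
  apply (summable_prod_of_nonneg ?_).2
  · refine ⟨fun p => Summable.of_finite, ?_⟩
    apply Summable.of_nonneg_of_le (fun n => ?_) (fun n => ?_)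
      ((summable_geometric_of_lt_one hq0 hq1).mul_left (∑ i : Fin (m + 1), k i))
    · exact tsum_nonneg fun i => mul_nonneg (hk i) (pow_nonneg hq0 _)
    · rw [tsum_fintype]
      simp only [Finset.sum_mul]
      exact le_rfl
  · intro p; exact mul_nonneg (hk p.2) (pow_nonneg hq0 _)


theorem stmt12 (m : ℕ) (k : Fin (m + 1) → ℕ) (hpos : ∀ i, 0 < k i) (q : ℝ) (hq0 : 0 < q)
    (hq : q < 1 / ((Finset.univ.image
      (fun ε : Fin (m + 1) → Bool => ∑ i, if ε i then (k i : ℝ) else 0)).card : ℝ)) :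
    interior (achievementSet (mgSeq m (fun i => (k i : ℝ)) q)) = ∅ := by
  classical
  set x : ℕ → ℝ := mgSeq m (fun i => (k i : ℝ)) q with hxdef
  set S : Finset ℝ := Finset.univ.image
      (fun ε : Fin (m + 1) → Bool => ∑ i, if ε i then (k i : ℝ) else 0) with hSdef
  set E : Set ℝ := achievementSet x with hEdef
  set c : ℕ := S.card with hcdef
  have hcpos : 0 < c :=
    Finset.card_pos.2 ⟨_, Finset.mem_image_of_mem _ (Finset.mem_univ (fun _ => false))⟩
  have hc1 : (1 : ℝ) ≤ c := by exact_mod_cast hcpos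
  have hq1 : q < 1 := lt_of_lt_of_le hq (by
    rw [div_le_one (by positivity)]; exact hc1)
  have hcq : (c : ℝ) * q < 1 := by
    rw [lt_div_iff₀ (by positivity)] at hq
    linarith [hq]
  have hxnn : ∀ n, 0 ≤ x n := fun n =>
    mul_nonneg (Nat.cast_nonneg _) (pow_nonneg hq0.le _)
  have hxsum : Summable x :=
    mgSeq_summable m _ (fun i => Nat.cast_nonneg _) q hq0.le hq1
  have hind : ∀ A : Set ℕ, Summable (A.indicator x) := fun A => hxsum.indicator A
  -- E is bounded
  have hbound : E ⊆ Icc 0 (∑' n, x n) := by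
    rintro y ⟨A, rfl⟩
    constructor
    · exact tsum_nonneg fun n => Set.indicator_nonneg (fun i _ => hxnn i) n
    · exact Summable.tsum_le_tsum (fun n => Set.indicator_le_self' (fun i _ => hxnn i) n)
        (hind A) hxsum
  -- decomposition
  have hdec : ∀ A : Set ℕ, ∃ s ∈ S, ∃ z ∈ E, (∑' n, A.indicator x n) = s + q * z := by
    intro A
    set A' : Set ℕ := (· + (m + 1)) ⁻¹' A with hA'
    refine ⟨∑ i : Fin (m + 1), if ((i : ℕ) ∈ A) then (k i : ℝ) else 0, ?_,
      ∑' n, A'.indicator x n, ⟨A', rfl⟩, ?_⟩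
    · exact Finset.mem_image.2 ⟨fun i => decide ((i : ℕ) ∈ A), Finset.mem_univ _, by
        simp only [decide_eq_true_eq]⟩
    · rw [← Summable.sum_add_tsum_nat_add (m + 1) (hind A)]
      congr 1
      · rw [← Fin.sum_univ_eq_sum_range]
        refine Finset.sum_congr rfl fun i _ => ?_
        by_cases h : (i : ℕ) ∈ A
        · rw [Set.indicator_of_mem h, if_pos h]
          exact mgSeq_head m _ q i
        · rw [Set.indicator_of_notMem h, if_neg h]
      · rw [← tsum_mul_left]
        refine tsum_congr fun n => ?_
        by_cases h : (n + (m + 1)) ∈ A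
        · rw [Set.indicator_of_mem h, Set.indicator_of_mem (by exact h)]
          exact mgSeq_shift m _ q n
        · rw [Set.indicator_of_notMem h, Set.indicator_of_notMem (by exact h), mul_zero]
  -- covering
  have hcover : E ⊆ ⋃ s ∈ S, (fun t => s + q * t) '' E := by
    rintro y ⟨A, rfl⟩
    obtain ⟨s, hs, z, hz, hy⟩ := hdec A
    exact Set.mem_biUnion hs ⟨z, hz, hy.symm⟩
  -- measure of each piece
  have himg : ∀ s : ℝ, MeasureTheory.volume ((fun t => s + q * t) '' E)
      = ENNReal.ofReal q * MeasureTheory.volume E := by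
    intro s
    have h1 : (fun t : ℝ => s + q * t) '' E = s +ᵥ (q • E) := by
      rw [← Set.image_vadd, ← Set.image_smul, ← Set.image_comp]
      rfl
    rw [h1, measure_vadd volume s (q • E), MeasureTheory.Measure.addHaar_smul_of_nonneg _ hq0.le,
      Module.finrank_self, pow_one]
  have hEfin : MeasureTheory.volume E ≠ ⊤ := by
    refine ne_top_of_le_ne_top ?_ (MeasureTheory.measure_mono hbound)
    rw [Real.volume_Icc]
    exact ENNReal.ofReal_ne_top
  have key : MeasureTheory.volume E
      ≤ ((c : ℝ≥0∞) * ENNReal.ofReal q) * MeasureTheory.volume E := by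
    calc MeasureTheory.volume E ≤ MeasureTheory.volume (⋃ s ∈ S, (fun t => s + q * t) '' E) :=
        MeasureTheory.measure_mono hcover
      _ ≤ ∑ s ∈ S, MeasureTheory.volume ((fun t => s + q * t) '' E) :=
        MeasureTheory.measure_biUnion_finset_le S _
      _ = ∑ s ∈ S, ENNReal.ofReal q * MeasureTheory.volume E :=
        Finset.sum_congr rfl fun s _ => himg s
      _ = ((c : ℝ≥0∞) * ENNReal.ofReal q) * MeasureTheory.volume E := by
        rw [Finset.sum_const, nsmul_eq_mul, hcdef, mul_assoc]
  have hfac : (c : ℝ≥0∞) * ENNReal.ofReal q < 1 := by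
    rw [← ENNReal.ofReal_natCast, ← ENNReal.ofReal_mul (Nat.cast_nonneg _)]
    exact ENNReal.ofReal_lt_one.2 hcq
  have hE0 : MeasureTheory.volume E = 0 := by
    by_contra h
    have hlt : ((c : ℝ≥0∞) * ENNReal.ofReal q) * MeasureTheory.volume E
        < MeasureTheory.volume E := by
      calc ((c : ℝ≥0∞) * ENNReal.ofReal q) * MeasureTheory.volume E
          < 1 * MeasureTheory.volume E :=
            (ENNReal.mul_lt_mul_iff_left h hEfin).2 hfac
        _ = MeasureTheory.volume E := one_mul _
    exact lt_irrefl _ (lt_of_le_of_lt key hlt)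
  rw [Set.eq_empty_iff_forall_notMem]
  intro y hy
  have hopen : 0 < MeasureTheory.volume (interior E) :=
    isOpen_interior.measure_pos _ ⟨y, hy⟩
  have : MeasureTheory.volume (interior E) = 0 :=
    le_antisymm (hE0 ▸ MeasureTheory.measure_mono interior_subset) zero_le
  exact absurd this hopen.ne'
end

section
/- For q = 1/10 and the sequence a_q = (8,7,6,5,4; q) (Weinstein–Shapiro, rescaled), the achievement set E(a_q) has nonempty interior but is not a finite union of closed intervals. -/
open Set

namespace Stmt14Aux

noncomputable def K : Fin 5 → ℝ := ![8, 7, 6, 5, 4]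
noncomputable def x : ℕ → ℝ := mgSeq 4 K (1/10)

lemma K_nonneg (r : Fin 5) : 0 ≤ K r := by fin_cases r <;> norm_num [K]
lemma K_ge (r : Fin 5) : 4 ≤ K r := by fin_cases r <;> norm_num [K]
lemma K_total : ∑ r : Fin 5, K r = 30 := by
  have h2 : K 2 = 6 := rfl
  have h3 : K 3 = 5 := rfl
  have h4 : K 4 = 4 := rfl
  rw [Fin.sum_univ_five, h2, h3, h4]; norm_num [K]

lemma x_apply (j : ℕ) (r : Fin 5) : x (j * 5 + r) = K r * (1/10 : ℝ)^j := by
  unfold x mgSeq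
  congr 2
  · apply Fin.ext
    show (j * 5 + ↑r) % (4+1) = ↑r
    omega
  · omega

noncomputable def sA (A : Set ℕ) (j : ℕ) : ℝ :=
  ∑ r : Fin 5, A.indicator (fun _ => K r) (j * 5 + r)

lemma sA_nonneg (A : Set ℕ) (j : ℕ) : 0 ≤ sA A j :=
  Finset.sum_nonneg fun r _ => Set.indicator_nonneg (fun _ _ => K_nonneg r) _

lemma indicator_le_K (A : Set ℕ) (r : Fin 5) (n : ℕ) :
    A.indicator (fun _ => K r) n ≤ K r := by
  classical
  rw [Set.indicator_apply]; split
  · exact le_refl _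
  · exact K_nonneg r

lemma sA_le (A : Set ℕ) (j : ℕ) : sA A j ≤ 30 := by
  rw [← K_total]
  exact Finset.sum_le_sum fun r _ => indicator_le_K A r _

lemma summable_q : Summable (fun j : ℕ => ((1:ℝ)/10)^j) :=
  summable_geometric_of_lt_one (by norm_num) (by norm_num)

lemma summable_sA (A : Set ℕ) : Summable (fun j => sA A j * (1/10:ℝ)^j) := by
  apply Summable.of_nonneg_of_le
    (fun j => mul_nonneg (sA_nonneg A j) (by positivity))
    (fun j => mul_le_mul_of_nonneg_right (sA_le A j) (by positivity))
    (summable_q.mul_left 30)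

lemma summable_aux (A : Set ℕ) :
    Summable (fun p : ℕ × Fin 5 =>
      A.indicator (fun _ => K p.2) (p.1 * 5 + p.2) * (1/10:ℝ)^p.1) := by
  rw [summable_prod_of_nonneg (fun p => mul_nonneg
    (Set.indicator_nonneg (fun _ _ => K_nonneg p.2) _) (by positivity))]
  constructor
  · intro j
    exact Summable.of_finite
  · apply Summable.of_nonneg_of_le (f := fun j => 30 * (1/10:ℝ)^j)
    · intro j
      exact tsum_nonneg fun r => mul_nonneg
        (Set.indicator_nonneg (fun _ _ => K_nonneg r) _) (by positivity)
    · intro j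
      rw [tsum_fintype]
      calc ∑ r : Fin 5, A.indicator (fun _ => K r) (j * 5 + r) * (1/10:ℝ)^j
          = sA A j * (1/10:ℝ)^j := by rw [sA, Finset.sum_mul]
        _ ≤ 30 * (1/10:ℝ)^j :=
            mul_le_mul_of_nonneg_right (sA_le A j) (by positivity)
    · exact summable_q.mul_left 30

lemma master (A : Set ℕ) :
    ∑' n, A.indicator x n = ∑' j, sA A j * (1/10:ℝ)^j := by
  rw [← Equiv.tsum_eq (Nat.divModEquiv 5).symm]
  have he : ∀ p : ℕ × Fin 5, A.indicator x ((Nat.divModEquiv 5).symm p)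
      = A.indicator (fun _ => K p.2) (p.1 * 5 + p.2) * (1/10:ℝ)^p.1 := by
    rintro ⟨j, r⟩
    classical
    show A.indicator x (j * 5 + ↑r) = _
    rw [Set.indicator_apply, Set.indicator_apply]
    split
    · exact x_apply j r
    · simp
  rw [tsum_congr he, Summable.tsum_prod (summable_aux A)]
  apply tsum_congr
  intro j
  rw [tsum_fintype, sA, Finset.sum_mul]

/-! ### Gap structure near the maximum -/

lemma sA_cases (A : Set ℕ) (j : ℕ) : sA A j ≤ 26 ∨ sA A j = 30 := by
  classical
  by_cases h : ∀ r : Fin 5, (j * 5 + (r : ℕ)) ∈ A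
  · right
    rw [← K_total, sA]
    exact Finset.sum_congr rfl fun r _ => Set.indicator_of_mem (h r) _
  · left
    obtain ⟨r0, hr0⟩ := not_forall.mp h
    have h1 : sA A j = ∑ r ∈ Finset.univ.erase r0, A.indicator (fun _ => K r) (j * 5 + r) := by
      rw [sA, ← Finset.sum_erase_add _ _ (Finset.mem_univ r0),
        Set.indicator_of_notMem hr0, add_zero]
    have h2 : ∑ r ∈ Finset.univ.erase r0, A.indicator (fun _ => K r) (j * 5 + (r:ℕ))
        ≤ ∑ r ∈ Finset.univ.erase r0, K r :=
      Finset.sum_le_sum fun r _ => indicator_le_K A r _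
    have h3 : ∑ r ∈ Finset.univ.erase r0, K r = 30 - K r0 := by
      have := Finset.sum_erase_add Finset.univ K (Finset.mem_univ r0)
      rw [K_total] at this
      linarith
    have := K_ge r0
    linarith [h1 ▸ h2, h3 ▸ h2]

lemma tsum_thirty : ∑' j : ℕ, (30:ℝ) * (1/10)^j = 100/3 := by
  rw [tsum_mul_left, tsum_geometric_of_lt_one (by norm_num) (by norm_num)]
  norm_num

lemma gap (y : ℝ) (hy : y ∈ achievementSet x) (m : ℕ) :
    y ∉ Ioo (100/3 - 4*(1/10:ℝ)^m) (100/3 - 10/3*(1/10:ℝ)^m) := by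
  classical
  obtain ⟨A, rfl⟩ := hy
  rw [master]
  rintro ⟨hlo, hhi⟩
  by_cases h : ∀ j ≤ m, sA A j = 30
  · have hlow : ∑ j ∈ Finset.range (m+1), sA A j * (1/10:ℝ)^j
        ≤ ∑' j, sA A j * (1/10:ℝ)^j :=
      Summable.sum_le_tsum _ (fun i _ => mul_nonneg (sA_nonneg A i) (by positivity)) (summable_sA A)
    have hsum : ∑ j ∈ Finset.range (m+1), sA A j * (1/10:ℝ)^j
        = 100/3 - 10/3 * (1/10:ℝ)^m := by
      have hc : ∀ j ∈ Finset.range (m+1), sA A j * (1/10:ℝ)^j = 30 * (1/10)^j := by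
        intro j hj
        rw [h j (Nat.lt_succ_iff.mp (Finset.mem_range.mp hj))]
      rw [Finset.sum_congr rfl hc, ← Finset.mul_sum, geom_sum_eq (by norm_num),
        pow_succ]
      ring
    linarith
  · push_neg at h
    obtain ⟨j0, hj0le, hne⟩ := h
    have hs : sA A j0 ≤ 26 := (sA_cases A j0).resolve_right hne
    have hfe : (fun j => (if j = j0 then (26:ℝ) else 30) * (1/10)^j)
        = fun j => 30*(1/10:ℝ)^j - (if j = j0 then 4*(1/10:ℝ)^j0 else 0) := by
      funext j
      by_cases hj : j = j0
      · simp [hj]; ring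
      · simp [hj]
    have hsum2 : Summable (fun j => (if j = j0 then (26:ℝ) else 30) * (1/10)^j) := by
      rw [hfe]
      exact (summable_q.mul_left 30).sub (hasSum_ite_eq j0 _).summable
    have hval : ∑' j, (if j = j0 then (26:ℝ) else 30) * (1/10)^j
        = 100/3 - 4*(1/10:ℝ)^j0 := by
      rw [hfe, Summable.tsum_sub (summable_q.mul_left 30) (hasSum_ite_eq j0 _).summable,
        tsum_thirty, (hasSum_ite_eq j0 _).tsum_eq]
    have hup : ∑' j, sA A j * (1/10:ℝ)^j
        ≤ ∑' j, (if j = j0 then (26:ℝ) else 30) * (1/10)^j := by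
      apply Summable.tsum_le_tsum _ (summable_sA A) hsum2
      intro j
      by_cases hj : j = j0
      · subst hj; simp only [if_pos rfl]
        exact mul_le_mul_of_nonneg_right hs (by positivity)
      · simp only [if_neg hj]
        exact mul_le_mul_of_nonneg_right (sA_le A j) (by positivity)
    have hpow : (1/10:ℝ)^m ≤ (1/10:ℝ)^j0 :=
      pow_le_pow_of_le_one (by norm_num) (by norm_num) hj0le
    linarith [hval ▸ hup]

lemma Pmem (m : ℕ) : (100/3 - 100/3*(1/10:ℝ)^m) ∈ achievementSet x := by
  refine ⟨{n | n < 5*m}, ?_⟩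
  rw [master]
  have hsAv : ∀ j, sA {n | n < 5*m} j * (1/10:ℝ)^j
      = (if j < m then (30:ℝ) else 0) * (1/10)^j := by
    intro j
    congr 1
    rw [sA]
    split
    · next hjm =>
      rw [← K_total]
      refine Finset.sum_congr rfl fun r _ => ?_
      refine Set.indicator_of_mem ?_ _
      have := r.is_lt
      simp only [mem_setOf_eq]
      omega
    · next hjm =>
      refine Finset.sum_eq_zero fun r _ => Set.indicator_of_notMem ?_ _
      simp only [mem_setOf_eq]
      omega
  rw [tsum_congr hsAv, tsum_eq_sum (s := Finset.range m)
    (fun j hj => by rw [if_neg (by simpa using hj)]; ring)]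
  have hc : ∀ j ∈ Finset.range m, (if j < m then (30:ℝ) else 0) * (1/10)^j
      = 30 * (1/10:ℝ)^j := by
    intro j hj
    rw [if_pos (Finset.mem_range.mp hj)]
  rw [Finset.sum_congr rfl hc, ← Finset.mul_sum, geom_sum_eq (by norm_num)]
  ring

theorem part2 : ¬ IsFinUnionClosedIntervals (achievementSet x) := by
  rintro ⟨n, a, b, hE⟩
  have hQmem : ∀ m : ℕ, (100/3 - 10/3*(1/10:ℝ)^m) ∈ achievementSet x := by
    intro m
    have h1 := Pmem (m+1)
    have he : 100/3 - 100/3*(1/10:ℝ)^(m+1) = 100/3 - 10/3*(1/10)^m := by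
      rw [pow_succ]; ring
    rwa [he] at h1
  have hQmono : ∀ m m' : ℕ, m ≤ m' →
      (100/3 - 10/3*(1/10:ℝ)^m) ≤ 100/3 - 10/3*(1/10:ℝ)^m' := by
    intro m m' h
    have := pow_le_pow_of_le_one (by norm_num : (0:ℝ) ≤ 1/10) (by norm_num) h
    linarith
  have hg : ∀ m : ℕ, (100/3 - 11/3*(1/10:ℝ)^(m+1)) ∉ achievementSet x := by
    intro m hmem
    have hp : (0:ℝ) < (1/10:ℝ)^(m+1) := by positivity
    exact gap _ hmem (m+1) ⟨by linarith, by linarith⟩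
  have hgb : ∀ m : ℕ, (100/3 - 10/3*(1/10:ℝ)^m) < 100/3 - 11/3*(1/10:ℝ)^(m+1)
      ∧ (100/3 - 11/3*(1/10:ℝ)^(m+1)) < 100/3 - 10/3*(1/10:ℝ)^(m+1) := by
    intro m
    have hp : (0:ℝ) < (1/10:ℝ)^m := by positivity
    constructor
    · rw [pow_succ]; linarith
    · have hp2 : (0:ℝ) < (1/10:ℝ)^(m+1) := by positivity
      linarith
  have hch : ∀ m : Fin (n+1), ∃ i : Fin n,
      (100/3 - 10/3*(1/10:ℝ)^(m:ℕ)) ∈ Icc (a i) (b i) := by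
    intro m
    have h1 := hQmem (m : ℕ)
    rw [hE] at h1
    exact mem_iUnion.mp h1
  choose i hi using hch
  have key : ∀ m m' : Fin (n+1), (m:ℕ) < (m':ℕ) → i m ≠ i m' := by
    intro m m' hlt heq
    apply hg (m:ℕ)
    rw [hE]
    refine mem_iUnion.mpr ⟨i m, ?_, ?_⟩
    · exact le_trans (hi m).1 (le_of_lt (hgb (m:ℕ)).1)
    · calc (100/3 - 11/3*(1/10:ℝ)^((m:ℕ)+1))
          ≤ 100/3 - 10/3*(1/10:ℝ)^((m:ℕ)+1) := le_of_lt (hgb (m:ℕ)).2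
        _ ≤ 100/3 - 10/3*(1/10:ℝ)^(m':ℕ) := hQmono _ _ hlt
        _ ≤ b (i m) := by rw [heq]; exact (hi m').2
  have hinj : Function.Injective i := by
    intro m m' heq
    by_contra hne
    rcases Ne.lt_or_gt hne with h | h
    · exact key m m' h heq
    · exact key m' m h heq.symm
  have hcard := Fintype.card_le_of_injective i hinj
  simp only [Fintype.card_fin] at hcard
  omega

/-! ### Digit expansion: the interval [40/9, 130/9] is contained in the achievement set -/

noncomputable def Z (z : ℝ) : ℕ → ℝ
  | 0 => z
  | j+1 => 10 * (Z z j - (min 9 ⌊Z z j⌋ : ℤ))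

noncomputable def dig (z : ℝ) (j : ℕ) : ℤ := min 9 ⌊Z z j⌋

lemma Z_mem {z : ℝ} (hz : z ∈ Icc (0:ℝ) 10) : ∀ j, Z z j ∈ Icc (0:ℝ) 10 := by
  intro j
  induction j with
  | zero => exact hz
  | succ j ih =>
    obtain ⟨h0, h1⟩ := ih
    have hfl : (⌊Z z j⌋ : ℝ) ≤ Z z j := Int.floor_le _
    have hfl2 : Z z j < ⌊Z z j⌋ + 1 := Int.lt_floor_add_one _
    have hd : ((min 9 ⌊Z z j⌋ : ℤ) : ℝ) ≤ Z z j := by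
      rcases min_cases 9 ⌊Z z j⌋ with ⟨he, hc⟩ | ⟨he, hc⟩ <;> rw [he]
      · push_cast; exact le_trans (by exact_mod_cast hc : (9:ℝ) ≤ ⌊Z z j⌋) hfl
      · exact hfl
    have hd2 : Z z j - ((min 9 ⌊Z z j⌋ : ℤ) : ℝ) ≤ 1 := by
      rcases min_cases 9 ⌊Z z j⌋ with ⟨he, hc⟩ | ⟨he, hc⟩ <;> rw [he]
      · push_cast; linarith
      · linarith
    constructor
    · show (0:ℝ) ≤ 10 * (Z z j - _)
      nlinarith
    · show 10 * (Z z j - _) ≤ 10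
      nlinarith

lemma dig_nonneg {z : ℝ} (hz : z ∈ Icc (0:ℝ) 10) (j : ℕ) : 0 ≤ dig z j := by
  have h0 := (Z_mem hz j).1
  have := Int.floor_nonneg.mpr h0
  rw [dig]
  omega

lemma dig_le {z : ℝ} (j : ℕ) : dig z j ≤ 9 := min_le_left _ _

lemma partial_sum_eq {z : ℝ} : ∀ n : ℕ,
    ∑ j ∈ Finset.range n, (dig z j : ℝ) * (1/10)^j = z - Z z n * (1/10)^n := by
  intro n
  induction n with
  | zero => simp [Z]
  | succ n ih =>
    rw [Finset.sum_range_succ, ih]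
    have hZ : Z z (n+1) = 10 * (Z z n - (dig z n : ℤ)) := rfl
    rw [hZ, pow_succ]
    ring

lemma summable_dig {z : ℝ} (hz : z ∈ Icc (0:ℝ) 10) :
    Summable (fun j : ℕ => (dig z j : ℝ) * (1/10)^j) := by
  apply Summable.of_nonneg_of_le
    (fun j => mul_nonneg (by exact_mod_cast dig_nonneg hz j) (by positivity))
    (fun j => mul_le_mul_of_nonneg_right (by exact_mod_cast dig_le j) (by positivity))
    (summable_q.mul_left 9)

lemma tsum_dig {z : ℝ} (hz : z ∈ Icc (0:ℝ) 10) :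
    ∑' j : ℕ, (dig z j : ℝ) * (1/10)^j = z := by
  have h1 := (summable_dig hz).hasSum.tendsto_sum_nat
  have h2 : Filter.Tendsto (fun n => ∑ j ∈ Finset.range n, (dig z j : ℝ) * (1/10)^j)
      Filter.atTop (nhds z) := by
    have hzn : Filter.Tendsto (fun n : ℕ => Z z n * (1/10:ℝ)^n) Filter.atTop (nhds 0) := by
      apply squeeze_zero (fun n => mul_nonneg (Z_mem hz n).1 (by positivity))
        (fun n => mul_le_mul_of_nonneg_right (Z_mem hz n).2 (by positivity))
      have := (tendsto_pow_atTop_nhds_zero_of_lt_one (by norm_num : (0:ℝ) ≤ 1/10)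
        (by norm_num)).const_mul (10:ℝ)
      simpa using this
    have h3 := hzn.const_sub z
    simp only [sub_zero] at h3
    refine h3.congr fun n => (partial_sum_eq n).symm
  exact tendsto_nhds_unique h1 h2

def digitSet : ℕ → Finset (Fin 5)
  | 0 => {4}
  | 1 => {3}
  | 2 => {2}
  | 3 => {1}
  | 4 => {0}
  | 5 => {3, 4}
  | 6 => {2, 4}
  | 7 => {1, 4}
  | 8 => {0, 4}
  | _ => {0, 3}

lemma digitSet_sum (e : ℕ) (he : e ≤ 9) :
    ∑ r ∈ digitSet e, K r = (e : ℝ) + 4 := by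
  interval_cases e <;> simp [digitSet, K] <;> norm_num

lemma interval_sub (y : ℝ) (hy : y ∈ Icc (40/9 : ℝ) (130/9)) : y ∈ achievementSet x := by
  classical
  set z := y - 40/9 with hzdef
  have hz : z ∈ Icc (0:ℝ) 10 := ⟨by simp only [hzdef]; linarith [hy.1], by simp only [hzdef]; linarith [hy.2]⟩
  refine ⟨{n | (⟨n % 5, Nat.mod_lt _ (by norm_num)⟩ : Fin 5) ∈ digitSet (dig z (n / 5)).toNat}, ?_⟩
  rw [master]
  have he9 : ∀ j, (dig z j).toNat ≤ 9 := by
    intro j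
    have := dig_le (z := z) j
    omega
  have hcast : ∀ j, (((dig z j).toNat : ℕ) : ℝ) = ((dig z j : ℤ) : ℝ) := by
    intro j
    exact_mod_cast congrArg (Int.cast : ℤ → ℝ) (Int.toNat_of_nonneg (dig_nonneg hz j))
  have hsAv : ∀ j, sA {n | (⟨n % 5, Nat.mod_lt _ (by norm_num)⟩ : Fin 5)
        ∈ digitSet (dig z (n / 5)).toNat} j = ((dig z j : ℤ) : ℝ) + 4 := by
    intro j
    rw [sA]
    have hmem : ∀ r : Fin 5, ((j * 5 + (r:ℕ))
        ∈ {n | (⟨n % 5, Nat.mod_lt _ (by norm_num)⟩ : Fin 5) ∈ digitSet (dig z (n / 5)).toNat})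
        ↔ r ∈ digitSet (dig z j).toNat := by
      intro r
      have hr5 := r.is_lt
      have h1 : (j * 5 + (r:ℕ)) / 5 = j := by omega
      have h2 : (⟨(j * 5 + (r:ℕ)) % 5, Nat.mod_lt _ (by norm_num)⟩ : Fin 5) = r :=
        Fin.ext (by show (j * 5 + (r:ℕ)) % 5 = (r:ℕ); omega)
      rw [mem_setOf_eq, h1, h2]
    have hterm : ∀ r : Fin 5, Set.indicator
        {n | (⟨n % 5, Nat.mod_lt _ (by norm_num)⟩ : Fin 5) ∈ digitSet (dig z (n / 5)).toNat}
        (fun _ => K r) (j * 5 + (r:ℕ))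
        = if r ∈ digitSet (dig z j).toNat then K r else 0 := by
      intro r
      rw [Set.indicator_apply]
      exact if_congr (hmem r) rfl rfl
    rw [Finset.sum_congr rfl fun r _ => hterm r, Finset.sum_ite_mem, Finset.univ_inter,
      digitSet_sum _ (he9 j), hcast j]
  have hfeq : ∀ j, sA {n | (⟨n % 5, Nat.mod_lt _ (by norm_num)⟩ : Fin 5)
        ∈ digitSet (dig z (n / 5)).toNat} j * (1/10:ℝ)^j
      = (dig z j : ℝ) * (1/10)^j + 4 * (1/10:ℝ)^j := by
    intro j
    rw [hsAv j]
    ring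
  rw [tsum_congr hfeq, Summable.tsum_add (summable_dig hz) (summable_q.mul_left 4),
    tsum_dig hz, tsum_mul_left, tsum_geometric_of_lt_one (by norm_num) (by norm_num)]
  simp only [hzdef]
  norm_num

theorem part1 : (interior (achievementSet x)).Nonempty := by
  have hsub : Ioo (40/9 : ℝ) (130/9) ⊆ interior (achievementSet x) :=
    interior_maximal (fun y hy => interval_sub y ⟨le_of_lt hy.1, le_of_lt hy.2⟩) isOpen_Ioo
  exact ⟨5, hsub (by norm_num)⟩

end Stmt14Aux

theorem stmt14 :
    (interior (achievementSet (mgSeq 4 ![8, 7, 6, 5, 4] (1 / 10)))).Nonempty ∧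
    ¬ IsFinUnionClosedIntervals (achievementSet (mgSeq 4 ![8, 7, 6, 5, 4] (1 / 10))) := by
  exact ⟨Stmt14Aux.part1, Stmt14Aux.part2⟩
end

section
/- For q = 2/27 and the sequence b_q = (7,6,5,4,3; q) (the Ferens sequence, rescaled), the achievement set E(b_q) has nonempty interior but is not a finite union of closed intervals. -/
open Set

namespace Stmt15

noncomputable def q : ℝ := 2 / 27
noncomputable def kk : Fin 5 → ℝ := ![7, 6, 5, 4, 3]
noncomputable def xx : ℕ → ℝ := mgSeq 4 kk q

lemma hq0 : (0:ℝ) < q := by norm_num [q]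
lemma hq1 : q < 1 := by norm_num [q]

lemma kk_bounds : ∀ i : Fin 5, 3 ≤ kk i ∧ kk i ≤ 7 := by
  intro i; fin_cases i <;> norm_num [kk]

lemma kk_nonneg (i : Fin 5) : 0 ≤ kk i := le_trans (by norm_num) (kk_bounds i).1

lemma xx_eq (n : ℕ) : xx n = kk ⟨n % 5, by omega⟩ * q ^ (n / 5) := rfl

lemma xx_nonneg (n : ℕ) : 0 ≤ xx n :=
  mul_nonneg (kk_nonneg _) (pow_nonneg hq0.le _)

/-- The set of naturals whose block-digit lies in a prescribed finset. -/
def AS (s : ℕ → Finset (Fin 5)) : Set ℕ :=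
  {n | (⟨n % 5, by omega⟩ : Fin 5) ∈ s (n / 5)}

lemma block_hasSum (s : ℕ → Finset (Fin 5)) {c : ℝ}
    (h : HasSum (fun j => (∑ i ∈ s j, kk i) * q ^ j) c) :
    HasSum ((AS s).indicator xx) c := by
  set f : ℕ × Fin 5 → ℝ := fun p => if p.2 ∈ s p.1 then kk p.2 * q ^ p.1 else 0 with hf
  have hslice : ∀ j, HasSum (fun i : Fin 5 => f (j, i)) ((∑ i ∈ s j, kk i) * q ^ j) := by
    intro j
    have : (∑ i : Fin 5, f (j, i)) = (∑ i ∈ s j, kk i) * q ^ j := by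
      rw [Finset.sum_mul, hf]
      simp [Finset.sum_ite_mem]
    exact this ▸ hasSum_fintype _
  have hfnn : 0 ≤ f := by
    intro p; by_cases hp : p.2 ∈ s p.1 <;>
      simp [hf, hp, mul_nonneg (kk_nonneg _) (pow_nonneg hq0.le _)]
  have hsum : Summable f := by
    rw [summable_prod_of_nonneg hfnn]
    constructor
    · intro j; exact (hslice j).summable
    · have : (fun j => ∑' i : Fin 5, f (j, i)) = fun j => (∑ i ∈ s j, kk i) * q ^ j := by
        funext j; exact (hslice j).tsum_eq
      rw [this]; exact h.summable
  have h2 : HasSum (fun j => (∑ i ∈ s j, kk i) * q ^ j) (∑' p, f p) :=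
    hsum.hasSum.prod_fiberwise hslice
  have hc : (∑' p, f p) = c := h2.unique h
  have hfc : HasSum f c := hc ▸ hsum.hasSum
  have := ((Nat.divModEquiv 5).hasSum_iff (f := f) (a := c)).2 hfc
  classical
  have heq : f ∘ (Nat.divModEquiv 5) = (AS s).indicator xx := by
    funext n
    have hv : (Fin.ofNat 5 n) = (⟨n % 5, by omega⟩ : Fin 5) := by
      apply Fin.ext; rfl
    simp only [Function.comp, Nat.divModEquiv, Equiv.coe_fn_mk, hf, hv]
    rw [Set.indicator_apply]
    simp only [AS, Set.mem_setOf_eq, xx_eq]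
  rwa [heq] at this

lemma geo : HasSum (fun j : ℕ => q ^ j) (27 / 25) := by
  have h := hasSum_geometric_of_lt_one hq0.le hq1
  have he : (1 - q)⁻¹ = 27 / 25 := by norm_num [q]
  rwa [he] at h

lemma kk_total : (∑ i : Fin 5, kk i) = 25 := by
  simp [kk, Fin.sum_univ_five]; norm_num

lemma hasSum_xx : HasSum xx 27 := by
  have h := block_hasSum (fun _ => Finset.univ) (c := 27) ?_
  · have : (AS fun _ => Finset.univ).indicator xx = xx := by
      funext n; rw [Set.indicator_of_mem]; simp [AS]
    rwa [this] at h
  · have := geo.mul_left 25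
    have he : (25:ℝ) * (27/25) = 27 := by norm_num
    rw [he] at this
    simpa only [kk_total] using this

lemma summable_xx : Summable xx := hasSum_xx.summable

lemma tail_hasSum (m : ℕ) : HasSum ({n : ℕ | 5 * m ≤ n}.indicator xx) (27 * q ^ m) := by
  have h := block_hasSum (fun j => if m ≤ j then Finset.univ else ∅) (c := 27 * q ^ m) ?_
  · have : AS (fun j => if m ≤ j then Finset.univ else ∅) = {n : ℕ | 5 * m ≤ n} := by
      ext n
      simp only [AS, Set.mem_setOf_eq]
      by_cases hm : m ≤ n / 5
      · simp [hm]; omega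
      · simp [hm]; omega
    rwa [this] at h
  · set g : ℕ → ℝ := fun j => (∑ i ∈ (if m ≤ j then (Finset.univ : Finset (Fin 5)) else ∅), kk i) * q ^ j with hg
    have hshift : ∀ n, g (n + m) = (25 * q ^ m) * q ^ n := by
      intro n
      simp only [hg, if_pos (Nat.le_add_left m n), kk_total, pow_add]
      ring
    have h1 : HasSum (fun n => g (n + m)) (25 * q ^ m * (27/25)) := by
      have := geo.mul_left (25 * q ^ m)
      simpa [hshift] using this
    rw [hasSum_nat_add_iff m] at h1
    have hz : ∑ i ∈ Finset.range m, g i = 0 := by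
      apply Finset.sum_eq_zero
      intro i hi
      have : ¬ m ≤ i := by simp at hi; omega
      simp [hg, this]
    rw [hz, add_zero] at h1
    rw [show (27:ℝ) * q ^ m = 25 * q ^ m * (27/25) by ring]
    exact h1

lemma mem_zero : (0:ℝ) ∈ achievementSet xx := ⟨∅, by simp⟩

lemma mem_3q (j : ℕ) : 3 * q ^ j ∈ achievementSet xx := by
  refine ⟨{5 * j + 4}, ?_⟩
  have : ∀ n, ({5*j+4} : Set ℕ).indicator xx n = if n = 5*j+4 then xx (5*j+4) else 0 := by
    intro n
    by_cases hn : n = 5*j+4 <;> simp [Set.indicator, hn]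
  rw [tsum_congr this, tsum_ite_eq]
  rw [xx_eq]
  have h1 : (5*j+4) % 5 = 4 := by omega
  have h2 : (5*j+4) / 5 = j := by omega
  have h4 : (⟨(5*j+4) % 5, by omega⟩ : Fin 5) = ⟨4, by norm_num⟩ := by
    apply Fin.ext; simp [h1]
  rw [h4, h2]
  have : kk ⟨4, by norm_num⟩ = 3 := rfl
  rw [this]

lemma gap (j : ℕ) {y : ℝ} (hy : y ∈ achievementSet xx) :
    y ≤ 2 * q ^ j ∨ 3 * q ^ j ≤ y := by
  obtain ⟨A, hA⟩ := hy
  have hsA : Summable (A.indicator xx) := summable_xx.indicator A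
  by_cases hex : ∃ n ∈ A, n < 5 * (j + 1)
  · right
    obtain ⟨n, hnA, hn⟩ := hex
    have h1 : A.indicator xx n ≤ y := by
      rw [hA]
      exact Summable.le_tsum hsA n (fun m _ => Set.indicator_nonneg (fun i _ => xx_nonneg i) m)
    rw [Set.indicator_of_mem hnA, xx_eq] at h1
    have hd : n / 5 ≤ j := by omega
    have hp : q ^ j ≤ q ^ (n / 5) := pow_le_pow_of_le_one hq0.le hq1.le hd
    have h3 : 3 * q ^ j ≤ kk ⟨n % 5, by omega⟩ * q ^ (n / 5) := by
      have := (kk_bounds ⟨n % 5, by omega⟩).1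
      have hqj : (0:ℝ) ≤ q ^ j := pow_nonneg hq0.le _
      nlinarith [pow_nonneg hq0.le (n / 5)]
    linarith
  · left
    push_neg at hex
    have hsub : A ⊆ {n : ℕ | 5 * (j+1) ≤ n} := fun n hn => by
      have := hex n hn; simp only [Set.mem_setOf_eq]; omega
    have hle : ∀ n, A.indicator xx n ≤ {n : ℕ | 5 * (j+1) ≤ n}.indicator xx n :=
      fun n => Set.indicator_le_indicator_of_subset hsub xx_nonneg n
    calc y = ∑' n, A.indicator xx n := hA
    _ ≤ ∑' n, ({n : ℕ | 5 * (j+1) ≤ n}.indicator xx) n :=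
        Summable.tsum_le_tsum hle hsA (tail_hasSum (j+1)).summable
    _ = 27 * q ^ (j+1) := (tail_hasSum (j+1)).tsum_eq
    _ = 2 * q ^ j := by rw [pow_succ, show (q:ℝ) = 2/27 from rfl]; ring

/-- remainders of the greedy digit algorithm -/
noncomputable def digR (y : ℝ) : ℕ → ℝ
  | 0 => y
  | j + 1 => digR y j - (min 19 ⌊digR y j / q ^ j⌋₊ : ℕ) * q ^ j

noncomputable def dig (y : ℝ) (j : ℕ) : ℕ := min 19 ⌊digR y j / q ^ j⌋₊

lemma dig_le (y : ℝ) (j : ℕ) : dig y j ≤ 19 := min_le_left _ _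

lemma digR_bounds {y : ℝ} (hy : y ∈ Icc (0:ℝ) (513/25)) :
    ∀ j, 0 ≤ digR y j ∧ digR y j ≤ 513/25 * q ^ j := by
  intro j
  induction j with
  | zero => simpa [digR] using hy
  | succ j ih =>
    obtain ⟨h0, h1⟩ := ih
    have hqj : (0:ℝ) < q ^ j := pow_pos hq0 j
    rcases le_or_gt 19 ⌊digR y j / q ^ j⌋₊ with hc | hc
    · have hmin : min 19 ⌊digR y j / q ^ j⌋₊ = 19 := min_eq_left hc
      have h19 : (19:ℝ) ≤ digR y j / q ^ j := by
        have := (Nat.le_floor_iff (by positivity)).1 hc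
        exact_mod_cast this
      have h19' : 19 * q ^ j ≤ digR y j := by
        have := (le_div_iff₀ hqj).1 h19; linarith
      constructor
      · simp only [digR, hmin]; push_cast; linarith
      · simp only [digR, hmin]; push_cast
        have : (513/25 : ℝ) * q ^ (j+1) = 38/25 * q ^ j := by
          rw [pow_succ, show (q:ℝ) = 2/27 from rfl]; ring
        rw [this]; linarith
    · have hmin : min 19 ⌊digR y j / q ^ j⌋₊ = ⌊digR y j / q ^ j⌋₊ := min_eq_right hc.le
      have hfl : (⌊digR y j / q ^ j⌋₊ : ℝ) ≤ digR y j / q ^ j := Nat.floor_le (by positivity)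
      have hfu : digR y j / q ^ j < ⌊digR y j / q ^ j⌋₊ + 1 := Nat.lt_floor_add_one _
      have hl : (⌊digR y j / q ^ j⌋₊ : ℝ) * q ^ j ≤ digR y j := by
        rw [← le_div_iff₀ hqj]; exact hfl
      have hu : digR y j - (⌊digR y j / q ^ j⌋₊ : ℝ) * q ^ j < q ^ j := by
        have := (div_lt_iff₀ hqj).1 hfu
        nlinarith
      constructor
      · simp only [digR, hmin]; linarith
      · simp only [digR, hmin]
        have h2q : (513/25 : ℝ) * q ^ (j+1) = 38/25 * q ^ j := by
          rw [pow_succ, show (q:ℝ) = 2/27 from rfl]; ring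
        rw [h2q]; linarith

lemma digR_partial (y : ℝ) :
    ∀ n, ∑ j ∈ Finset.range n, (dig y j : ℝ) * q ^ j = y - digR y n := by
  intro n
  induction n with
  | zero => simp [digR]
  | succ n ih =>
    rw [Finset.sum_range_succ, ih]
    simp only [digR, dig]
    push_cast
    ring

lemma dig_hasSum {y : ℝ} (hy : y ∈ Icc (0:ℝ) (513/25)) :
    HasSum (fun j => (dig y j : ℝ) * q ^ j) y := by
  have hsum : Summable (fun j => (dig y j : ℝ) * q ^ j) := by
    refine Summable.of_nonneg_of_le (f := fun j : ℕ => (19:ℝ) * q ^ j)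
      (fun j => mul_nonneg (Nat.cast_nonneg _) (pow_nonneg hq0.le j)) (fun j => ?_)
      ((summable_geometric_of_lt_one hq0.le hq1).mul_left 19)
    have h19 : (dig y j : ℝ) ≤ 19 := by exact_mod_cast dig_le y j
    exact mul_le_mul_of_nonneg_right h19 (pow_nonneg hq0.le j)
  have htend : Filter.Tendsto (fun n => ∑ j ∈ Finset.range n, (dig y j : ℝ) * q ^ j)
      Filter.atTop (nhds y) := by
    simp only [digR_partial y]
    have h0 : Filter.Tendsto (fun n => digR y n) Filter.atTop (nhds 0) := by
      apply squeeze_zero (fun n => (digR_bounds hy n).1) (fun n => (digR_bounds hy n).2)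
      have := (tendsto_pow_atTop_nhds_zero_of_lt_one hq0.le hq1).const_mul (513/25 : ℝ)
      simpa using this
    have := Filter.Tendsto.const_sub y h0
    simpa using this
  have := hsum.hasSum.tendsto_sum_nat
  have heq : (∑' j, (dig y j : ℝ) * q ^ j) = y := tendsto_nhds_unique this htend
  have hres := hsum.hasSum
  rwa [heq] at hres

def w : Fin 5 → ℕ := ![7, 6, 5, 4, 3]

lemma rep_nat : ∀ c : ℕ, c < 23 → 3 ≤ c → ∃ s : Finset (Fin 5), (∑ i ∈ s, w i) = c := by
  decide

lemma kk_cast (i : Fin 5) : kk i = (w i : ℝ) := by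
  fin_cases i <;> norm_num [kk, w]

lemma rep (c : ℕ) (h3 : 3 ≤ c) (h22 : c ≤ 22) :
    ∃ s : Finset (Fin 5), (∑ i ∈ s, kk i) = (c : ℝ) := by
  obtain ⟨s, hs⟩ := rep_nat c (by omega) h3
  exact ⟨s, by rw [funext kk_cast]; beta_reduce; exact_mod_cast congrArg (Nat.cast (R := ℝ)) hs⟩

lemma interval_subset : Icc (81/25 : ℝ) (594/25) ⊆ achievementSet xx := by
  intro t ht
  set y := t - 81/25 with hy_def
  have hy : y ∈ Icc (0:ℝ) (513/25) := by
    constructor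
    · simp only [hy_def]; linarith [ht.1]
    · simp only [hy_def]; linarith [ht.2]
  have hd := dig_hasSum hy
  choose s hs using fun j => rep (dig y j + 3) (by omega) (by have := dig_le y j; omega)
  have h3 : HasSum (fun j : ℕ => 3 * q ^ j) (81/25) := by
    have := geo.mul_left 3
    have he : (3:ℝ) * (27/25) = 81/25 := by norm_num
    rwa [he] at this
  have hadd := hd.add h3
  have hyt : y + 81/25 = t := by simp [hy_def]
  rw [hyt] at hadd
  have hsum : HasSum (fun j => (∑ i ∈ s j, kk i) * q ^ j) t := by
    have heq : (fun j => (∑ i ∈ s j, kk i) * q ^ j)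
        = fun j => (dig y j : ℝ) * q ^ j + 3 * q ^ j := by
      funext j
      rw [hs j]
      push_cast
      ring
    rw [heq]; exact hadd
  exact ⟨AS s, ((block_hasSum s hsum).tsum_eq).symm⟩

lemma pow_inj : Function.Injective (fun j : ℕ => q ^ j) :=
  (pow_right_strictAnti₀ hq0 hq1).injective

theorem main :
    (interior (achievementSet (mgSeq 4 ![7, 6, 5, 4, 3] (2 / 27)))).Nonempty ∧
    ¬ IsFinUnionClosedIntervals (achievementSet (mgSeq 4 ![7, 6, 5, 4, 3] (2 / 27))) := by
  have hxx : mgSeq 4 ![7, 6, 5, 4, 3] (2 / 27) = xx := rfl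
  rw [hxx]
  constructor
  · refine ⟨4, ?_⟩
    have h1 : interior (Icc (81/25 : ℝ) (594/25)) ⊆ interior (achievementSet xx) :=
      interior_mono interval_subset
    rw [interior_Icc] at h1
    exact h1 (by norm_num)
  · rintro ⟨n, a, b, hE⟩
    have hchoice : ∀ j : ℕ, ∃ i : Fin n, 3 * q ^ j ∈ Icc (a i) (b i) := by
      intro j
      have := mem_3q j
      rw [hE] at this
      exact mem_iUnion.1 this
    choose I hI using hchoice
    have hIa : ∀ j, a (I j) = 3 * q ^ j := by
      intro j
      rcases eq_or_lt_of_le (hI j).1 with h | h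
      · exact h
      · exfalso
        set t := max (a (I j)) (2 * q ^ j) with ht_def
        have hqj : (0:ℝ) < q ^ j := pow_pos hq0 j
        have htlt : t < 3 * q ^ j := by
          apply max_lt h
          nlinarith
        set t' := (t + 3 * q ^ j) / 2 with ht'_def
        have h1 : t < t' := by simp only [ht'_def]; linarith
        have h2 : t' < 3 * q ^ j := by simp only [ht'_def]; linarith
        have ht'E : t' ∈ achievementSet xx := by
          rw [hE]
          apply mem_iUnion.2 ⟨I j, ?_⟩
          constructor
          · have : a (I j) ≤ t := le_max_left _ _
            linarith
          · linarith [(hI j).2, h2]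
        have := gap j ht'E
        have h2q : 2 * q ^ j ≤ t := le_max_right _ _
        rcases this with h | h <;> linarith
    obtain ⟨j₁, j₂, hne, heq⟩ := Finite.exists_ne_map_eq_of_infinite I
    apply hne
    have : 3 * q ^ j₁ = 3 * q ^ j₂ := by rw [← hIa j₁, ← hIa j₂, heq]
    have : q ^ j₁ = q ^ j₂ := by linarith
    exact pow_inj this

end Stmt15

theorem stmt15 :
    (interior (achievementSet (mgSeq 4 ![7, 6, 5, 4, 3] (2 / 27)))).Nonempty ∧
    ¬ IsFinUnionClosedIntervals (achievementSet (mgSeq 4 ![7, 6, 5, 4, 3] (2 / 27))) :=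
  Stmt15.main
end

section
/- Let 1/6 ≤ q < 2/11. Then the achievement set of the multigeometric sequence (3,2,2,2; q) has nonempty interior and is not a finite union of closed intervals (hence is a Cantorval). -/
open Set

namespace Stmt16Aux

lemma mg_apply (q : ℝ) (j : ℕ) (r : Fin 4) :
    mgSeq 3 ![3,2,2,2] q (j * 4 + (r : ℕ)) = (![3,2,2,2] : Fin 4 → ℝ) r * q ^ j := by
  have hr := r.is_lt
  have h1 : (j * 4 + (r : ℕ)) % (3 + 1) = (r : ℕ) := by omega
  have h2 : (j * 4 + (r : ℕ)) / (3 + 1) = j := by omega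
  simp only [mgSeq, h1, h2, Fin.eta]

lemma kk_bounds (r : Fin 4) : 0 ≤ (![3,2,2,2] : Fin 4 → ℝ) r ∧ (![3,2,2,2] : Fin 4 → ℝ) r ≤ 9 := by
  fin_cases r <;> norm_num

lemma mg_nonneg {q : ℝ} (hq : 0 ≤ q) (n : ℕ) : 0 ≤ mgSeq 3 ![3,2,2,2] q n :=
  mul_nonneg (kk_bounds _).1 (pow_nonneg hq _)

lemma mg_le {q : ℝ} (hq : 0 ≤ q) (n : ℕ) : mgSeq 3 ![3,2,2,2] q n ≤ 9 * q ^ (n / 4) :=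
  mul_le_mul_of_nonneg_right (kk_bounds _).2 (pow_nonneg hq _)

lemma summable_bound {q : ℝ} (hq : 0 ≤ q) (hq1 : q < 1) :
    Summable (fun n : ℕ => (9 : ℝ) * q ^ (n / 4)) := by
  rw [← (Nat.divModEquiv 4).symm.summable_iff]
  have : (fun n : ℕ => (9 : ℝ) * q ^ (n / 4)) ∘ (Nat.divModEquiv 4).symm
      = fun p : ℕ × Fin 4 => (9 : ℝ) * q ^ p.1 := by
    funext p
    have h := p.2.is_lt
    simp only [Function.comp_apply, Nat.divModEquiv_symm_apply]
    congr 2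
    omega
  rw [this]
  apply (summable_prod_of_nonneg ?_).mpr
  · constructor
    · intro j; exact Summable.of_finite
    · apply ((summable_geometric_of_lt_one hq hq1).mul_left 36).congr
      intro j
      rw [tsum_fintype]
      simp [Finset.sum_const]
      ring
  · intro p; positivity

lemma mg_summable {q : ℝ} (hq : 0 ≤ q) (hq1 : q < 1) : Summable (mgSeq 3 ![3,2,2,2] q) :=
  Summable.of_nonneg_of_le (mg_nonneg hq) (mg_le hq) (summable_bound hq hq1)

/-- the digit of A at level j -/
noncomputable def dg (A : Set ℕ) (j : ℕ) : ℝ :=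
  ∑ r : Fin 4, A.indicator (fun _ => (![3,2,2,2] : Fin 4 → ℝ) r) (j * 4 + (r : ℕ))

set_option maxHeartbeats 1000000 in
lemma tsum_eq_digits {q : ℝ} (hq : 0 ≤ q) (hq1 : q < 1) (A : Set ℕ) :
    ∑' n, A.indicator (mgSeq 3 ![3,2,2,2] q) n = ∑' j, dg A j * q ^ j := by
  have hs : Summable (A.indicator (mgSeq 3 ![3,2,2,2] q)) :=
    (mg_summable hq hq1).indicator A
  rw [← (Nat.divModEquiv 4).symm.tsum_eq]
  have key : ∀ p : ℕ × Fin 4, A.indicator (mgSeq 3 ![3,2,2,2] q) ((Nat.divModEquiv 4).symm p)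
      = A.indicator (fun _ => (![3,2,2,2] : Fin 4 → ℝ) p.2) (p.1 * 4 + (p.2 : ℕ)) * q ^ p.1 := by
    intro p
    simp only [Nat.divModEquiv_symm_apply]
    by_cases h : p.1 * 4 + (p.2 : ℕ) ∈ A
    · rw [Set.indicator_of_mem h, Set.indicator_of_mem h, mg_apply]
    · rw [Set.indicator_of_notMem h, Set.indicator_of_notMem h, zero_mul]
  have hsum2 : Summable (fun p : ℕ × Fin 4 =>
      A.indicator (mgSeq 3 ![3,2,2,2] q) ((Nat.divModEquiv 4).symm p)) :=
    ((Nat.divModEquiv 4).symm.summable_iff).mpr hs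
  rw [show (∑' (c : ℕ × Fin 4), A.indicator (mgSeq 3 ![3,2,2,2] q) ((Nat.divModEquiv 4).symm c))
      = ∑' (j : ℕ) (r : Fin 4), A.indicator (mgSeq 3 ![3,2,2,2] q)
          ((Nat.divModEquiv 4).symm (j, r)) from
    Summable.tsum_prod' hsum2 (fun b => Summable.of_finite)]
  congr 1
  funext j
  rw [tsum_fintype]
  rw [dg, Finset.sum_mul]
  exact Finset.sum_congr rfl fun r _ => key (j, r)

lemma dg_cases (A : Set ℕ) (j : ℕ) :
    0 ≤ dg A j ∧ dg A j ≤ 9 ∧ (dg A j ≤ 7 ∨ dg A j = 9) := by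
  classical
  rw [dg, Fin.sum_univ_four]
  simp only [Set.indicator_apply]
  simp only [show ((0:Fin 4):ℕ) = 0 from rfl, show ((1:Fin 4):ℕ) = 1 from rfl,
    show ((2:Fin 4):ℕ) = 2 from rfl, show ((3:Fin 4):ℕ) = 3 from rfl, add_zero]
  by_cases h0 : j * 4 ∈ A <;>
  by_cases h1 : j * 4 + 1 ∈ A <;>
  by_cases h2 : j * 4 + 2 ∈ A <;>
  by_cases h3 : j * 4 + 3 ∈ A <;>
  simp only [h0, h1, h2, h3, if_true, if_false] <;> norm_num [show (![3,2,2,2] : Fin 4 → ℝ) 2 = 2 from rfl, show (![3,2,2,2] : Fin 4 → ℝ) 3 = 2 from rfl]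

lemma dg_summable {q : ℝ} (hq : 0 ≤ q) (hq1 : q < 1) (A : Set ℕ) :
    Summable (fun j => dg A j * q ^ j) := by
  apply Summable.of_nonneg_of_le
    (fun j => mul_nonneg (dg_cases A j).1 (pow_nonneg hq _))
    (fun j => mul_le_mul_of_nonneg_right (dg_cases A j).2.1 (pow_nonneg hq _))
  exact (summable_geometric_of_lt_one hq hq1).mul_left 9

/-! ### Greedy expansion -/

noncomputable def gX (q : ℝ) (y : ℝ) : ℕ → ℝ
  | 0 => y
  | j + 1 => (gX q y j - ↑(min 5 (⌊gX q y j⌋.toNat))) / q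

noncomputable def gE (q : ℝ) (y : ℝ) (j : ℕ) : ℕ := min 5 (⌊gX q y j⌋.toNat)

lemma gE_le (q y : ℝ) (j : ℕ) : gE q y j ≤ 5 := min_le_left _ _

lemma gX_invariant {q : ℝ} (hq1 : 1/6 ≤ q) (hq2 : q < 1) {y : ℝ} (hy0 : 0 ≤ y)
    (hy1 : y ≤ 5 / (1 - q)) : ∀ j, 0 ≤ gX q y j ∧ gX q y j ≤ 5 / (1 - q) := by
  have hq0 : 0 < q := lt_of_lt_of_le (by norm_num) hq1
  have h1q : 0 < 1 - q := by linarith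
  intro j
  induction j with
  | zero => exact ⟨hy0, hy1⟩
  | succ j ih =>
    obtain ⟨h0, h1⟩ := ih
    have key : 0 ≤ gX q y j - ↑(gE q y j) ∧ gX q y j - ↑(gE q y j) ≤ 5 * q / (1 - q) := by
      by_cases h5 : (5 : ℤ) ≤ ⌊gX q y j⌋
      · have hE : gE q y j = 5 := by
          rw [gE]
          have : (5 : ℕ) ≤ ⌊gX q y j⌋.toNat := by omega
          omega
        have hx5 : (5 : ℝ) ≤ gX q y j := by
          have := Int.le_floor.mp h5
          simpa using this
        constructor
        · rw [hE]; push_cast; linarith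
        · rw [hE]; push_cast
          have h1' := (le_div_iff₀ h1q).mp h1
          rw [le_div_iff₀ h1q]
          nlinarith
      · push_neg at h5
        have hfl0 : (0 : ℤ) ≤ ⌊gX q y j⌋ := Int.floor_nonneg.mpr h0
        have hE : (gE q y j : ℝ) = (⌊gX q y j⌋ : ℝ) := by
          rw [gE]
          have h' : min 5 (⌊gX q y j⌋.toNat) = ⌊gX q y j⌋.toNat := by omega
          rw [h']
          exact_mod_cast Int.toNat_of_nonneg hfl0
        constructor
        · rw [hE]; linarith [Int.floor_le (gX q y j)]
        · rw [hE]
          have hlt : gX q y j - (⌊gX q y j⌋ : ℝ) < 1 := by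
            linarith [Int.sub_one_lt_floor (gX q y j)]
          have h15 : (1:ℝ) ≤ 5 * q / (1 - q) := by
            rw [le_div_iff₀ h1q]; linarith
          linarith
    have hgx : gX q y (j+1) = (gX q y j - ↑(gE q y j)) / q := rfl
    constructor
    · rw [hgx]; exact div_nonneg key.1 hq0.le
    · rw [hgx, div_le_iff₀ hq0]
      calc gX q y j - ↑(gE q y j) ≤ 5 * q / (1-q) := key.2
        _ = 5 / (1 - q) * q := by ring

lemma gX_telescope {q : ℝ} (hq0 : 0 < q) {y : ℝ} :
    ∀ n, y = (∑ j ∈ Finset.range n, (gE q y j : ℝ) * q ^ j) + q ^ n * gX q y n := by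
  intro n
  induction n with
  | zero => simp [gX]
  | succ n ih =>
    rw [Finset.sum_range_succ]
    have hgx : gX q y (n+1) = (gX q y n - ↑(gE q y n)) / q := rfl
    rw [hgx]
    have h : q ^ (n+1) * ((gX q y n - ↑(gE q y n)) / q)
        = q ^ n * gX q y n - ↑(gE q y n) * q ^ n := by
      field_simp; ring
    rw [h]
    linarith [ih]

lemma greedy_hasSum {q : ℝ} (hq1 : 1/6 ≤ q) (hq2 : q < 1) {y : ℝ} (hy0 : 0 ≤ y)
    (hy1 : y ≤ 5 / (1 - q)) : HasSum (fun j => (gE q y j : ℝ) * q ^ j) y := by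
  have hq0 : 0 < q := lt_of_lt_of_le (by norm_num) hq1
  have h1q : 0 < 1 - q := by linarith
  rw [hasSum_iff_tendsto_nat_of_nonneg
    (fun i => mul_nonneg (Nat.cast_nonneg _) (pow_nonneg hq0.le _))]
  have h1 : Filter.Tendsto (fun n => q ^ n * gX q y n) Filter.atTop (nhds 0) := by
    have hb : ∀ n, q ^ n * gX q y n ≤ 5 / (1-q) * q ^ n := fun n => by
      have := (gX_invariant hq1 hq2 hy0 hy1 n).2
      nlinarith [pow_nonneg hq0.le n]
    have h0' : ∀ n, 0 ≤ q ^ n * gX q y n := fun n =>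
      mul_nonneg (pow_nonneg hq0.le _) (gX_invariant hq1 hq2 hy0 hy1 n).1
    have hlim : Filter.Tendsto (fun n : ℕ => 5 / (1-q) * q ^ n) Filter.atTop (nhds 0) := by
      simpa using (tendsto_pow_atTop_nhds_zero_of_lt_one hq0.le hq2).const_mul (5 / (1-q))
    exact squeeze_zero h0' hb hlim
  have h2 : (fun n => ∑ i ∈ Finset.range n, (gE q y i : ℝ) * q ^ i)
      = fun n => y - q ^ n * gX q y n := by
    funext n
    have := gX_telescope (q := q) hq0 (y := y) n
    linarith
  rw [h2]
  simpa using (tendsto_const_nhds (x := y)).sub h1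

/-! ### Realizing digit sequences in {2,…,7} -/

def rep : ℕ → Finset (Fin 4)
  | 2 => {1}
  | 3 => {0}
  | 4 => {1, 2}
  | 5 => {0, 1}
  | 6 => {1, 2, 3}
  | 7 => {0, 1, 2}
  | _ => ∅

lemma rep_sum (c : ℕ) (h2 : 2 ≤ c) (h7 : c ≤ 7) :
    ∑ r ∈ rep c, (![3,2,2,2] : Fin 4 → ℝ) r = c := by
  interval_cases c <;> simp [rep] <;> norm_num

def AA (c : ℕ → ℕ) : Set ℕ :=
  {n : ℕ | (⟨n % 4, Nat.mod_lt n (by norm_num)⟩ : Fin 4) ∈ rep (c (n / 4))}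

lemma dg_AA (c : ℕ → ℕ) (hc : ∀ j, 2 ≤ c j ∧ c j ≤ 7) (j : ℕ) : dg (AA c) j = c j := by
  classical
  have hmem : ∀ r : Fin 4, (j * 4 + (r:ℕ) ∈ AA c) ↔ r ∈ rep (c j) := by
    intro r
    have hr := r.is_lt
    have h1 : (j * 4 + (r:ℕ)) % 4 = (r:ℕ) := by omega
    have h2 : (j * 4 + (r:ℕ)) / 4 = j := by omega
    simp only [AA, Set.mem_setOf_eq, h1, h2, Fin.eta]
  rw [dg]
  calc ∑ r : Fin 4, (AA c).indicator (fun _ => (![3,2,2,2] : Fin 4 → ℝ) r) (j*4+(r:ℕ))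
      = ∑ r : Fin 4, if r ∈ rep (c j) then (![3,2,2,2] : Fin 4 → ℝ) r else 0 := by
        refine Finset.sum_congr rfl fun r _ => ?_
        rw [Set.indicator_apply]
        simp only [hmem r]
    _ = ∑ r ∈ rep (c j), (![3,2,2,2] : Fin 4 → ℝ) r := by
        rw [Finset.sum_ite_mem, Finset.univ_inter]
    _ = c j := rep_sum _ (hc j).1 (hc j).2

lemma interval_subset {q : ℝ} (hq1 : 1/6 ≤ q) (hq2 : q < 1) :
    Icc (2/(1-q)) (7/(1-q)) ⊆ achievementSet (mgSeq 3 ![3, 2, 2, 2] q) := by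
  intro x hx
  have hq0 : 0 < q := lt_of_lt_of_le (by norm_num) hq1
  have h1q : 0 < 1 - q := by linarith
  set y := x - 2/(1-q) with hy
  have hy0 : 0 ≤ y := by
    have := hx.1; simp only [hy]; linarith
  have hy1 : y ≤ 5 / (1 - q) := by
    have := hx.2
    have h75 : 7/(1-q) - 2/(1-q) = 5/(1-q) := by ring
    simp only [hy]; linarith
  set c : ℕ → ℕ := fun j => gE q y j + 2 with hc
  have hcb : ∀ j, 2 ≤ c j ∧ c j ≤ 7 := by
    intro j
    have := gE_le q y j
    simp only [hc]
    omega
  refine ⟨AA c, ?_⟩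
  rw [tsum_eq_digits hq0.le hq2]
  have hdg : (fun j => dg (AA c) j * q ^ j) = fun j => (c j : ℝ) * q ^ j := by
    funext j; rw [dg_AA c hcb]
  rw [hdg]
  have hs1 : HasSum (fun j => (gE q y j : ℝ) * q ^ j) y := greedy_hasSum hq1 hq2 hy0 hy1
  have hs2 : HasSum (fun j : ℕ => (2:ℝ) * q ^ j) (2 * (1-q)⁻¹) :=
    (hasSum_geometric_of_lt_one hq0.le hq2).mul_left 2
  have hs3 : HasSum (fun j => (c j : ℝ) * q ^ j) (y + 2 * (1-q)⁻¹) := by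
    have := hs1.add hs2
    apply this.congr_fun
    intro j
    simp only [hc]
    push_cast
    ring
  have hx' : y + 2 * (1-q)⁻¹ = x := by
    simp only [hy]
    field_simp
    ring
  rw [← hx']
  exact hs3.tsum_eq.symm

/-! ### Points yₘ and the gaps -/

lemma ym_mem {q : ℝ} (hq0 : 0 < q) (hq2 : q < 1) (m : ℕ) :
    (∑ j ∈ Finset.range m, (9:ℝ) * q ^ j) ∈ achievementSet (mgSeq 3 ![3, 2, 2, 2] q) := by
  classical
  refine ⟨{n | n < 4 * m}, ?_⟩
  rw [tsum_eq_digits hq0.le hq2]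
  have hdg : ∀ j, dg {n | n < 4 * m} j = if j < m then (9:ℝ) else 0 := by
    intro j
    rw [dg]
    by_cases hj : j < m
    · rw [if_pos hj]
      have : ∀ r : Fin 4, ({n | n < 4 * m}).indicator
          (fun _ => (![3,2,2,2] : Fin 4 → ℝ) r) (j * 4 + (r:ℕ)) = (![3,2,2,2] : Fin 4 → ℝ) r := by
        intro r
        have hr := r.is_lt
        exact Set.indicator_of_mem (by simp only [Set.mem_setOf_eq]; omega) _
      rw [Finset.sum_congr rfl (fun r _ => this r), Fin.sum_univ_four]
      norm_num [show (![3,2,2,2] : Fin 4 → ℝ) 2 = 2 from rfl, show (![3,2,2,2] : Fin 4 → ℝ) 3 = 2 from rfl]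
    · rw [if_neg hj]
      have : ∀ r : Fin 4, ({n | n < 4 * m}).indicator
          (fun _ => (![3,2,2,2] : Fin 4 → ℝ) r) (j * 4 + (r:ℕ)) = 0 := by
        intro r
        exact Set.indicator_of_notMem (by simp only [Set.mem_setOf_eq]; omega) _
      rw [Finset.sum_congr rfl (fun r _ => this r)]
      simp
  have h0 : ∀ j ∉ Finset.range m, dg {n | n < 4 * m} j * q ^ j = 0 := by
    intro j hj
    rw [hdg j, if_neg (by simpa using hj), zero_mul]
  rw [tsum_eq_sum h0]
  exact (Finset.sum_congr rfl fun j hj => by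
    rw [hdg j, if_pos (Finset.mem_range.mp hj)]).symm

lemma gap_lemma {q : ℝ} (hq0 : 0 < q) (hq2 : q < 1) (A : Set ℕ) (j : ℕ) :
    (∑' i, dg A i * q ^ i) ≤ 9/(1-q) - 2 * q ^ j ∨
    9 * (1 - q ^ (j+1))/(1-q) ≤ ∑' i, dg A i * q ^ i := by
  classical
  have h1q : 0 < 1 - q := by linarith
  by_cases hall : ∀ i ≤ j, dg A i = 9
  · right
    have hle : ∀ i, (if i ∈ Finset.range (j+1) then (9:ℝ) * q ^ i else 0) ≤ dg A i * q ^ i := by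
      intro i
      by_cases hi : i ∈ Finset.range (j+1)
      · rw [if_pos hi, hall i (by simpa [Nat.lt_succ_iff] using hi)]
      · rw [if_neg hi]
        exact mul_nonneg (dg_cases A i).1 (pow_nonneg hq0.le _)
    have hs : Summable (fun i => if i ∈ Finset.range (j+1) then (9:ℝ) * q ^ i else 0) :=
      summable_of_ne_finset_zero (s := Finset.range (j+1)) (fun i hi => if_neg hi)
    have := Summable.tsum_le_tsum hle hs (dg_summable hq0.le hq2 A)
    have heq : (∑' i, if i ∈ Finset.range (j+1) then (9:ℝ) * q ^ i else 0)
        = ∑ i ∈ Finset.range (j+1), (9:ℝ) * q ^ i := by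
      rw [tsum_eq_sum (fun i hi => if_neg hi)]
      exact Finset.sum_congr rfl fun i hi => if_pos hi
    have hcf : ∑ i ∈ Finset.range (j+1), (9:ℝ) * q ^ i = 9 * (1 - q ^ (j+1))/(1-q) := by
      rw [← Finset.mul_sum, geom_sum_eq (by linarith : q ≠ 1)]
      have hne : q - 1 ≠ 0 := by linarith
      have hne2 : (1:ℝ) - q ≠ 0 := by linarith
      field_simp
      ring
    rw [heq, hcf] at this
    exact this
  · left
    push_neg at hall
    obtain ⟨i₀, hi₀j, hi₀⟩ := hall
    have h7 : dg A i₀ ≤ 7 := (dg_cases A i₀).2.2.resolve_right hi₀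
    have hle : ∀ i, dg A i * q ^ i ≤ 9 * q ^ i - (if i = i₀ then 2 * q ^ i else 0) := by
      intro i
      by_cases hi : i = i₀
      · subst hi
        rw [if_pos rfl]
        have := pow_nonneg hq0.le i
        nlinarith
      · rw [if_neg hi]
        have := pow_nonneg hq0.le i
        nlinarith [(dg_cases A i).2.1]
    have hif : (fun i => if i = i₀ then (2:ℝ) * q ^ i else 0)
        = fun i => if i = i₀ then (2:ℝ) * q ^ i₀ else 0 := by
      funext i
      by_cases hi : i = i₀
      · subst hi; rfl
      · rw [if_neg hi, if_neg hi]
    have hs2 : HasSum (fun i => if i = i₀ then (2:ℝ) * q ^ i else 0) (2 * q ^ i₀) := by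
      rw [hif]
      exact hasSum_ite_eq i₀ _
    have hs1 : HasSum (fun i : ℕ => (9:ℝ) * q ^ i) (9 * (1-q)⁻¹) :=
      (hasSum_geometric_of_lt_one hq0.le hq2).mul_left 9
    have hs3 : HasSum (fun i => (9:ℝ) * q ^ i - (if i = i₀ then 2 * q ^ i else 0))
        (9 * (1-q)⁻¹ - 2 * q ^ i₀) := hs1.sub hs2
    have := Summable.tsum_le_tsum hle (dg_summable hq0.le hq2 A) hs3.summable
    rw [hs3.tsum_eq] at this
    have hqpow : q ^ j ≤ q ^ i₀ := pow_le_pow_of_le_one hq0.le (by linarith) hi₀j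
    have : (∑' i, dg A i * q ^ i) ≤ 9 * (1-q)⁻¹ - 2 * q ^ j := by linarith
    rw [div_eq_mul_inv]
    linarith

end Stmt16Aux

open Stmt16Aux in
theorem stmt16 (q : ℝ) (hq1 : 1 / 6 ≤ q) (hq2 : q < 2 / 11) :
    (interior (achievementSet (mgSeq 3 ![3, 2, 2, 2] q))).Nonempty ∧
    ¬ IsFinUnionClosedIntervals (achievementSet (mgSeq 3 ![3, 2, 2, 2] q)) := by
  have hq0 : 0 < q := lt_of_lt_of_le (by norm_num) hq1
  have hqlt1 : q < 1 := by linarith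
  have h1q : 0 < 1 - q := by linarith
  set E := achievementSet (mgSeq 3 ![3, 2, 2, 2] q) with hEdef
  have hsub : Icc (2/(1-q)) (7/(1-q)) ⊆ E := interval_subset (by linarith) hqlt1
  have hlt : 2/(1-q) < 7/(1-q) := by
    have h5 : (0:ℝ) < 5/(1-q) := by positivity
    have : 7/(1-q) - 2/(1-q) = 5/(1-q) := by ring
    linarith
  constructor
  · refine ⟨(2/(1-q) + 7/(1-q))/2, ?_⟩
    apply mem_interior.mpr
    exact ⟨Ioo (2/(1-q)) (7/(1-q)), Subset.trans Ioo_subset_Icc_self hsub, isOpen_Ioo,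
      by constructor <;> linarith⟩
  · rintro ⟨n, a, b, hE⟩
    set S : ℝ := 9/(1-q) with hSdef
    have hS0 : 0 < S := by positivity
    -- characterization of members of E as digit sums
    have hdig : ∀ x ∈ E, ∃ A : Set ℕ, x = ∑' i, dg A i * q ^ i := by
      rintro x ⟨A, hA⟩
      exact ⟨A, by rw [hA, tsum_eq_digits hq0.le hqlt1]⟩
    -- no interval of the union reaches S from the left
    have h1 : ∀ i, ¬(a i < S ∧ S ≤ b i) := by
      rintro i ⟨hai, hbi⟩
      obtain ⟨j, hj⟩ := exists_pow_lt_of_lt_one (show (0:ℝ) < (S - a i)/2 by linarith) hqlt1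
      have hqj : (0:ℝ) < q ^ j := pow_pos hq0 j
      have hgap : S - 2 * q ^ j < 9 * (1 - q ^ (j+1))/(1-q) := by
        have key : 9 * (1 - q ^ (j+1))/(1-q) - (S - 2 * q ^ j)
            = (2 - 11*q) * q ^ j / (1-q) := by
          rw [hSdef]
          field_simp
          ring
        have h211 : (0:ℝ) < 2 - 11*q := by linarith
        have hpos : (0:ℝ) < (2 - 11*q) * q ^ j / (1-q) :=
          div_pos (mul_pos h211 hqj) h1q
        linarith
      have hright : 9 * (1 - q ^ (j+1))/(1-q) ≤ S := by
        rw [hSdef]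
        gcongr
        nlinarith [pow_nonneg hq0.le (j+1)]
      set z := ((S - 2 * q ^ j) + 9 * (1 - q ^ (j+1))/(1-q))/2 with hz
      have hz1 : S - 2 * q ^ j < z := by rw [hz]; linarith
      have hz2 : z < 9 * (1 - q ^ (j+1))/(1-q) := by rw [hz]; linarith
      have hzE : z ∈ E := by
        rw [hE]
        apply mem_iUnion.mpr
        exact ⟨i, by constructor <;> [linarith; linarith]⟩
      obtain ⟨A, hA⟩ := hdig z hzE
      rcases gap_lemma hq0 hqlt1 A j with h | h <;> rw [← hA] at h <;> linarith
    -- the points yₘ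
    set y : ℕ → ℝ := fun m => ∑ i ∈ Finset.range m, (9:ℝ) * q ^ i with hy
    have hymem : ∀ m, y m ∈ E := fun m => ym_mem hq0 hqlt1 m
    have hycf : ∀ m, y m = S - S * q ^ m := by
      intro m
      rw [hy, hSdef]
      simp only
      rw [← Finset.mul_sum, geom_sum_eq (by linarith : q ≠ 1)]
      have hne : q - 1 ≠ 0 := by linarith
      have hne2 : (1:ℝ) - q ≠ 0 := by linarith
      field_simp
      ring
    have hylt : ∀ m, y m < S := by
      intro m
      rw [hycf m]
      nlinarith [pow_pos hq0 m]
    -- Fin n is nonempty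
    have h0E := hymem 0
    rw [hE] at h0E
    obtain ⟨i0, _⟩ := mem_iUnion.mp h0E
    have hne : (Finset.univ : Finset (Fin n)).Nonempty := ⟨i0, Finset.mem_univ _⟩
    set B : ℝ := Finset.univ.sup' hne (fun i => if b i < S then b i else 0) with hB
    have hBS : B < S := by
      rw [hB, Finset.sup'_lt_iff]
      intro i _
      by_cases h : b i < S
      · rw [if_pos h]; exact h
      · rw [if_neg h]; exact hS0
    obtain ⟨m, hm⟩ := exists_pow_lt_of_lt_one (show (0:ℝ) < (S - B)/S from div_pos (by linarith) hS0) hqlt1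
    have hymB : B < y m := by
      rw [hycf m]
      have : S * q ^ m < S * ((S - B)/S) := by
        apply mul_lt_mul_of_pos_left hm hS0
      have hSS : S * ((S - B)/S) = S - B := by field_simp
      linarith
    have hmE := hymem m
    rw [hE] at hmE
    obtain ⟨i, hi⟩ := mem_iUnion.mp hmE
    have hbi : b i < S := by
      by_contra h
      push_neg at h
      exact h1 i ⟨lt_of_le_of_lt hi.1 (hylt m), h⟩
    have : b i ≤ B := by
      have := Finset.le_sup' (fun i => if b i < S then b i else 0) (Finset.mem_univ i)
      rwa [if_pos hbi] at this
    linarith [hi.2]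
end

section
/- For every integer k ≥ 1, the achievement set of the multigeometric sequence x_k = (3, 2, …, 2; 1/(2k+2)) with k twos contains the interval [3,4]. -/
open Set

open Filter Finset in
/-- Any sum Σ (3δᵢ + 2aᵢ) qⁱ with aᵢ ≤ k is a subsum of the multigeometric sequence. -/
lemma stmt17_aux_mem (k : ℕ) (hk : 1 ≤ k) (δ : ℕ → Bool) (a : ℕ → ℕ) (ha : ∀ i, a i ≤ k)
    (y : ℝ)
    (hs : HasSum (fun i => ((if δ i then (3 : ℝ) else 0) + 2 * a i)
      * (1 / (2 * k + 2 : ℝ)) ^ i) y) :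
    y ∈ achievementSet (mgSeq k (fun i => if i.val = 0 then (3 : ℝ) else 2)
      (1 / (2 * k + 2 : ℝ))) := by
  classical
  set q : ℝ := 1 / (2 * k + 2 : ℝ) with hqdef
  have hq0 : 0 ≤ q := by positivity
  haveI : NeZero (k + 1) := ⟨Nat.succ_ne_zero k⟩
  set A : Set ℕ :=
    {n | if n % (k + 1) = 0 then δ (n / (k + 1)) = true else n % (k + 1) ≤ a (n / (k + 1))}
    with hA
  refine ⟨A, ?_⟩
  set f : ℕ → ℝ := A.indicator (mgSeq k (fun i => if i.val = 0 then (3 : ℝ) else 2) q) with hf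
  suffices h : HasSum f y by exact h.tsum_eq.symm
  set G : ℕ × Fin (k + 1) → ℝ := fun p =>
    (if p.2.val = 0 then (if δ p.1 then (3 : ℝ) else 0)
     else (if p.2.val ≤ a p.1 then 2 else 0)) * q ^ p.1 with hG
  have hfe : ∀ p : ℕ × Fin (k + 1), f ((Nat.divModEquiv (k + 1)).symm p) = G p := by
    rintro ⟨i, r⟩
    have hmod : (i * (k + 1) + r.val) % (k + 1) = r.val := by
      rw [Nat.add_comm, Nat.add_mul_mod_self_right, Nat.mod_eq_of_lt r.isLt]
    have hdiv : (i * (k + 1) + r.val) / (k + 1) = i := by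
      rw [Nat.add_comm, Nat.add_mul_div_right _ _ (Nat.succ_pos k), Nat.div_eq_of_lt r.isLt,
        Nat.zero_add]
    have hmg : mgSeq k (fun i => if i.val = 0 then (3 : ℝ) else 2) q (i * (k + 1) + r.val)
        = (if r.val = 0 then (3 : ℝ) else 2) * q ^ i := by
      simp only [mgSeq, hmod, hdiv]
    have hn : ((Nat.divModEquiv (k + 1)).symm (i, r) : ℕ) = i * (k + 1) + r.val := rfl
    simp only [hf]
    rw [hn, Set.indicator_apply]
    have hmem : (i * (k + 1) + r.val ∈ A)
        ↔ (if r.val = 0 then δ i = true else r.val ≤ a i) := by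
      simp only [hA, Set.mem_setOf_eq, hmod, hdiv]
    rw [hmg]
    simp only [hG]
    by_cases hr : r.val = 0
    · by_cases hδ : δ i = true
      · rw [if_pos (hmem.mpr (by simp [hr, hδ]))]; simp [hr, hδ]
      · rw [if_neg (fun h => hδ (by simpa [hr] using hmem.mp h))]; simp [hr, hδ]
    · by_cases hra : r.val ≤ a i
      · rw [if_pos (hmem.mpr (by simp [hr, hra]))]; simp [hr, hra]
      · rw [if_neg (fun h => hra (by simpa [hr] using hmem.mp h))]; simp [hr, hra]
  have hfib : ∀ i : ℕ, HasSum (fun r : Fin (k + 1) => G (i, r))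
      (((if δ i then (3 : ℝ) else 0) + 2 * a i) * q ^ i) := by
    intro i
    have hfin := hasSum_fintype (fun r : Fin (k + 1) => G (i, r))
    have h0 : G (i, (0 : Fin (k + 1))) = (if δ i then (3 : ℝ) else 0) * q ^ i := by
      simp [hG]
    have h2 : ∀ r : Fin k, G (i, r.succ) = (if r.val + 1 ≤ a i then (2 : ℝ) else 0) * q ^ i := by
      intro r; simp [hG, Fin.val_succ]
    have hcount : (∑ r ∈ Finset.range k, if r + 1 ≤ a i then (2 : ℝ) else 0)
        = 2 * a i := by
      rw [← Finset.sum_filter]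
      have hfil : (Finset.range k).filter (fun r => r + 1 ≤ a i) = Finset.range (a i) := by
        ext r
        simp only [Finset.mem_filter, Finset.mem_range]
        have := ha i; omega
      rw [hfil, Finset.sum_const, Finset.card_range, nsmul_eq_mul, mul_comm]
    have hsum : ∑ r : Fin (k + 1), G (i, r)
        = ((if δ i then (3 : ℝ) else 0) + 2 * a i) * q ^ i := by
      rw [Fin.sum_univ_succ, h0]
      have h3 : ∑ r : Fin k, G (i, r.succ)
          = (∑ r ∈ Finset.range k, if r + 1 ≤ a i then (2 : ℝ) else 0) * q ^ i := by
        rw [Finset.sum_mul]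
        rw [show (fun r : Fin k => G (i, r.succ))
            = fun r : Fin k => (if r.val + 1 ≤ a i then (2 : ℝ) else 0) * q ^ i
          from funext h2]
        exact Fin.sum_univ_eq_sum_range (fun r => (if r + 1 ≤ a i then (2 : ℝ) else 0) * q ^ i) k
      rw [h3, hcount]; ring
    rwa [hsum] at hfin
  have hGnn : 0 ≤ G := by
    intro p
    simp only [hG]
    have : (0:ℝ) ≤ q ^ p.1 := pow_nonneg hq0 _
    split_ifs <;> positivity
  have hsummable : Summable G := by
    rw [summable_prod_of_nonneg hGnn]
    refine ⟨fun i => (hfib i).summable, ?_⟩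
    have heq : (fun i => ∑' r : Fin (k + 1), G (i, r))
        = fun i => ((if δ i then (3 : ℝ) else 0) + 2 * a i) * q ^ i :=
      funext fun i => (hfib i).tsum_eq
    rw [heq]; exact hs.summable
  have htsum : ∑' p, G p = y := by
    rw [Summable.tsum_prod' hsummable (fun i => (hfib i).summable)]
    have heq : ∀ i, ∑' r : Fin (k + 1), G (i, r)
        = ((if δ i then (3 : ℝ) else 0) + 2 * a i) * q ^ i :=
      fun i => (hfib i).tsum_eq
    calc ∑' i, ∑' r : Fin (k + 1), G (i, r)
        = ∑' i, ((if δ i then (3 : ℝ) else 0) + 2 * a i) * q ^ i := tsum_congr heq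
      _ = y := hs.tsum_eq
  have hG' : HasSum G y := htsum ▸ hsummable.hasSum
  have : HasSum (f ∘ (Nat.divModEquiv (k + 1)).symm) y := by
    rwa [show f ∘ (Nat.divModEquiv (k + 1)).symm = G from funext hfe]
  exact (Equiv.hasSum_iff (Nat.divModEquiv (k + 1)).symm).mp this

open Filter Finset Topology in
/-- Base-b digit expansion of t ∈ [0,1]. -/
lemma stmt17_digits (b : ℕ) (hb : 2 ≤ b) (t : ℝ) (h0 : 0 ≤ t) (h1 : t ≤ 1) :
    ∃ ε : ℕ → ℕ, (∀ i, ε i ≤ b - 1) ∧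
      HasSum (fun i => (ε i : ℝ) * (1 / (b : ℝ)) ^ (i + 1)) t := by
  have hb0 : (0 : ℝ) < b := by
    have : (2 : ℝ) ≤ b := by exact_mod_cast hb
    linarith
  have hb1 : (1 : ℝ) < b := by
    have : (2 : ℝ) ≤ b := by exact_mod_cast hb
    linarith
  have hbne : (b : ℝ) ≠ 0 := ne_of_gt hb0
  obtain ⟨q, hqdef⟩ : ∃ q : ℝ, 1 / (b : ℝ) = q := ⟨_, rfl⟩
  rw [hqdef]
  have hq0 : 0 < q := by rw [← hqdef]; positivity
  have hq1 : q < 1 := by rw [← hqdef, div_lt_one hb0]; exact hb1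
  have hbq : (b : ℝ) * q = 1 := by rw [← hqdef]; field_simp
  rcases h1.eq_or_lt with rfl | hlt
  · -- t = 1
    refine ⟨fun _ => b - 1, fun i => le_refl _, ?_⟩
    have hg : HasSum (fun i : ℕ => q ^ i) (1 - q)⁻¹ :=
      hasSum_geometric_of_lt_one hq0.le hq1
    have hm := hg.mul_left (((b : ℝ) - 1) * q)
    have hfun : (fun i : ℕ => ((b : ℝ) - 1) * q * q ^ i)
        = fun i : ℕ => ((b - 1 : ℕ) : ℝ) * q ^ (i + 1) := by
      funext i
      have h1b : (1:ℕ) ≤ b := by omega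
      have hc : ((b - 1 : ℕ) : ℝ) = (b : ℝ) - 1 := by push_cast [h1b]; ring
      rw [hc, pow_succ]; ring
    have h1q : (1 : ℝ) - q = ((b : ℝ) - 1) * q := by
      rw [← hqdef]; field_simp
    have hval : ((b : ℝ) - 1) * q * (1 - q)⁻¹ = 1 := by
      have hne : (1 : ℝ) - q ≠ 0 := by linarith
      rw [mul_inv_eq_iff_eq_mul₀ hne, one_mul, h1q]
    rw [hfun, hval] at hm
    exact hm
  · -- t < 1
    set ε : ℕ → ℕ := fun i => (⌊t * (b : ℝ) ^ (i + 1)⌋ - b * ⌊t * (b : ℝ) ^ i⌋).toNat with hε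
    have key : ∀ x : ℝ, (b : ℤ) * ⌊x⌋ ≤ ⌊(b : ℝ) * x⌋ ∧ ⌊(b : ℝ) * x⌋ ≤ b * ⌊x⌋ + (b - 1) := by
      intro x
      constructor
      · apply Int.le_floor.mpr
        push_cast
        exact mul_le_mul_of_nonneg_left (Int.floor_le x) hb0.le
      · have h2 : ⌊(b : ℝ) * x⌋ < b * ⌊x⌋ + b := by
          apply Int.floor_lt.mpr
          push_cast
          nlinarith [Int.lt_floor_add_one x]
        omega
    have hmul : ∀ i : ℕ, (b : ℝ) * (t * (b : ℝ) ^ i) = t * (b : ℝ) ^ (i + 1) := by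
      intro i; rw [pow_succ]; ring
    have hfl : ∀ i, (ε i : ℤ) = ⌊t * (b : ℝ) ^ (i + 1)⌋ - b * ⌊t * (b : ℝ) ^ i⌋ := by
      intro i
      apply Int.toNat_of_nonneg
      have := (key (t * (b : ℝ) ^ i)).1
      rw [hmul i] at this
      omega
    have hle : ∀ i, ε i ≤ b - 1 := by
      intro i
      have h2 := (key (t * (b : ℝ) ^ i)).2
      rw [hmul i] at h2
      have h3 := hfl i
      omega
    refine ⟨ε, hle, ?_⟩
    have hfloor0 : ⌊t⌋ = 0 := by
      rw [Int.floor_eq_zero_iff]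
      exact ⟨h0, hlt⟩
    have hps : ∀ n, ∑ i ∈ Finset.range n, (ε i : ℝ) * q ^ (i + 1)
        = (⌊t * (b : ℝ) ^ n⌋ : ℝ) * q ^ n := by
      intro n
      induction n with
      | zero => simp [hfloor0]
      | succ n ih =>
        rw [Finset.sum_range_succ, ih]
        have hcast : ((ε n : ℝ)) = (⌊t * (b : ℝ) ^ (n + 1)⌋ : ℝ)
            - (b : ℝ) * (⌊t * (b : ℝ) ^ n⌋ : ℝ) := by
          have h := congrArg (fun z : ℤ => (z : ℝ)) (hfl n)
          push_cast at h
          convert h using 2 <;> ring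
        have hbqn : (b : ℝ) * q ^ (n + 1) = q ^ n := by
          rw [pow_succ, ← mul_assoc, mul_comm (b : ℝ) (q ^ n), mul_assoc, hbq, mul_one]
        rw [hcast]
        linear_combination (-(⌊t * (b : ℝ) ^ n⌋ : ℝ)) * hbqn
    rw [hasSum_iff_tendsto_nat_of_nonneg (fun i => by positivity)]
    rw [show (fun n => ∑ i ∈ Finset.range n, (ε i : ℝ) * q ^ (i + 1))
        = fun n => (⌊t * (b : ℝ) ^ n⌋ : ℝ) * q ^ n from funext hps]
    have hqb : ∀ n : ℕ, q ^ n * (b : ℝ) ^ n = 1 := by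
      intro n
      rw [← mul_pow, mul_comm, hbq, one_pow]
    apply tendsto_of_tendsto_of_tendsto_of_le_of_le
      (g := fun n : ℕ => t - q ^ n) (h := fun _ : ℕ => t)
    · have h2 : Tendsto (fun n : ℕ => t - q ^ n) atTop (𝓝 (t - 0)) :=
        Tendsto.sub tendsto_const_nhds (tendsto_pow_atTop_nhds_zero_of_lt_one hq0.le hq1)
      simpa using h2
    · exact tendsto_const_nhds
    · intro n
      have hfl1 := Int.lt_floor_add_one (t * (b : ℝ) ^ n)
      have hqn : (0 : ℝ) < q ^ n := pow_pos hq0 n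
      have hkey : t * (b : ℝ) ^ n * q ^ n = t := by
        rw [mul_assoc, mul_comm ((b : ℝ) ^ n), hqb n, mul_one]
      have := mul_lt_mul_of_pos_right hfl1 hqn
      rw [hkey] at this
      show t - q ^ n ≤ (⌊t * (b : ℝ) ^ n⌋ : ℝ) * q ^ n
      nlinarith
    · intro n
      have hfl2 := Int.floor_le (t * (b : ℝ) ^ n)
      have hqn : (0 : ℝ) < q ^ n := pow_pos hq0 n
      have hkey : t * (b : ℝ) ^ n * q ^ n = t := by
        rw [mul_assoc, mul_comm ((b : ℝ) ^ n), hqb n, mul_one]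
      have := mul_le_mul_of_nonneg_right hfl2 hqn.le
      rw [hkey] at this
      show (⌊t * (b : ℝ) ^ n⌋ : ℝ) * q ^ n ≤ t
      linarith

open Filter Finset Topology in
/-- Carry/borrow lemma: a sum 3 + Σ εᵢ qⁱ with digits εᵢ ≤ 2k+1 can be rewritten with
digits of the form 3δ + 2a, a ≤ k. -/
lemma stmt17_carry (k : ℕ) (hk : 1 ≤ k) (d : ℕ → ℕ) (hd0 : d 0 = 3)
    (hdle : ∀ i, 1 ≤ i → d i ≤ 2 * k + 1) (y : ℝ)
    (hsum : HasSum (fun i => (d i : ℝ) * (1 / (2 * k + 2 : ℝ)) ^ i) y) :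
    ∃ (δ : ℕ → Bool) (a : ℕ → ℕ), (∀ i, a i ≤ k) ∧
      HasSum (fun i => ((if δ i then (3 : ℝ) else 0) + 2 * a i)
        * (1 / (2 * k + 2 : ℝ)) ^ i) y := by
  classical
  obtain ⟨q, hqdef⟩ : ∃ q : ℝ, 1 / (2 * (k : ℝ) + 2) = q := ⟨_, rfl⟩
  rw [hqdef] at hsum ⊢
  have hkpos : (0 : ℝ) < 2 * (k : ℝ) + 2 := by positivity
  have hq0 : 0 < q := by rw [← hqdef]; positivity
  have hq1 : q < 1 := by
    rw [← hqdef, div_lt_one hkpos]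
    have : (0:ℝ) ≤ (k : ℝ) := Nat.cast_nonneg k
    linarith
  have hbq : (2 * (k : ℝ) + 2) * q = 1 := by
    rw [← hqdef]; field_simp
  -- the borrow predicate
  set Bor : ℕ → Prop := fun i =>
    if h : ∃ j, i < j ∧ 3 ≤ d j
    then Odd (((Finset.Ico (i + 1) (Nat.find h)).filter (fun m => d m = 1)).card)
    else Odd (((Finset.range (i + 1)).filter (fun m => d m = 1)).card)
    with hBor
  -- recursion: the case d (i+1) ≥ 3
  have hrec3 : ∀ i, 3 ≤ d (i + 1) → ¬ Bor i := by
    intro i h3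
    have hex : ∃ j, i < j ∧ 3 ≤ d j := ⟨i + 1, Nat.lt_succ_self i, h3⟩
    have hfind : Nat.find hex = i + 1 := by
      rw [Nat.find_eq_iff]
      exact ⟨⟨Nat.lt_succ_self i, h3⟩, fun m hm hc => by omega⟩
    simp only [hBor]
    rw [dif_pos hex, hfind]
    simp
  -- recursion: the case d (i+1) ≤ 2
  have hpar : ∀ i, d (i + 1) ≤ 2 →
      (Bor i ↔ (Xor' (d (i + 1) = 1) (Bor (i + 1)))) := by
    intro i hle2
    by_cases hex' : ∃ j, i + 1 < j ∧ 3 ≤ d j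
    · obtain ⟨j0, hj0, hj3⟩ := hex'
      have hex' : ∃ j, i + 1 < j ∧ 3 ≤ d j := ⟨j0, hj0, hj3⟩
      have hspec := Nat.find_spec hex'
      set N := Nat.find hex' with hN
      have hex : ∃ j, i < j ∧ 3 ≤ d j := ⟨N, by omega, hspec.2⟩
      have hfind : Nat.find hex = N := by
        rw [Nat.find_eq_iff]
        refine ⟨⟨by omega, hspec.2⟩, ?_⟩
        rintro m hmN ⟨him, h3m⟩
        rcases Nat.lt_or_ge (i + 1) m with hlt2 | hge
        · exact Nat.find_min hex' hmN ⟨hlt2, h3m⟩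
        · have : m = i + 1 := by omega
          subst this
          omega
      simp only [hBor]
      rw [dif_pos hex, dif_pos hex', hfind, ← hN]
      have hiN : i + 1 < N := hspec.1
      have hins : Finset.Ico (i + 1) N = insert (i + 1) (Finset.Ico (i + 2) N) :=
        (Finset.insert_Ico_add_one_left_eq_Ico hiN).symm
      rw [hins, Finset.filter_insert]
      by_cases h1 : d (i + 1) = 1
      · rw [if_pos h1, Finset.card_insert_of_notMem (by simp)]
        rw [Nat.odd_add_one]
        simp only [h1, Xor', xor_def]
        tauto
      · rw [if_neg h1]
        simp only [Xor', xor_def, h1]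
        tauto
    · have hex : ¬ ∃ j, i < j ∧ 3 ≤ d j := by
        rintro ⟨j, hij, h3⟩
        apply hex'
        refine ⟨j, ?_, h3⟩
        rcases Nat.lt_or_ge (i + 1) j with h | h
        · exact h
        · have : j = i + 1 := by omega
          subst this; omega
      have hex'' : ¬ ∃ j, i + 1 < j ∧ 3 ≤ d j := by
        rintro ⟨j, hij, h3⟩; exact hex ⟨j, by omega, h3⟩
      simp only [hBor]
      rw [dif_neg hex, dif_neg hex'']
      rw [show Finset.range (i + 1 + 1) = insert (i + 1) (Finset.range (i + 1)) from
        Finset.range_add_one, Finset.filter_insert]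
      by_cases h1 : d (i + 1) = 1
      · rw [if_pos h1, Finset.card_insert_of_notMem (by simp)]
        rw [Nat.odd_add_one]
        simp only [h1, Xor', xor_def]
        tauto
      · rw [if_neg h1]
        simp only [Xor', xor_def, h1]
        tauto
  -- the corrected digits
  set bt : ℕ → ℕ := fun i => if Bor i then 1 else 0 with hbt
  set c : ℕ → ℕ := fun i =>
    if i = 0 then (if Bor 0 then 2 else 3)
    else if d i = 0 then (if Bor i then 2 * k + 1 else 0)
    else if d i = 1 then (if Bor i then 0 else 2 * k + 3)
    else if d i = 2 then (if Bor i then 2 * k + 3 else 2)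
    else d i - bt i
    with hc
  have hbt1 : ∀ i, bt i ≤ 1 := by intro i; simp only [hbt]; split_ifs <;> omega
  have hcid : ∀ i, (c (i + 1) : ℝ)
      = (d (i + 1) : ℝ) - (bt (i + 1) : ℝ) + (2 * (k : ℝ) + 2) * (bt i : ℝ) := by
    intro i
    have hd := hdle (i + 1) (by omega)
    by_cases h0 : d (i + 1) = 0
    · have hiff := hpar i (by omega)
      simp only [h0, Xor', xor_def] at hiff
      by_cases hB : Bor (i + 1)
      · have hBi : Bor i := by tauto
        simp only [hc, hbt, h0, hB, hBi]
        norm_num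
        push_cast
        ring
      · have hBi : ¬ Bor i := by tauto
        simp only [hc, hbt, h0, hB, hBi]
        norm_num
    · by_cases h1 : d (i + 1) = 1
      · have hiff := hpar i (by omega)
        simp only [h1, Xor', xor_def] at hiff
        by_cases hB : Bor (i + 1)
        · have hBi : ¬ Bor i := by tauto
          simp only [hc, hbt, h1, hB, hBi]
          norm_num
        · have hBi : Bor i := by tauto
          simp only [hc, hbt, h1, hB, hBi]
          norm_num
          push_cast
          ring
      · by_cases h2 : d (i + 1) = 2
        · have hiff := hpar i (by omega)
          simp only [h2, Xor', xor_def] at hiff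
          by_cases hB : Bor (i + 1)
          · have hBi : Bor i := by tauto
            simp only [hc, hbt, h2, hB, hBi]
            norm_num
            push_cast
            ring
          · have hBi : ¬ Bor i := by tauto
            simp only [hc, hbt, h2, hB, hBi]
            norm_num
        · have h3 : 3 ≤ d (i + 1) := by omega
          have hBi : ¬ Bor i := hrec3 i h3
          have hbtle : bt (i + 1) ≤ d (i + 1) := le_trans (hbt1 _) (by omega)
          simp only [hc, hbt, hBi]
          rw [if_neg (Nat.succ_ne_zero i), if_neg h0, if_neg h1, if_neg h2]
          push_cast [Nat.cast_sub hbtle]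
          by_cases hB : Bor (i + 1) <;> simp [hB, Nat.cast_sub (show 1 ≤ d (i + 1) by omega)]
  have hc0 : (c 0 : ℝ) = 3 - (bt 0 : ℝ) := by
    by_cases hB : Bor 0 <;> simp [hc, hbt, hB] <;> norm_num
  -- partial sums
  have hps : ∀ n, ∑ i ∈ Finset.range (n + 1), (c i : ℝ) * q ^ i
      = ∑ i ∈ Finset.range (n + 1), (d i : ℝ) * q ^ i - (bt n : ℝ) * q ^ n := by
    intro n
    induction n with
    | zero =>
      rw [Finset.sum_range_one, Finset.sum_range_one, pow_zero, mul_one, hc0, hd0]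
      norm_num
    | succ n ih =>
      rw [Finset.sum_range_succ, Finset.sum_range_succ
        (f := fun i => (d i : ℝ) * q ^ i), ih, hcid n]
      have hbqn : (2 * (k : ℝ) + 2) * q ^ (n + 1) = q ^ n := by
        rw [pow_succ, ← mul_assoc, mul_comm (2 * (k : ℝ) + 2) (q ^ n), mul_assoc, hbq, mul_one]
      linear_combination (bt n : ℝ) * hbqn
  -- convergence
  have hcnn : ∀ i, (0 : ℝ) ≤ (c i : ℝ) * q ^ i := by
    intro i
    have := pow_nonneg hq0.le i
    positivity
  have htends : Tendsto (fun n => ∑ i ∈ Finset.range n, (c i : ℝ) * q ^ i) atTop (𝓝 y) := by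
    rw [← tendsto_add_atTop_iff_nat 1]
    have h1 : Tendsto (fun n => ∑ i ∈ Finset.range (n + 1), (d i : ℝ) * q ^ i) atTop (𝓝 y) :=
      hsum.tendsto_sum_nat.comp (tendsto_add_atTop_nat 1)
    have h2 : Tendsto (fun n => (bt n : ℝ) * q ^ n) atTop (𝓝 0) := by
      apply tendsto_of_tendsto_of_tendsto_of_le_of_le
        (g := fun _ : ℕ => (0 : ℝ)) (h := fun n : ℕ => q ^ n)
      · exact tendsto_const_nhds
      · exact tendsto_pow_atTop_nhds_zero_of_lt_one hq0.le hq1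
      · intro n
        show (0 : ℝ) ≤ (bt n : ℝ) * q ^ n
        have := pow_nonneg hq0.le n
        positivity
      · intro n
        have hb := hbt1 n
        have hqn := pow_nonneg hq0.le n
        have h1' : (bt n : ℝ) ≤ 1 := by exact_mod_cast hb
        show (bt n : ℝ) * q ^ n ≤ q ^ n
        nlinarith
    have h3 := h1.sub h2
    rw [sub_zero] at h3
    exact Tendsto.congr (fun n => (hps n).symm) h3
  have hcsum : HasSum (fun i => (c i : ℝ) * q ^ i) y :=
    (hasSum_iff_tendsto_nat_of_nonneg hcnn y).mpr htends
  -- decompose each c i as 3δ + 2a with a ≤ k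
  have hgood : ∀ i, ∃ p : Bool, ∃ m, m ≤ k ∧ c i = (if p then 3 else 0) + 2 * m := by
    intro i
    match i with
    | 0 =>
      by_cases hB : Bor 0
      · exact ⟨false, 1, hk, by simp [hc, hB]⟩
      · exact ⟨true, 0, by omega, by simp [hc, hB]⟩
    | (j + 1) =>
      have hd := hdle (j + 1) (by omega)
      by_cases h0 : d (j + 1) = 0
      · by_cases hB : Bor (j + 1)
        · refine ⟨true, k - 1, by omega, ?_⟩
          simp only [hc, h0, hB]
          norm_num
          omega
        · exact ⟨false, 0, by omega, by simp [hc, h0, hB]⟩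
      · by_cases h1 : d (j + 1) = 1
        · by_cases hB : Bor (j + 1)
          · exact ⟨false, 0, by omega, by simp [hc, h0, h1, hB]⟩
          · refine ⟨true, k, le_refl k, ?_⟩
            simp only [hc, h0, h1, hB]
            norm_num
            omega
        · by_cases h2 : d (j + 1) = 2
          · by_cases hB : Bor (j + 1)
            · refine ⟨true, k, le_refl k, ?_⟩
              simp only [hc, h0, h2, hB]
              norm_num
              omega
            · exact ⟨false, 1, hk, by simp [hc, h0, h1, h2, hB]⟩
          · have h3 : 3 ≤ d (j + 1) := by omega
            have hv : c (j + 1) = d (j + 1) - bt (j + 1) := by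
              simp only [hc]
              rw [if_neg (Nat.succ_ne_zero j), if_neg h0, if_neg h1, if_neg h2]
            have hb1 := hbt1 (j + 1)
            by_cases hpar2 : (d (j + 1) - bt (j + 1)) % 2 = 0
            · exact ⟨false, (d (j + 1) - bt (j + 1)) / 2, by omega, by rw [hv]; simp; omega⟩
            · exact ⟨true, (d (j + 1) - bt (j + 1) - 3) / 2, by omega, by rw [hv]; simp; omega⟩
  choose p m hm hcm using hgood
  refine ⟨p, m, hm, ?_⟩
  have heq : (fun i => ((if p i then (3 : ℝ) else 0) + 2 * (m i : ℝ)) * q ^ i)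
      = fun i => (c i : ℝ) * q ^ i := by
    funext i
    have := hcm i
    cases hpi : p i
    · rw [hpi] at this
      simp only [hpi, if_false, Bool.false_eq_true] at this ⊢
      rw [this]
      push_cast
      ring
    · rw [hpi] at this
      simp only [hpi, if_true] at this ⊢
      rw [this]
      push_cast
      ring
  rw [heq]
  exact hcsum

theorem stmt17 (k : ℕ) (hk : 1 ≤ k) :
    Set.Icc (3 : ℝ) 4 ⊆
      achievementSet (mgSeq k (fun i => if i.val = 0 then (3 : ℝ) else 2)
        (1 / (2 * k + 2 : ℝ))) := by
  intro y hy
  obtain ⟨hy3, hy4⟩ := hy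
  obtain ⟨ε, hεle, hεsum⟩ := stmt17_digits (2 * k + 2) (by omega) (y - 3)
    (by linarith) (by linarith)
  have hcast : ((2 * k + 2 : ℕ) : ℝ) = 2 * (k : ℝ) + 2 := by push_cast; ring
  rw [hcast] at hεsum
  set d : ℕ → ℕ := fun i => Nat.casesOn i 3 (fun j => ε j) with hd
  have hd0 : d 0 = 3 := rfl
  have hdle : ∀ i, 1 ≤ i → d i ≤ 2 * k + 1 := by
    intro i hi
    match i with
    | (j + 1) =>
      have := hεle j
      simp only [hd]
      omega
  have hdsum : HasSum (fun i => (d i : ℝ) * (1 / (2 * (k : ℝ) + 2)) ^ i) y := by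
    have h1 : HasSum (fun n => (d (n + 1) : ℝ) * (1 / (2 * (k : ℝ) + 2)) ^ (n + 1)) (y - 3) :=
      hεsum
    have h2 := (hasSum_nat_add_iff (f := fun i => (d i : ℝ) * (1 / (2 * (k : ℝ) + 2)) ^ i) 1).mp h1
    have h3 : y - 3 + ∑ i ∈ Finset.range 1, (d i : ℝ) * (1 / (2 * (k : ℝ) + 2)) ^ i = y := by
      rw [Finset.sum_range_one, hd0, pow_zero, mul_one]
      push_cast
      ring
    rwa [h3] at h2
  obtain ⟨δ, a, ha, hs⟩ := stmt17_carry k hk d hd0 hdle y hdsum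
  exact stmt17_aux_mem k hk δ a ha y hs
end

section
/- For every integer k ≥ 1, the achievement set of the multigeometric sequence (3, 2, …, 2; 1/(2k+2)) with k twos is not a finite union of closed intervals. -/
open Set

/- Auxiliary definitions -/

noncomputable def qq (k : ℕ) : ℝ := 1 / (2 * k + 2 : ℝ)

noncomputable def ff (k : ℕ) : ℕ → ℝ :=
  mgSeq k (fun i => if i.val = 0 then (3 : ℝ) else 2) (qq k)

lemma qq_pos (k : ℕ) : 0 < qq k := by
  unfold qq; positivity

lemma qq_lt_one (k : ℕ) : qq k < 1 := by
  unfold qq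
  rw [div_lt_one (by positivity)]
  have : (0 : ℝ) ≤ k := Nat.cast_nonneg k
  linarith

lemma ff_apply (k n : ℕ) :
    ff k n = (if n % (k + 1) = 0 then (3 : ℝ) else 2) * qq k ^ (n / (k + 1)) := rfl

lemma ff_nonneg (k n : ℕ) : 0 ≤ ff k n := by
  rw [ff_apply]
  have h := (qq_pos k).le
  have : (0 : ℝ) ≤ qq k ^ (n / (k + 1)) := pow_nonneg h _
  split_ifs <;> nlinarith

lemma ff_ge (k n : ℕ) : 2 * qq k ^ (n / (k + 1)) ≤ ff k n := by
  rw [ff_apply]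
  have : (0 : ℝ) ≤ qq k ^ (n / (k + 1)) := pow_nonneg (qq_pos k).le _
  split_ifs <;> nlinarith

lemma ff_eq_comp (k : ℕ) (n : ℕ) :
    ff k n = (fun p : ℕ × Fin (k + 1) =>
      qq k ^ p.1 * (if (p.2 : ℕ) = 0 then (3 : ℝ) else 2)) (Nat.divModEquiv (k + 1) n) := by
  simp only [Nat.divModEquiv_apply, ff_apply, Fin.val_natCast, Fin.val_ofNat]
  ring

set_option maxHeartbeats 1000000 in
lemma summable_aux_s18 (k : ℕ) :
    Summable (fun p : ℕ × Fin (k + 1) =>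
      qq k ^ p.1 * (if (p.2 : ℕ) = 0 then (3 : ℝ) else 2)) := by
  have h1 : Summable (fun j : ℕ => qq k ^ j) :=
    summable_geometric_of_lt_one (qq_pos k).le (qq_lt_one k)
  have h2 : Summable (fun r : Fin (k + 1) => if (r : ℕ) = 0 then (3 : ℝ) else 2) :=
    Summable.of_finite
  have h := Summable.mul_of_nonneg h1 h2 (fun j => pow_nonneg (qq_pos k).le j)
    (fun r => by split_ifs <;> norm_num)
  exact h

lemma summable_ff (k : ℕ) : Summable (ff k) := by
  have : ff k = (fun p : ℕ × Fin (k + 1) =>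
      qq k ^ p.1 * (if (p.2 : ℕ) = 0 then (3 : ℝ) else 2)) ∘ (Nat.divModEquiv (k + 1)) :=
    funext (ff_eq_comp k)
  rw [this]
  exact ((Nat.divModEquiv (k + 1)).summable_iff).mpr (summable_aux_s18 k)

lemma tsum_ff (k : ℕ) : ∑' n, ff k n = (2 * k + 3) * (1 - qq k)⁻¹ := by
  have h1 : ∑' n, ff k n = ∑' p : ℕ × Fin (k + 1),
      qq k ^ p.1 * (if (p.2 : ℕ) = 0 then (3 : ℝ) else 2) := by
    exact Eq.trans (tsum_congr (ff_eq_comp k)) ((Nat.divModEquiv (k + 1)).tsum_eq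
      (fun p : ℕ × Fin (k + 1) => qq k ^ p.1 * if (p.2 : ℕ) = 0 then (3 : ℝ) else 2))
  have h3 := Summable.tsum_prod (summable_aux_s18 k)
  rw [h1, h3]
  have h2 : ∀ j : ℕ, ∑' r : Fin (k + 1),
      qq k ^ j * (if (r : ℕ) = 0 then (3 : ℝ) else 2) = qq k ^ j * (2 * k + 3) := by
    intro j
    rw [tsum_fintype, ← Finset.mul_sum]
    congr 1
    rw [Fin.sum_univ_succ]
    have h0 : ((0 : Fin (k + 1)) : ℕ) = 0 := rfl
    have hs : ∀ i : Fin k, ((Fin.succ i : Fin (k + 1)) : ℕ) ≠ 0 := fun i => by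
      simp [Fin.val_succ]
    simp only [h0, if_pos rfl]
    rw [Finset.sum_congr rfl (fun i _ => if_neg (hs i)), Finset.sum_const]
    simp [Finset.card_univ]
    ring
  rw [tsum_congr h2]
  rw [tsum_mul_right, tsum_geometric_of_lt_one (qq_pos k).le (qq_lt_one k)]
  ring

lemma ff_shift (k j n : ℕ) :
    ff k (n + (j + 1) * (k + 1)) = qq k ^ (j + 1) * ff k n := by
  rw [ff_apply, ff_apply]
  rw [Nat.add_mul_mod_self_right]
  rw [Nat.add_mul_div_right _ _ (Nat.succ_pos k)]
  rw [pow_add]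
  ring

/-- Dichotomy: every achievable sum is either at most the tail total, or at least 2 q^j. -/
lemma gap_lemma (k j : ℕ) (y : ℝ) (hy : y ∈ achievementSet (ff k)) :
    y ≤ qq k ^ (j + 1) * (∑' n, ff k n) ∨ 2 * qq k ^ j ≤ y := by
  obtain ⟨S, rfl⟩ := hy
  by_cases h : ∀ n ∈ S, (j + 1) * (k + 1) ≤ n
  · left
    set N := (j + 1) * (k + 1) with hN
    have hsub : ∀ m, S.indicator (ff k) m ≤ (Ici N).indicator (ff k) m := by
      intro m
      exact Set.indicator_le_indicator_of_subset (fun x hx => h x hx)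
        (fun a => ff_nonneg k a) m
    have h1 : ∑' n, S.indicator (ff k) n ≤ ∑' n, (Ici N).indicator (ff k) n :=
      Summable.tsum_le_tsum hsub ((summable_ff k).indicator S) ((summable_ff k).indicator (Ici N))
    have hsum : Summable ((Ici N).indicator (ff k)) := (summable_ff k).indicator _
    have hzero : ∑ i ∈ Finset.range N, (Ici N).indicator (ff k) i = 0 := by
      apply Finset.sum_eq_zero
      intro i hi
      exact Set.indicator_of_notMem (by simpa using (Finset.mem_range.mp hi)) _
    have hshift : ∀ n : ℕ, (Ici N).indicator (ff k) (n + N) = qq k ^ (j + 1) * ff k n := by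
      intro n
      rw [Set.indicator_of_mem (by simp : n + N ∈ Ici N), hN, ff_shift]
    have h2 : ∑' n, (Ici N).indicator (ff k) n = qq k ^ (j + 1) * ∑' n, ff k n := by
      rw [← Summable.sum_add_tsum_nat_add N hsum, hzero, zero_add, tsum_congr hshift, tsum_mul_left]
    linarith
  · right
    push_neg at h
    obtain ⟨n₀, hn₀S, hn₀⟩ := h
    have h1 : ff k n₀ ≤ ∑' n, S.indicator (ff k) n := by
      have := Summable.le_tsum ((summable_ff k).indicator S) n₀
        (fun m _ => Set.indicator_apply_nonneg (fun _ => ff_nonneg k m))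
      rwa [Set.indicator_of_mem hn₀S] at this
    have hd : n₀ / (k + 1) ≤ j := by
      have := Nat.div_lt_of_lt_mul (by rw [Nat.mul_comm]; exact hn₀ : n₀ < (k + 1) * (j + 1))
      omega
    have h2 : 2 * qq k ^ j ≤ ff k n₀ := by
      calc 2 * qq k ^ j ≤ 2 * qq k ^ (n₀ / (k + 1)) := by
            have := pow_le_pow_of_le_one (qq_pos k).le (qq_lt_one k).le hd
            linarith
        _ ≤ ff k n₀ := ff_ge k n₀
    linarith

lemma mem_A (k j : ℕ) (hk : 1 ≤ k) : 2 * qq k ^ j ∈ achievementSet (ff k) := by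
  refine ⟨{j * (k + 1) + 1}, ?_⟩
  have hind : ({j * (k + 1) + 1} : Set ℕ).indicator (ff k)
      = fun n => if n = j * (k + 1) + 1 then ff k (j * (k + 1) + 1) else 0 := by
    funext n
    rw [Set.indicator_apply]
    simp only [mem_singleton_iff]
    split_ifs with h
    · rw [h]
    · rfl
  rw [hind, tsum_ite_eq]
  rw [ff_apply]
  have h1 : (j * (k + 1) + 1) % (k + 1) = 1 := by
    rw [Nat.mul_add_mod']
    exact Nat.mod_eq_of_lt (by omega)
  have h2 : (j * (k + 1) + 1) / (k + 1) = j := by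
    rw [mul_comm, Nat.mul_add_div (Nat.succ_pos k), Nat.div_eq_of_lt (by omega)]
    rfl
  rw [h1, h2]
  norm_num

lemma key_ineq (k : ℕ) (hk : 1 ≤ k) :
    qq k * ((2 * k + 3) * (1 - qq k)⁻¹) < 2 := by
  have hkr : (1 : ℝ) ≤ k := by exact_mod_cast hk
  have h1 : (0 : ℝ) < 2 * k + 2 := by linarith
  have h2 : (0 : ℝ) < 2 * k + 1 := by linarith
  have hq : (1 : ℝ) - qq k = (2 * k + 1) / (2 * k + 2) := by
    unfold qq; field_simp; ring
  have heq : qq k * ((2 * k + 3) * (1 - qq k)⁻¹) = (2 * k + 3) / (2 * k + 1) := by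
    rw [hq]; unfold qq; field_simp
  rw [heq, div_lt_iff₀ h2]
  linarith

theorem stmt18 (k : ℕ) (hk : 1 ≤ k) :
    ¬ IsFinUnionClosedIntervals
      (achievementSet (mgSeq k (fun i => if i.val = 0 then (3 : ℝ) else 2)
        (1 / (2 * k + 2 : ℝ)))) := by
  rintro ⟨n, a, b, hS⟩
  have hff : mgSeq k (fun i => if i.val = 0 then (3 : ℝ) else 2) (1 / (2 * k + 2 : ℝ))
      = ff k := rfl
  rw [hff] at hS
  set q := qq k with hqdef
  set Tot := ∑' n, ff k n with hTotdef
  have hq0 := qq_pos k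
  have hq1 := qq_lt_one k
  have hTot : Tot = (2 * k + 3) * (1 - q)⁻¹ := tsum_ff k
  have hTot2 : (2 : ℝ) ≤ Tot := by
    rw [hTot]
    have hkr : (0 : ℝ) ≤ k := Nat.cast_nonneg k
    have h1q : (0 : ℝ) < 1 - q := by linarith
    rw [← div_eq_mul_inv, le_div_iff₀ h1q]
    nlinarith
  have hgap : ∀ j : ℕ, q ^ (j + 1) * Tot < 2 * q ^ j := by
    intro j
    have hq2 : q * Tot < 2 := by rw [hTot]; exact key_ineq k hk
    have hp : (0 : ℝ) < q ^ j := pow_pos hq0 j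
    calc q ^ (j + 1) * Tot = q ^ j * (q * Tot) := by ring
      _ < q ^ j * 2 := by exact mul_lt_mul_of_pos_left hq2 hp
      _ = 2 * q ^ j := by ring
  set t : ℕ → ℝ := fun j => (q ^ (j + 1) * Tot + 2 * q ^ j) / 2 with htdef
  have htlow : ∀ j, q ^ (j + 1) * Tot < t j := by
    intro j; have := hgap j; simp only [htdef]; linarith
  have hthigh : ∀ j, t j < 2 * q ^ j := by
    intro j; have := hgap j; simp only [htdef]; linarith
  have htnot : ∀ j, t j ∉ achievementSet (ff k) := by
    intro j hmem
    rcases gap_lemma k j _ hmem with h | h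
    · rw [← hqdef, ← hTotdef] at h; linarith [htlow j]
    · linarith [hthigh j]
  have hmemA : ∀ j : ℕ, 2 * q ^ j ∈ ⋃ i, Icc (a i) (b i) := by
    intro j
    rw [← hS]
    exact mem_A k j hk
  choose g hg using fun j => mem_iUnion.mp (hmemA j)
  have main : ∀ j j' : ℕ, j < j' → g j ≠ g j' := by
    intro j j' hlt heq
    apply htnot j
    rw [hS]
    refine mem_iUnion.mpr ⟨g j, ?_⟩
    have h1 := hg j
    have h2 := hg j'
    rw [← heq] at h2
    constructor
    · refine le_trans h2.1 ?_
      have hpow : q ^ j' ≤ q ^ (j + 1) :=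
        pow_le_pow_of_le_one hq0.le hq1.le (by omega)
      have hle1 : 2 * q ^ j' ≤ 2 * q ^ (j + 1) := by linarith
      have hle2 : 2 * q ^ (j + 1) ≤ q ^ (j + 1) * Tot := by
        have hp : (0 : ℝ) ≤ q ^ (j + 1) := (pow_pos hq0 _).le
        nlinarith
      linarith [htlow j]
    · exact le_trans (hthigh j).le h1.2
  obtain ⟨j, j', hne, hgeq⟩ := Finite.exists_ne_map_eq_of_infinite g
  rcases hne.lt_or_gt with h | h
  · exact main j j' h hgeq
  · exact main j' j h hgeq.symm
end

section
/- Let k₁,…,k_m be positive integers, 0 < q < 1, and n₁,…,n_m nonnegative integers. Then the achievement set of the multigeometric sequence (q^{n₁}k₁, …, q^{n_m}k_m; q) is a finite union of translates of scaled copies of the achievement set of (k₁,…,k_m; q); in particular, E(6,1; 1/4) = (1/2)·E(3,2; 1/4) ∪ (1/2)·(E(3,2; 1/4) + 12). -/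
open Set

lemma mg_summable (m : ℕ) (k : Fin (m+1) → ℝ) (hk : ∀ i, 0 ≤ k i) (q : ℝ)
    (hq0 : 0 ≤ q) (hq1 : q < 1) : Summable (mgSeq m k q) := by
  have hf : Summable (fun p : ℕ × Fin (m+1) => k p.2 * q ^ p.1) := by
    rw [summable_prod_of_nonneg (fun p => mul_nonneg (hk _) (pow_nonneg hq0 _))]
    refine ⟨fun j => Summable.of_finite, ?_⟩
    have heq : (fun j : ℕ => ∑' r : Fin (m+1), k r * q ^ j)
        = fun j : ℕ => (∑ r, k r) * q ^ j := by
      funext j; rw [tsum_fintype, ← Finset.sum_mul]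
    rw [heq]
    exact (summable_geometric_of_lt_one hq0 hq1).mul_left _
  have h2 := (Nat.divModEquiv (m+1)).summable_iff.2 hf
  refine h2.congr fun n => ?_
  show k ((Nat.divModEquiv (m+1)) n).2 * q ^ ((Nat.divModEquiv (m+1)) n).1 = mgSeq m k q n
  have h3 : ((Nat.divModEquiv (m+1)) n).2
      = (⟨n % (m + 1), Nat.mod_lt _ (Nat.succ_pos m)⟩ : Fin (m+1)) := by
    apply Fin.ext
    simp [Nat.divModEquiv]
  rw [h3]
  rfl

lemma core (x x' : ℕ → ℝ) (hx : Summable x) (hx' : Summable x')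
    (ψ : ℕ → ℕ) (hinj : Function.Injective ψ) (c : ℝ)
    (hrel : ∀ n, x' (ψ n) = c * x n)
    (L : Finset ℕ) (hL : (L : Set ℕ) = (Set.range ψ)ᶜ)
    (A : Set ℕ) [DecidablePred (· ∈ A)] :
    ∑' n, A.indicator x' n
      = ∑ n ∈ L.filter (· ∈ A), x' n + c * ∑' n, (ψ ⁻¹' A).indicator x n := by
  classical
  have hmemL : ∀ n : ℕ, n ∈ L ↔ n ∉ Set.range ψ := by
    intro n
    rw [← Finset.mem_coe, hL, Set.mem_compl_iff]
  have hsplit : ∀ n, A.indicator x' n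
      = (A ∩ ↑L).indicator x' n + (A ∩ Set.range ψ).indicator x' n := by
    intro n
    simp only [Set.indicator_apply, Set.mem_inter_iff, Finset.mem_coe]
    by_cases hA : n ∈ A
    · by_cases hr : n ∈ Set.range ψ
      · simp [hA, hr, hmemL]
      · simp [hA, hr, hmemL]
    · simp [hA]
  have hlow : ∑' n, (A ∩ ↑L).indicator x' n = ∑ n ∈ L.filter (· ∈ A), x' n := by
    have h0 : ∀ b ∉ L.filter (· ∈ A), (A ∩ ↑L).indicator x' b = 0 := by
      intro b hb
      apply Set.indicator_of_notMem
      rintro ⟨hbA, hbL⟩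
      exact hb (Finset.mem_filter.2 ⟨Finset.mem_coe.1 hbL, hbA⟩)
    rw [tsum_eq_sum h0]
    refine Finset.sum_congr rfl fun n hn => ?_
    rw [Finset.mem_filter] at hn
    exact Set.indicator_of_mem (Set.mem_inter hn.2 (Finset.mem_coe.2 hn.1)) _
  have hsupp : Function.support ((A ∩ Set.range ψ).indicator x') ⊆ Set.range ψ := by
    intro n hn
    by_contra hrn
    rw [Function.mem_support] at hn
    exact hn (Set.indicator_of_notMem (fun hm => hrn hm.2) _)
  have hhigh : ∑' n, (A ∩ Set.range ψ).indicator x' n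
      = c * ∑' n, (ψ ⁻¹' A).indicator x n := by
    rw [← hinj.tsum_eq hsupp, ← tsum_mul_left]
    refine tsum_congr fun n => ?_
    by_cases hA : ψ n ∈ A
    · have h1 : (A ∩ Set.range ψ).indicator x' (ψ n) = x' (ψ n) :=
        Set.indicator_of_mem (Set.mem_inter hA (Set.mem_range_self n)) _
      have h2 : (ψ ⁻¹' A).indicator x n = x n :=
        Set.indicator_of_mem (Set.mem_preimage.2 hA) _
      rw [h1, h2, hrel]
    · have h1 : (A ∩ Set.range ψ).indicator x' (ψ n) = 0 :=
        Set.indicator_of_notMem (fun hm => hA hm.1) _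
      have h2 : (ψ ⁻¹' A).indicator x n = 0 :=
        Set.indicator_of_notMem (fun hm => hA (Set.mem_preimage.1 hm)) _
      rw [h1, h2, mul_zero]
  rw [tsum_congr hsplit, Summable.tsum_add (hx'.indicator _) (hx'.indicator _), hlow, hhigh]

lemma master (x x' : ℕ → ℝ) (hx : Summable x) (hx' : Summable x')
    (ψ : ℕ → ℕ) (hinj : Function.Injective ψ) (c : ℝ)
    (hrel : ∀ n, x' (ψ n) = c * x n)
    (L : Finset ℕ) (hL : (L : Set ℕ) = (Set.range ψ)ᶜ) :
    achievementSet x' = ⋃ S : {S : Finset ℕ // S ∈ L.powerset},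
      (fun t => (∑ n ∈ S.1, x' n) + c * t) '' achievementSet x := by
  classical
  have hnotrange : ∀ n ∈ L, n ∉ Set.range ψ := by
    intro n hn
    rw [← Finset.mem_coe, hL, Set.mem_compl_iff] at hn
    exact hn
  ext y
  simp only [Set.mem_iUnion, Set.mem_image]
  constructor
  · rintro ⟨A, rfl⟩
    exact ⟨⟨L.filter (· ∈ A), Finset.mem_powerset.2 (Finset.filter_subset _ _)⟩,
      ∑' n, (ψ ⁻¹' A).indicator x n, ⟨_, rfl⟩,
      (core x x' hx hx' ψ hinj c hrel L hL A).symm⟩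
  · rintro ⟨⟨S, hS⟩, t, ⟨B, rfl⟩, rfl⟩
    rw [Finset.mem_powerset] at hS
    refine ⟨↑S ∪ ψ '' B, ?_⟩
    rw [core x x' hx hx' ψ hinj c hrel L hL]
    have h1 : L.filter (· ∈ (↑S ∪ ψ '' B : Set ℕ)) = S := by
      ext n
      simp only [Finset.mem_filter, Set.mem_union, Finset.mem_coe, Set.mem_image]
      constructor
      · rintro ⟨hnL, hS' | ⟨b, _, rfl⟩⟩
        · exact hS'
        · exact absurd ⟨b, rfl⟩ (hnotrange _ hnL)
      · intro hnS
        exact ⟨hS hnS, Or.inl hnS⟩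
    have h2 : ψ ⁻¹' (↑S ∪ ψ '' B) = B := by
      ext n
      simp only [Set.mem_preimage, Set.mem_union, Finset.mem_coe, Set.mem_image]
      constructor
      · rintro (h | ⟨b, hb, he⟩)
        · exact absurd ⟨n, rfl⟩ (hnotrange _ (hS h))
        · rwa [← hinj he]
      · exact fun h => Or.inr ⟨n, h, rfl⟩
    rw [h1, h2]

lemma mgSeq_even (k : Fin 2 → ℝ) (q : ℝ) (n : ℕ) : mgSeq 1 k q (2*n) = k 0 * q ^ n := by
  unfold mgSeq
  congr 1
  · congr 1
    apply Fin.ext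
    show (2*n) % 2 = 0
    omega
  · congr 1
    omega

lemma mgSeq_odd (k : Fin 2 → ℝ) (q : ℝ) (n : ℕ) : mgSeq 1 k q (2*n+1) = k 1 * q ^ n := by
  unfold mgSeq
  congr 1
  · congr 1
    apply Fin.ext
    show (2*n+1) % 2 = 1
    omega
  · congr 1
    omega

theorem stmt19 :
    (∀ (m : ℕ) (k : Fin (m + 1) → ℕ) (_ : ∀ i, 0 < k i) (q : ℝ) (_ : 0 < q) (_ : q < 1)
      (nn : Fin (m + 1) → ℕ),
      ∃ (N : ℕ) (a c : Fin N → ℝ),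
        achievementSet (mgSeq m (fun i => q ^ (nn i) * (k i : ℝ)) q) =
          ⋃ i, (fun t => a i + c i * t) '' achievementSet (mgSeq m (fun i => (k i : ℝ)) q)) ∧
    achievementSet (mgSeq 1 ![6, 1] (1 / 4)) =
      (fun t => (1 / 2 : ℝ) * t) '' achievementSet (mgSeq 1 ![3, 2] (1 / 4)) ∪
      (fun t => (1 / 2 : ℝ) * (t + 12)) '' achievementSet (mgSeq 1 ![3, 2] (1 / 4)) := by
  constructor
  · intro m k hk q hq0 hq1 nn
    classical
    set x : ℕ → ℝ := mgSeq m (fun i => (k i : ℝ)) q with hxdef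
    set x' : ℕ → ℝ := mgSeq m (fun i => q ^ (nn i) * (k i : ℝ)) q with hx'def
    have hx : Summable x := mg_summable m _ (fun i => Nat.cast_nonneg _) q hq0.le hq1
    have hx' : Summable x' := mg_summable m _
      (fun i => mul_nonneg (pow_nonneg hq0.le _) (Nat.cast_nonneg _)) q hq0.le hq1
    set M := Finset.univ.sup nn with hMdef
    have hM : ∀ i, nn i ≤ M := fun i => Finset.le_sup (Finset.mem_univ i)
    set rf : ℕ → Fin (m+1) := fun n => ⟨n % (m+1), Nat.mod_lt _ (Nat.succ_pos m)⟩ with hrf_def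
    set ψ : ℕ → ℕ := fun n => (m+1) * (M - nn (rf n) + n / (m+1)) + n % (m+1) with hψdef
    have hmod : ∀ n, ψ n % (m+1) = n % (m+1) := by
      intro n
      rw [hψdef]
      simp only
      rw [Nat.mul_add_mod, Nat.mod_mod_of_dvd _ dvd_rfl]
    have hdiv : ∀ n, ψ n / (m+1) = M - nn (rf n) + n / (m+1) := by
      intro n
      rw [hψdef]
      simp only
      rw [Nat.mul_add_div (Nat.succ_pos m), Nat.div_eq_of_lt (Nat.mod_lt _ (Nat.succ_pos m)),
        add_zero]
    have hrf : ∀ n, rf (ψ n) = rf n := fun n => Fin.ext (hmod n)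
    have hinj : Function.Injective ψ := by
      intro a b h
      have h1 : a % (m+1) = b % (m+1) := by
        have := congrArg (· % (m+1)) h
        simpa only [hmod] using this
      have hra : rf a = rf b := Fin.ext h1
      have h2 : M - nn (rf a) + a / (m+1) = M - nn (rf b) + b / (m+1) := by
        have := congrArg (· / (m+1)) h
        simpa only [hdiv] using this
      have h3 : a / (m+1) = b / (m+1) := by
        rw [hra] at h2
        exact Nat.add_left_cancel h2
      calc a = (m+1) * (a / (m+1)) + a % (m+1) := (Nat.div_add_mod a (m+1)).symm
        _ = (m+1) * (b / (m+1)) + b % (m+1) := by rw [h1, h3]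
        _ = b := Nat.div_add_mod b (m+1)
    have hrange : ∀ n, n ∈ Set.range ψ ↔ M ≤ nn (rf n) + n / (m+1) := by
      intro n
      constructor
      · rintro ⟨a, rfl⟩
        rw [hrf a, hdiv a]
        have := hM (rf a)
        generalize a / (m+1) = d
        omega
      · intro h
        refine ⟨(m+1) * (nn (rf n) + n/(m+1) - M) + n % (m+1), ?_⟩
        set a := (m+1) * (nn (rf n) + n/(m+1) - M) + n % (m+1) with hadef
        have ha_mod : a % (m+1) = n % (m+1) := by
          rw [hadef, Nat.mul_add_mod, Nat.mod_mod_of_dvd _ dvd_rfl]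
        have ha_div : a / (m+1) = nn (rf n) + n/(m+1) - M := by
          rw [hadef, Nat.mul_add_div (Nat.succ_pos m),
            Nat.div_eq_of_lt (Nat.mod_lt _ (Nat.succ_pos m)), add_zero]
        have ha_rf : rf a = rf n := Fin.ext ha_mod
        have hstep : M - nn (rf a) + a/(m+1) = n / (m+1) := by
          rw [ha_rf, ha_div]
          have := hM (rf n)
          generalize n / (m+1) = d at h ⊢
          omega
        calc ψ a = (m+1) * (M - nn (rf a) + a/(m+1)) + a % (m+1) := rfl
          _ = (m+1) * (n / (m+1)) + n % (m+1) := by rw [hstep, ha_mod]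
          _ = n := Nat.div_add_mod n (m+1)
    set L : Finset ℕ :=
      (Finset.range ((M+1)*(m+1))).filter (fun n => nn (rf n) + n/(m+1) < M) with hLdef
    have hL : (L : Set ℕ) = (Set.range ψ)ᶜ := by
      ext n
      simp only [hLdef, Finset.coe_filter, Set.mem_setOf_eq, Finset.mem_range,
        Set.mem_compl_iff, hrange]
      constructor
      · rintro ⟨_, h2⟩
        generalize n / (m+1) = d at h2 ⊢
        omega
      · intro h
        have h1 : nn (rf n) + n/(m+1) < M := Nat.lt_of_not_le h
        have h2 : n / (m+1) < M + 1 := by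
          generalize n / (m+1) = d at h1 ⊢
          omega
        exact ⟨(Nat.div_lt_iff_lt_mul (Nat.succ_pos m)).1 h2, h1⟩
    have hrel : ∀ n, x' (ψ n) = q ^ M * x n := by
      intro n
      show (fun i => q ^ (nn i) * (k i : ℝ)) (rf (ψ n)) * q ^ (ψ n / (m+1))
        = q ^ M * ((k (rf n) : ℝ) * q ^ (n / (m+1)))
      rw [hrf n, hdiv n]
      simp only
      have hexp : nn (rf n) + (M - nn (rf n) + n/(m+1)) = M + n/(m+1) := by
        have := hM (rf n)
        generalize n / (m+1) = d
        omega
      rw [mul_comm (q ^ nn (rf n)) ((k (rf n) : ℝ)), mul_assoc, ← pow_add, hexp, pow_add]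
      ring
    refine ⟨Fintype.card {S : Finset ℕ // S ∈ L.powerset},
      fun i => ∑ n ∈ ((Fintype.equivFin {S : Finset ℕ // S ∈ L.powerset}).symm i).1, x' n,
      fun _ => q ^ M, ?_⟩
    rw [master x x' hx hx' ψ hinj (q ^ M) hrel L hL]
    exact ((Fintype.equivFin {S : Finset ℕ // S ∈ L.powerset}).symm.surjective.iUnion_comp
      (fun S => (fun t => (∑ n ∈ S.1, x' n) + q ^ M * t) '' achievementSet x)).symm
  · classical
    set x : ℕ → ℝ := mgSeq 1 ![3, 2] (1/4) with hxdef
    set x' : ℕ → ℝ := mgSeq 1 ![6, 1] (1/4) with hx'def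
    have hx : Summable x := mg_summable 1 _ (by intro i; fin_cases i <;> norm_num) (1/4)
      (by norm_num) (by norm_num)
    have hx' : Summable x' := mg_summable 1 _ (by intro i; fin_cases i <;> norm_num) (1/4)
      (by norm_num) (by norm_num)
    set ψ : ℕ → ℕ := fun n => if n % 2 = 0 then n + 2 else n with hψdef
    have hinj : Function.Injective ψ := by
      intro a b hab
      simp only [hψdef] at hab
      split_ifs at hab
      all_goals omega
    have hrel : ∀ n, x' (ψ n) = (1/2 : ℝ) * x n := by
      intro n
      by_cases h : n % 2 = 0
      · obtain ⟨t, rfl⟩ : ∃ t, n = 2*t := ⟨n/2, by omega⟩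
        have hψ : ψ (2*t) = 2*(t+1) := by
          simp only [hψdef]
          rw [if_pos (by omega)]
          ring
        rw [hx'def, hxdef, hψ, mgSeq_even, mgSeq_even]
        show (6:ℝ) * (1/4)^(t+1) = 1/2 * ((3:ℝ) * (1/4)^t)
        rw [pow_succ]
        ring
      · obtain ⟨t, rfl⟩ : ∃ t, n = 2*t+1 := ⟨n/2, by omega⟩
        have hψ : ψ (2*t+1) = 2*t+1 := by
          simp only [hψdef]
          rw [if_neg (by omega)]
        rw [hx'def, hxdef, hψ, mgSeq_odd, mgSeq_odd]
        show (1:ℝ) * (1/4)^t = 1/2 * ((2:ℝ) * (1/4)^t)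
        ring
    have hr : ∀ n, n ∈ Set.range ψ ↔ n ≠ 0 := by
      intro n
      constructor
      · rintro ⟨a, rfl⟩
        simp only [hψdef]
        split_ifs <;> omega
      · intro hn
        by_cases h : n % 2 = 0
        · refine ⟨n - 2, ?_⟩
          simp only [hψdef]
          split_ifs with h' <;> omega
        · refine ⟨n, ?_⟩
          simp only [hψdef]
          split_ifs <;> omega
    have hL : (({0} : Finset ℕ) : Set ℕ) = (Set.range ψ)ᶜ := by
      ext n
      rw [Set.mem_compl_iff, hr]
      simp
    have hx'0 : x' 0 = 6 := by
      have := mgSeq_even ![6, 1] (1/4) 0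
      rw [mul_zero] at this
      rw [hx'def, this]
      norm_num
    rw [master x x' hx hx' ψ hinj (1/2) hrel {0} hL]
    apply Set.Subset.antisymm
    · rintro y hy
      simp only [Set.mem_iUnion] at hy
      obtain ⟨⟨S, hS⟩, hy⟩ := hy
      rw [Finset.mem_powerset, Finset.subset_singleton_iff] at hS
      obtain ⟨t, ht, rfl⟩ := hy
      rcases hS with rfl | rfl
      · left
        exact ⟨t, ht, by simp⟩
      · right
        refine ⟨t, ht, ?_⟩
        show (1/2 : ℝ) * (t + 12) = (∑ n ∈ {0}, x' n) + 1/2 * t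
        rw [Finset.sum_singleton, hx'0]
        ring
    · rintro y (⟨t, ht, rfl⟩ | ⟨t, ht, rfl⟩)
      · exact Set.mem_iUnion.2 ⟨⟨∅, by simp⟩, ⟨t, ht, by simp⟩⟩
      · refine Set.mem_iUnion.2 ⟨⟨{0}, by simp⟩, ⟨t, ht, ?_⟩⟩
        show (∑ n ∈ {0}, x' n) + 1/2 * t = (1/2 : ℝ) * (t + 12)
        rw [Finset.sum_singleton, hx'0]
        ring
end
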